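/- arXiv:1403.4696 — 4 statements merged into one kernel-verified Lean document; each statement's English description precedes it below -/
import Mathlib

section
/- Proposition 3 (either X1 or X3 empties in finite time): under Assumption 1 and the γ/α setup, for every initial vector x(0) ∈ ℝ^n there exists a finite time K such that for all k ≥ K, either (a) x_i(k) < m(k) + 1 for every agent i (i.e. X3(k) ∪ X4(k) ∪ X5(k) ∪ X6(k) = ∅, all nodes lie in X1 ∪ X2), or (b) m(k) + 1 − α_i ≤ x_i(k) ≤ m(k) + 1 + α_i for every agent i (i.e. X1(k) ∪ X4(k) ∪ X5(k) ∪ X6(k) = ∅, all nodes lie in X2 ∪ X3). -/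
open Finset Filter

/-- Assumption 1 on the weight matrix `W` relative to the graph `G`:
symmetric, nonnegative, rows sum to 1, diagonally dominant (`w_ii > 1/2`),
respects the communication graph, and rational weights in `(0,1)` on edges. -/
def Assumption1 {n : ℕ} (G : SimpleGraph (Fin n)) (W : Matrix (Fin n) (Fin n) ℝ) : Prop :=
  (∀ i j, W i j = W j i) ∧
  (∀ i j, 0 ≤ W i j) ∧
  (∀ i, ∑ j, W i j = 1) ∧
  (∀ i, 1 / 2 < W i i) ∧
  (∀ i j, i ≠ j → ¬G.Adj i j → W i j = 0) ∧
  (∀ i j, G.Adj i j → (∃ q : ℚ, (q : ℝ) = W i j) ∧ 0 < W i j ∧ W i j < 1)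

/-- The quantized system `x(k+1) = W ⌊x(k)⌋ + x(k) − ⌊x(k)⌋`, componentwise. -/
def Traj {n : ℕ} (W : Matrix (Fin n) (Fin n) ℝ) (x : ℕ → Fin n → ℝ) : Prop :=
  ∀ k i, x (k + 1) i = (∑ j, W i j * (⌊x k j⌋ : ℝ)) + x k i - (⌊x k i⌋ : ℝ)

/-- `m(k) = min_i ⌊x_i(k)⌋`. -/
noncomputable def mfun {n : ℕ} (hn : 0 < n) (x : ℕ → Fin n → ℝ) (k : ℕ) : ℤ :=
  Finset.univ.inf' ⟨⟨0, hn⟩, Finset.mem_univ _⟩ fun i => ⌊x k i⌋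

/-- `M(k) = max_i ⌊x_i(k)⌋`. -/
noncomputable def Mfun {n : ℕ} (hn : 0 < n) (x : ℕ → Fin n → ℝ) (k : ℕ) : ℤ :=
  Finset.univ.sup' ⟨⟨0, hn⟩, Finset.mem_univ _⟩ fun i => ⌊x k i⌋

/-- The γ gap conditions (fractional part `c_i(k) = x_i(k) − ⌊x_i(k)⌋`). -/
def GammaSetup {n : ℕ} (W : Matrix (Fin n) (Fin n) ℝ) (x : ℕ → Fin n → ℝ) (γ : ℝ) : Prop :=
  0 < γ ∧
  ∀ i k,
    (x k i - (⌊x k i⌋ : ℝ) > 1 - W i i → x k i - (⌊x k i⌋ : ℝ) - (1 - W i i) ≥ 2 * γ) ∧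
    (1 - (x k i - (⌊x k i⌋ : ℝ)) > 1 - W i i →
      1 - (x k i - (⌊x k i⌋ : ℝ)) - (1 - W i i) ≥ 2 * γ) ∧
    1 - (x k i - (⌊x k i⌋ : ℝ)) ≥ 2 * γ ∧
    1 / 2 - (1 - W i i) ≥ 2 * γ

/-- `α_i = 1 − w_ii + γ`. -/
noncomputable def alpha {n : ℕ} (W : Matrix (Fin n) (Fin n) ℝ) (γ : ℝ) (i : Fin n) : ℝ :=
  1 - W i i + γ

/-- The Lyapunov function `V(k) = Σ_i max{|x_i(k) − m(k) − 1| − α_i, 0}`. -/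
noncomputable def Vfun {n : ℕ} (hn : 0 < n) (W : Matrix (Fin n) (Fin n) ℝ) (γ : ℝ)
    (x : ℕ → Fin n → ℝ) (k : ℕ) : ℝ :=
  ∑ i, max (|x k i - (mfun hn x k : ℝ) - 1| - alpha W γ i) 0

/-- `δ = min_{(p,q) ∈ E} w_pq`. -/
noncomputable def deltaMin {n : ℕ} (G : SimpleGraph (Fin n)) (W : Matrix (Fin n) (Fin n) ℝ) : ℝ :=
  sInf {r : ℝ | ∃ p q, G.Adj p q ∧ r = W p q}

open Classical in
/-- `T_s(k0,k)`: number of times `t ∈ [k0,k]` at which node `s` lies in `X1 ∪ X2`,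
i.e. `x_s(t) < m(t) + 1`. -/
noncomputable def Tcount {n : ℕ} (hn : 0 < n) (x : ℕ → Fin n → ℝ) (s : Fin n)
    (k0 k : ℕ) : ℕ :=
  ((Finset.Icc k0 k).filter fun t => x t s < (mfun hn x t : ℝ) + 1).card


set_option linter.unusedSectionVars false
namespace P3


variable {n : ℕ} {G : SimpleGraph (Fin n)} {W : Matrix (Fin n) (Fin n) ℝ}
  {x : ℕ → Fin n → ℝ} {γ : ℝ}

/-- real floor of x k i -/
noncomputable def yr (x : ℕ → Fin n → ℝ) (k : ℕ) (i : Fin n) : ℝ := (⌊x k i⌋ : ℝ)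

lemma yr_le (k : ℕ) (i : Fin n) : yr x k i ≤ x k i := Int.floor_le _

lemma lt_yr_add_one (k : ℕ) (i : Fin n) : x k i < yr x k i + 1 := Int.lt_floor_add_one _

/-- update rule in incremental form -/
lemma update (hrow : ∀ i, ∑ j, W i j = 1)
    (hx : ∀ k i, x (k + 1) i = (∑ j, W i j * (⌊x k j⌋ : ℝ)) + x k i - (⌊x k i⌋ : ℝ)) :
    ∀ k i, x (k + 1) i = x k i + ∑ j, W i j * (yr x k j - yr x k i) := by
  intro k i
  have h1 : ∑ j, W i j * (yr x k j - yr x k i)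
      = (∑ j, W i j * yr x k j) - (∑ j, W i j) * yr x k i := by
    rw [Finset.sum_mul, ← Finset.sum_sub_distrib]
    exact Finset.sum_congr rfl fun j _ => by ring
  rw [h1, hrow i, hx k i]
  simp [yr]
  ring


/-- Bundled working hypotheses. -/
structure Good (n : ℕ) (G : SimpleGraph (Fin n)) (W : Matrix (Fin n) (Fin n) ℝ)
    (x : ℕ → Fin n → ℝ) (γ : ℝ) : Prop where
  hn : 1 < n
  conn : G.Connected
  sym : ∀ i j, W i j = W j i
  pos : ∀ i j, 0 ≤ W i j
  row : ∀ i, ∑ j, W i j = 1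
  edge : ∀ i j, G.Adj i j → 0 < W i j
  nonedge : ∀ i j, i ≠ j → ¬ G.Adj i j → W i j = 0
  rat : ∀ i j, ∃ q : ℚ, (q : ℝ) = W i j
  upd : ∀ k i, x (k + 1) i = x k i + ∑ j, W i j * (yr x k j - yr x k i)
  gpos : 0 < γ
  gap1 : ∀ k i, x k i - yr x k i > 1 - W i i → x k i - yr x k i ≥ 1 - W i i + 2 * γ
  gap2 : ∀ k i, x k i - yr x k i < W i i → x k i - yr x k i ≤ W i i - 2 * γ
  gap3 : ∀ k i, x k i - yr x k i ≤ 1 - 2 * γ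
  gap4 : ∀ i, 1 / 2 + 2 * γ ≤ W i i

namespace Good

variable {n : ℕ} {G : SimpleGraph (Fin n)} {W : Matrix (Fin n) (Fin n) ℝ}
  {x : ℕ → Fin n → ℝ} {γ : ℝ} (hg : Good n G W x γ)
include hg

lemma hn0 : 0 < n := Nat.lt_of_lt_of_le Nat.zero_lt_one hg.hn.le

lemma wpos (i : Fin n) : 0 < W i i :=
  lt_of_lt_of_le (by linarith [hg.gpos] : (0:ℝ) < 1/2 + 2*γ) (hg.gap4 i)

lemma whalf (i : Fin n) : 1/2 < W i i :=
  lt_of_lt_of_le (by linarith [hg.gpos]) (hg.gap4 i)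

lemma wle1 (i : Fin n) : W i i ≤ 1 := by
  have h := hg.row i
  have h2 : ∑ j ∈ univ.erase i, W i j ≥ 0 :=
    Finset.sum_nonneg fun j _ => hg.pos i j
  have h3 : W i i + ∑ j ∈ univ.erase i, W i j = 1 := by
    rw [← h, ← Finset.add_sum_erase _ _ (mem_univ i)]
  linarith

lemma offdiag_sum (i : Fin n) : ∑ j ∈ univ.erase i, W i j = 1 - W i i := by
  have h3 : W i i + ∑ j ∈ univ.erase i, W i j = 1 := by
    rw [← hg.row i, ← Finset.add_sum_erase _ _ (mem_univ i)]
  linarith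

lemma c_nonneg (k : ℕ) (i : Fin n) : 0 ≤ x k i - yr x k i :=
  sub_nonneg.2 (yr_le k i)

lemma c_lt_one (k : ℕ) (i : Fin n) : x k i - yr x k i < 1 :=
  sub_lt_iff_lt_add.2 (by simpa [add_comm] using lt_yr_add_one (x := x) k i)

end Good

section MinMax

variable {n : ℕ} {x : ℕ → Fin n → ℝ} (hn : 0 < n)

lemma mfun_le (k : ℕ) (i : Fin n) : mfun hn x k ≤ ⌊x k i⌋ :=
  Finset.inf'_le _ (mem_univ i)

lemma exists_mfun (k : ℕ) : ∃ i, ⌊x k i⌋ = mfun hn x k := by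
  obtain ⟨i, _, h⟩ := Finset.exists_mem_eq_inf' (⟨⟨0, hn⟩, mem_univ _⟩) (fun i => ⌊x k i⌋)
  exact ⟨i, h.symm⟩

lemma le_Mfun (k : ℕ) (i : Fin n) : ⌊x k i⌋ ≤ Mfun hn x k :=
  Finset.le_sup' (fun i => ⌊x k i⌋) (mem_univ i)

lemma exists_Mfun (k : ℕ) : ∃ i, ⌊x k i⌋ = Mfun hn x k := by
  obtain ⟨i, _, h⟩ := Finset.exists_mem_eq_sup' (⟨⟨0, hn⟩, mem_univ _⟩) (fun i => ⌊x k i⌋)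
  exact ⟨i, h.symm⟩

lemma mfun_le_Mfun (k : ℕ) : mfun hn x k ≤ Mfun hn x k := by
  obtain ⟨i, hi⟩ := exists_mfun (x := x) hn k
  exact hi ▸ le_Mfun hn k i

lemma mr_le_yr (k : ℕ) (i : Fin n) : ((mfun hn x k : ℤ) : ℝ) ≤ yr x k i := by
  unfold yr; exact_mod_cast mfun_le (x := x) hn k i

lemma yr_le_Mr (k : ℕ) (i : Fin n) : yr x k i ≤ ((Mfun hn x k : ℤ) : ℝ) := by
  unfold yr; exact_mod_cast le_Mfun (x := x) hn k i

end MinMax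

namespace Good

variable {n : ℕ} {G : SimpleGraph (Fin n)} {W : Matrix (Fin n) (Fin n) ℝ}
  {x : ℕ → Fin n → ℝ} {γ : ℝ} (hg : Good n G W x γ)
include hg

/-- generic upper bound for weighted averages -/
lemma sum_w_le {i : Fin n} {f : Fin n → ℝ} {B : ℝ} (h : ∀ j, f j ≤ B) :
    ∑ j, W i j * f j ≤ B := by
  calc ∑ j, W i j * f j ≤ ∑ j, W i j * B :=
        Finset.sum_le_sum fun j _ => mul_le_mul_of_nonneg_left (h j) (hg.pos i j)
    _ = B := by rw [← Finset.sum_mul, hg.row i, one_mul]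

lemma sum_w_ge {i : Fin n} {f : Fin n → ℝ} {B : ℝ} (h : ∀ j, B ≤ f j) :
    B ≤ ∑ j, W i j * f j := by
  calc B = ∑ j, W i j * B := by rw [← Finset.sum_mul, hg.row i, one_mul]
    _ ≤ ∑ j, W i j * f j :=
        Finset.sum_le_sum fun j _ => mul_le_mul_of_nonneg_left (h j) (hg.pos i j)

/-- refined: keep the self term -/
lemma sum_w_le_self {i : Fin n} {f : Fin n → ℝ} {B : ℝ} (h : ∀ j, f j ≤ B) :
    ∑ j, W i j * f j ≤ W i i * f i + (1 - W i i) * B := by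
  rw [← Finset.add_sum_erase _ _ (mem_univ i)]
  have : ∑ j ∈ univ.erase i, W i j * f j ≤ ∑ j ∈ univ.erase i, W i j * B :=
    Finset.sum_le_sum fun j _ => mul_le_mul_of_nonneg_left (h j) (hg.pos i j)
  have h2 : ∑ j ∈ univ.erase i, W i j * B = (1 - W i i) * B := by
    rw [← Finset.sum_mul, hg.offdiag_sum i]
  linarith

lemma sum_w_ge_self {i : Fin n} {f : Fin n → ℝ} {B : ℝ} (h : ∀ j, B ≤ f j) :
    W i i * f i + (1 - W i i) * B ≤ ∑ j, W i j * f j := by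
  rw [← Finset.add_sum_erase _ _ (mem_univ i)]
  have : ∑ j ∈ univ.erase i, W i j * B ≤ ∑ j ∈ univ.erase i, W i j * f j :=
    Finset.sum_le_sum fun j _ => mul_le_mul_of_nonneg_left (h j) (hg.pos i j)
  have h2 : ∑ j ∈ univ.erase i, W i j * B = (1 - W i i) * B := by
    rw [← Finset.sum_mul, hg.offdiag_sum i]
  linarith

/-- canonical form of the update -/
lemma xsucc (k : ℕ) (i : Fin n) :
    x (k + 1) i = (∑ j, W i j * yr x k j) + (x k i - yr x k i) := by
  have h1 : ∑ j, W i j * (yr x k j - yr x k i)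
      = (∑ j, W i j * yr x k j) - (∑ j, W i j) * yr x k i := by
    rw [Finset.sum_mul, ← Finset.sum_sub_distrib]
    exact Finset.sum_congr rfl fun j _ => by ring
  rw [hg.upd k i, h1, hg.row i]
  ring

lemma xsucc_ge (hn : 0 < n) (k : ℕ) (i : Fin n) :
    ((mfun hn x k : ℤ) : ℝ) ≤ x (k + 1) i := by
  rw [hg.xsucc k i]
  have h1 := hg.sum_w_ge (i := i) (f := yr x k) (B := ((mfun hn x k : ℤ) : ℝ))
    (fun j => mr_le_yr hn k j)
  have h2 := hg.c_nonneg k i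
  linarith

lemma xsucc_lt (hn : 0 < n) (k : ℕ) (i : Fin n) :
    x (k + 1) i < ((Mfun hn x k : ℤ) : ℝ) + 1 := by
  rw [hg.xsucc k i]
  have h1 := hg.sum_w_le (i := i) (f := yr x k) (B := ((Mfun hn x k : ℤ) : ℝ))
    (fun j => yr_le_Mr hn k j)
  have h2 := hg.c_lt_one k i
  linarith

lemma mfun_mono (hn : 0 < n) (k : ℕ) : mfun hn x k ≤ mfun hn x (k + 1) := by
  apply Finset.le_inf'
  intro i _
  exact Int.le_floor.2 (hg.xsucc_ge hn k i)

lemma Mfun_anti (hn : 0 < n) (k : ℕ) : Mfun hn x (k + 1) ≤ Mfun hn x k := by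
  apply Finset.sup'_le
  intro i _
  have := hg.xsucc_lt hn k i
  have : (⌊x (k+1) i⌋ : ℝ) < (Mfun hn x k : ℝ) + 1 := lt_of_le_of_lt (Int.floor_le _) this
  exact_mod_cast Int.lt_add_one_iff.1 (by exact_mod_cast this)

lemma mfun_mono_le (hn : 0 < n) {k k' : ℕ} (h : k ≤ k') : mfun hn x k ≤ mfun hn x k' := by
  induction k', h using Nat.le_induction with
  | base => exact le_refl _
  | succ k' hk ih => exact le_trans ih (hg.mfun_mono hn k')

lemma Mfun_anti_le (hn : 0 < n) {k k' : ℕ} (h : k ≤ k') : Mfun hn x k' ≤ Mfun hn x k := by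
  induction k', h using Nat.le_induction with
  | base => exact le_refl _
  | succ k' hk ih => exact le_trans (hg.Mfun_anti hn k') ih

end Good

namespace Good

variable {n : ℕ} {G : SimpleGraph (Fin n)} {W : Matrix (Fin n) (Fin n) ℝ}
  {x : ℕ → Fin n → ℝ} {γ : ℝ} (hg : Good n G W x γ)
include hg

lemma exists_denom : ∃ d : ℕ, 0 < d ∧ ∀ i j, ∃ z : ℤ, W i j = (z : ℝ) / d := by
  classical
  choose Q hQ using hg.rat
  refine ⟨∏ i, ∏ j, (Q i j).den, ?_, ?_⟩
  · exact Finset.prod_pos fun i _ => Finset.prod_pos fun j _ => (Q i j).den_pos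
  intro i j
  set d : ℕ := ∏ i, ∏ j, (Q i j).den with hd
  have hdvd : (Q i j).den ∣ d := by
    have h1 : (Q i j).den ∣ ∏ j', (Q i j').den :=
      Finset.dvd_prod_of_mem (fun j' => (Q i j').den) (mem_univ j)
    exact h1.trans (Finset.dvd_prod_of_mem (fun i' => ∏ j', (Q i' j').den) (mem_univ i))
  obtain ⟨c, hc⟩ := hdvd
  refine ⟨(Q i j).num * c, ?_⟩
  have hq : (Q i j) * ((Q i j).den : ℚ) = (Q i j).num := Rat.mul_den_eq_num _
  have hqd : (Q i j) * (d : ℚ) = ((Q i j).num * c : ℤ) := by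
    rw [hc]
    push_cast
    calc Q i j * ((Q i j).den * (c:ℚ)) = (Q i j * (Q i j).den) * c := by ring
      _ = ((Q i j).num : ℚ) * c := by rw [hq]
  have hdR : (0:ℝ) < d := by
    have : 0 < d := by
      rw [hd]
      exact Finset.prod_pos fun i _ => Finset.prod_pos fun j _ => (Q i j).den_pos
    exact_mod_cast this
  have : (Q i j : ℝ) * (d : ℝ) = (((Q i j).num * c : ℤ) : ℝ) := by
    exact_mod_cast congrArg (fun q : ℚ => (q : ℝ)) hqd
  rw [← hQ i j]
  field_simp at this ⊢
  linarith [this]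

lemma lattice {d : ℕ} (hd : 0 < d) (hw : ∀ i j, ∃ z : ℤ, W i j = (z : ℝ) / d) :
    ∀ k i, ∃ z : ℤ, x k i = x 0 i + (z : ℝ) / d := by
  intro k
  induction k with
  | zero => exact fun i => ⟨0, by simp⟩
  | succ k ih =>
    intro i
    obtain ⟨z0, hz0⟩ := ih i
    have hterm : ∀ j, ∃ zz : ℤ, W i j * (yr x k j - yr x k i) = (zz : ℝ) / d := by
      intro j
      obtain ⟨z, hz⟩ := hw i j
      refine ⟨z * (⌊x k j⌋ - ⌊x k i⌋), ?_⟩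
      rw [hz]
      push_cast
      unfold yr
      ring
    choose zz hzz using hterm
    refine ⟨z0 + ∑ j, zz j, ?_⟩
    rw [hg.upd k i]
    have : ∑ j, W i j * (yr x k j - yr x k i) = ((∑ j, zz j : ℤ) : ℝ) / d := by
      rw [Finset.sum_congr rfl fun j _ => hzz j]
      rw [← Finset.sum_div]
      push_cast
      ring
    rw [this, hz0]
    push_cast
    ring

lemma global_bounds (hn : 0 < n) (k : ℕ) (i : Fin n) :
    ((mfun hn x 0 : ℤ) : ℝ) ≤ x k i ∧ x k i < ((Mfun hn x 0 : ℤ) : ℝ) + 1 := by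
  constructor
  · calc ((mfun hn x 0 : ℤ) : ℝ) ≤ ((mfun hn x k : ℤ) : ℝ) := by
          exact_mod_cast hg.mfun_mono_le hn (Nat.zero_le k)
      _ ≤ yr x k i := mr_le_yr hn k i
      _ ≤ x k i := yr_le k i
  · calc x k i < yr x k i + 1 := lt_yr_add_one k i
      _ ≤ ((Mfun hn x k : ℤ) : ℝ) + 1 := by linarith [yr_le_Mr (x := x) hn k i]
      _ ≤ ((Mfun hn x 0 : ℤ) : ℝ) + 1 := by
          have := hg.Mfun_anti_le hn (Nat.zero_le k)
          have : ((Mfun hn x k : ℤ) : ℝ) ≤ ((Mfun hn x 0 : ℤ) : ℝ) := by exact_mod_cast this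
          linarith

lemma exists_period (hn : 0 < n) :
    ∃ k1 p : ℕ, 0 < p ∧ ∀ k, k1 ≤ k → x (k + p) = x k := by
  classical
  obtain ⟨d, hd, hw⟩ := hg.exists_denom
  have hlat := hg.lattice hd hw
  set m0 : ℝ := ((mfun hn x 0 : ℤ) : ℝ) with hm0
  set M1 : ℝ := ((Mfun hn x 0 : ℤ) : ℝ) + 1 with hM1
  set A : Fin n → Set ℝ := fun i =>
    {r | (∃ z : ℤ, r = x 0 i + (z : ℝ) / d) ∧ m0 ≤ r ∧ r < M1} with hA
  have hAfin : ∀ i, (A i).Finite := by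
    intro i
    have hsub : A i ⊆ (fun z : ℤ => x 0 i + (z : ℝ) / d) ''
        (Set.Icc ⌈(m0 - x 0 i) * d⌉ ⌊(M1 - x 0 i) * d⌋) := by
      rintro r ⟨⟨z, hz⟩, hlo, hhi⟩
      refine ⟨z, ⟨?_, ?_⟩, hz.symm⟩
      · rw [Int.ceil_le]
        have hdR : (0:ℝ) < d := by exact_mod_cast hd
        have : m0 - x 0 i ≤ (z : ℝ) / d := by rw [hz] at hlo; linarith
        calc (m0 - x 0 i) * d ≤ ((z:ℝ)/d) * d := by
              exact mul_le_mul_of_nonneg_right this hdR.le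
          _ = (z : ℝ) := by field_simp
      · rw [Int.le_floor]
        have hdR : (0:ℝ) < d := by exact_mod_cast hd
        have : (z : ℝ) / d ≤ M1 - x 0 i := by rw [hz] at hhi; linarith
        calc (z:ℝ) = ((z:ℝ)/d) * d := by field_simp
          _ ≤ (M1 - x 0 i) * d := mul_le_mul_of_nonneg_right this hdR.le
    exact Set.Finite.subset (Set.Finite.image _ (Set.finite_Icc _ _)) hsub
  have hmem : ∀ k, x k ∈ Set.pi Set.univ A := by
    intro k i _
    obtain ⟨hlo, hhi⟩ := hg.global_bounds hn k i
    exact ⟨hlat k i, hlo, hhi⟩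
  have hSfin : (Set.pi Set.univ A).Finite := Set.Finite.pi hAfin
  have : ∃ k1 k2 : ℕ, k1 ≠ k2 ∧ x k1 = x k2 := by
    haveI := hSfin.to_subtype
    obtain ⟨k1, k2, hne, heq⟩ := Finite.exists_ne_map_eq_of_infinite
      (fun k : ℕ => (⟨x k, hmem k⟩ : (Set.pi Set.univ A)))
    exact ⟨k1, k2, hne, by simpa [Subtype.ext_iff] using heq⟩
  obtain ⟨k1, k2, hne, heq⟩ := this
  -- wlog k1 < k2
  have hdet : ∀ a b, x a = x b → ∀ t, x (a + t) = x (b + t) := by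
    intro a b hab t
    induction t with
    | zero => simpa using hab
    | succ t ih =>
      funext i
      have h1 : a + (t+1) = (a + t) + 1 := by ring
      have h2 : b + (t+1) = (b + t) + 1 := by ring
      rw [h1, h2, hg.upd (a+t) i, hg.upd (b+t) i, ih]
      unfold yr
      rw [ih]
  rcases lt_or_gt_of_ne hne with h | h
  · refine ⟨k1, k2 - k1, Nat.sub_pos_of_lt h, ?_⟩
    intro k hk
    obtain ⟨t, rfl⟩ := Nat.exists_eq_add_of_le hk
    have h12 : k1 + (k2 - k1) = k2 := by omega
    calc x (k1 + t + (k2 - k1)) = x (k1 + (k2 - k1) + t) := by ring_nf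
      _ = x (k2 + t) := by rw [h12]
      _ = x (k1 + t) := (hdet k1 k2 heq t).symm
  · refine ⟨k2, k1 - k2, Nat.sub_pos_of_lt h, ?_⟩
    intro k hk
    obtain ⟨t, rfl⟩ := Nat.exists_eq_add_of_le hk
    have h12 : k2 + (k1 - k2) = k1 := by omega
    calc x (k2 + t + (k1 - k2)) = x (k2 + (k1 - k2) + t) := by ring_nf
      _ = x (k1 + t) := by rw [h12]
      _ = x (k2 + t) := (hdet k2 k1 heq.symm t).symm

end Good

/-- if c is periodic and nondecreasing with increments u, all increments vanish -/
lemma pinned_of_periodic {k1 p : ℕ} (hp : 0 < p) {c u : ℕ → ℝ}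
    (hstep : ∀ k, k1 ≤ k → c (k + 1) = c k + u k)
    (hpos : ∀ k, k1 ≤ k → 0 ≤ u k)
    (hper : ∀ k, k1 ≤ k → c (k + p) = c k) :
    ∀ k, k1 ≤ k → u k = 0 := by
  have mono : ∀ a b, k1 ≤ a → a ≤ b → c a ≤ c b := by
    intro a b ha hab
    induction b, hab using Nat.le_induction with
    | base => exact le_refl _
    | succ b hb ih =>
      have hb1 : k1 ≤ b := le_trans ha hb
      rw [hstep b hb1]
      have := hpos b hb1
      linarith
  intro k hk
  have h1 : c (k + 1) ≤ c (k + p) := mono (k+1) (k+p) (by omega) (by omega)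
  have h2 := hper k hk
  have h3 := hstep k hk
  have h4 := hpos k hk
  linarith

/-- propagation along a connected graph -/
lemma propagate {n : ℕ} {G : SimpleGraph (Fin n)} (hG : G.Connected)
    (P : Fin n → Prop) (hcl : ∀ i j, G.Adj i j → P i → P j)
    {i0 : Fin n} (h0 : P i0) : ∀ i, P i := by
  intro i
  obtain ⟨w⟩ := hG.preconnected i0 i
  clear hG
  induction w with
  | nil => exact h0
  | cons h w ih => exact ih (hcl _ _ h h0)

namespace Good

variable {n : ℕ} {G : SimpleGraph (Fin n)} {W : Matrix (Fin n) (Fin n) ℝ}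
  {x : ℕ → Fin n → ℝ} {γ : ℝ} (hg : Good n G W x γ)
include hg

omit hg in
lemma mfun_congr (hn : 0 < n) {k k' : ℕ} (h : x k = x k') : mfun hn x k = mfun hn x k' := by
  unfold mfun; rw [h]

omit hg in
lemma Mfun_congr (hn : 0 < n) {k k' : ℕ} (h : x k = x k') : Mfun hn x k = Mfun hn x k' := by
  unfold Mfun; rw [h]

lemma per_mul {k1 p : ℕ} (hper : ∀ k, k1 ≤ k → x (k + p) = x k) :
    ∀ t, x (k1 + t * p) = x k1 := by
  intro t
  induction t with
  | zero => simp
  | succ t ih =>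
    have : k1 + (t+1) * p = (k1 + t * p) + p := by ring
    rw [this, hper _ (by omega), ih]

lemma mfun_const (hn : 0 < n) {k1 p : ℕ} (hp : 0 < p)
    (hper : ∀ k, k1 ≤ k → x (k + p) = x k) :
    ∀ k, k1 ≤ k → mfun hn x k = mfun hn x k1 := by
  intro k hk
  have h1 : mfun hn x k1 ≤ mfun hn x k := hg.mfun_mono_le hn hk
  have h2 : mfun hn x k ≤ mfun hn x (k1 + k * p) := by
    apply hg.mfun_mono_le hn
    have : k ≤ k * p := Nat.le_mul_of_pos_right k hp
    omega
  rw [mfun_congr hn (hg.per_mul hper k)] at h2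
  omega

lemma Mfun_const (hn : 0 < n) {k1 p : ℕ} (hp : 0 < p)
    (hper : ∀ k, k1 ≤ k → x (k + p) = x k) :
    ∀ k, k1 ≤ k → Mfun hn x k = Mfun hn x k1 := by
  intro k hk
  have h1 : Mfun hn x k ≤ Mfun hn x k1 := hg.Mfun_anti_le hn hk
  have h2 : Mfun hn x (k1 + k * p) ≤ Mfun hn x k := by
    apply hg.Mfun_anti_le hn
    have : k ≤ k * p := Nat.le_mul_of_pos_right k hp
    omega
  rw [Mfun_congr hn (hg.per_mul hper k)] at h2
  omega

end Good

namespace Good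

variable {n : ℕ} {G : SimpleGraph (Fin n)} {W : Matrix (Fin n) (Fin n) ℝ}
  {x : ℕ → Fin n → ℝ} {γ : ℝ} (hg : Good n G W x γ)
include hg

lemma T4_empty (hn : 0 < n) {k1 p : ℕ} (hp : 0 < p)
    (hper : ∀ k, k1 ≤ k → x (k + p) = x k)
    (hMm : mfun hn x k1 < Mfun hn x k1) :
    ∀ k, k1 ≤ k → ∀ i, x k i ≤ ((Mfun hn x k1 : ℤ) : ℝ) + (1 - W i i + γ) := by
  set MM : ℤ := Mfun hn x k1 with hMM
  set MMr : ℝ := ((MM : ℤ) : ℝ) with hMMr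
  have hyle : ∀ k, k1 ≤ k → ∀ j, yr x k j ≤ MMr := by
    intro k hk j
    have h1 : ⌊x k j⌋ ≤ Mfun hn x k := le_Mfun hn k j
    rw [hg.Mfun_const hn hp hper k hk] at h1
    rw [hMMr]
    unfold yr
    exact_mod_cast h1
  have hydic : ∀ k, k1 ≤ k → ∀ i, yr x k i = MMr ∨ yr x k i ≤ MMr - 1 := by
    intro k hk i
    have h1 : ⌊x k i⌋ ≤ MM := by
      have := le_Mfun (x := x) hn k i
      rw [hg.Mfun_const hn hp hper k hk] at this
      exact this
    rcases eq_or_lt_of_le h1 with h | h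
    · left; rw [hMMr, ← h]; rfl
    · right
      have : ⌊x k i⌋ ≤ MM - 1 := by omega
      unfold yr
      have : ((⌊x k i⌋ : ℤ) : ℝ) ≤ ((MM - 1 : ℤ) : ℝ) := by exact_mod_cast this
      push_cast at this ⊢
      linarith
  have hstep : ∀ k, k1 ≤ k → ∀ i, x k i ≤ MMr + (1 - W i i + γ) →
      x (k + 1) i ≤ MMr + (1 - W i i + γ) := by
    intro k hk i hxi
    have hsum_le : ∑ j, W i j * yr x k j ≤ MMr := hg.sum_w_le (hyle k hk)
    have hc3 := hg.gap3 k i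
    have hgp := hg.gpos
    rcases hydic k hk i with hy | hy
    · -- at top floor
      have hc : x k i - yr x k i ≤ 1 - W i i := by
        by_contra hcon
        push_neg at hcon
        have h5 := hg.gap1 k i hcon
        rw [hy] at h5
        linarith
      rw [hg.xsucc k i]
      rw [hy] at hc
      linarith
    · -- below top floor
      have hself := hg.sum_w_le_self (i := i) (f := yr x k) (B := MMr) (hyle k hk)
      have hw0 : 0 ≤ W i i := (hg.wpos i).le
      have h2 : W i i * yr x k i ≤ W i i * (MMr - 1) :=
        mul_le_mul_of_nonneg_left hy hw0
      rw [hg.xsucc k i]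
      nlinarith
  have hsteps : ∀ k, k1 ≤ k → ∀ k', k ≤ k' → ∀ i, x k i ≤ MMr + (1 - W i i + γ) →
      x k' i ≤ MMr + (1 - W i i + γ) := by
    intro k hk k' hkk' i hxi
    induction k', hkk' using Nat.le_induction with
    | base => exact hxi
    | succ k' hk' ih => exact hstep k' (le_trans hk hk') i ih
  -- if some node violates at k1, it violates forever
  have hforever : ∀ i, MMr + (1 - W i i + γ) < x k1 i →
      ∀ k, k1 ≤ k → MMr + (1 - W i i + γ) < x k i := by
    intro i h0 k hk
    by_contra hle
    push_neg at hle
    have hall := hsteps k hk (k1 + k * p) (by nlinarith [Nat.le_mul_of_pos_right k hp]) i hle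
    have hxeq := hg.per_mul hper k
    rw [hxeq] at hall
    linarith
  -- no violator can exist
  have hnoviol : ∀ i, x k1 i ≤ MMr + (1 - W i i + γ) := by
    by_contra hcon
    push_neg at hcon
    obtain ⟨i0, hi0⟩ := hcon
    have hi0all := hforever i0 hi0
    -- i0 pinned at top floor
    have hpin0 : ∀ k, k1 ≤ k → ⌊x k i0⌋ = MM := by
      intro k hk
      have h1 : MMr ≤ x k i0 := by
        have := hi0all k hk
        have hw1 := hg.wle1 i0
        have hgp := hg.gpos
        linarith
      have h2 : (MM : ℤ) ≤ ⌊x k i0⌋ := Int.le_floor.2 (by exact_mod_cast h1)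
      have h3 : ⌊x k i0⌋ ≤ MM := by
        have := le_Mfun (x := x) hn k i0
        rw [hg.Mfun_const hn hp hper k hk] at this
        exact this
      omega
    -- propagate pinning
    set P : Fin n → Prop := fun i => ∀ k, k1 ≤ k → ⌊x k i⌋ = MM with hP
    have hcl : ∀ i j, G.Adj i j → P i → P j := by
      intro i j hadj hPi
      have hyri : ∀ k, k1 ≤ k → yr x k i = MMr := by
        intro k hk; unfold yr; rw [hPi k hk]
      have hzero := pinned_of_periodic hp
        (c := fun k => -(x k i))
        (u := fun k => ∑ l, W i l * (yr x k i - yr x k l))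
        (fun k hk => by
          show -(x (k+1) i) = -(x k i) + ∑ l, W i l * (yr x k i - yr x k l)
          have h6 := hg.upd k i
          have hsplit : ∑ l, W i l * (yr x k l - yr x k i)
              = -(∑ l, W i l * (yr x k i - yr x k l)) := by
            rw [← Finset.sum_neg_distrib]
            exact Finset.sum_congr rfl fun l _ => by ring
          rw [h6, hsplit]; ring)
        (fun k hk => Finset.sum_nonneg fun l _ => mul_nonneg (hg.pos i l)
          (by
            have := hyle k hk l
            rw [hyri k hk]
            linarith))
        (fun k hk => by show -(x (k+p) i) = -(x k i); rw [hper k hk])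
      intro k hk
      have hz := hzero k hk
      have hterm := (Finset.sum_eq_zero_iff_of_nonneg (fun l _ => mul_nonneg (hg.pos i l)
          (by
            have := hyle k hk l
            rw [hyri k hk]
            linarith))).1 hz j (mem_univ j)
      have hwij : 0 < W i j := hg.edge i j hadj
      have : yr x k i - yr x k j = 0 := by
        by_contra hne
        exact hne (by
          have := mul_eq_zero.1 hterm
          rcases this with h | h
          · exact absurd h hwij.ne'
          · exact h)
      have h7 : yr x k j = MMr := by rw [hyri k hk] at this; linarith
      rw [hMMr] at h7
      unfold yr at h7
      exact_mod_cast h7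
    have hallP : ∀ i, P i := propagate hg.conn P hcl hpin0
    -- then mfun k1 = MM, contradiction
    obtain ⟨iw, hiw⟩ := exists_mfun (x := x) hn k1
    have := hallP iw k1 (le_refl _)
    omega
  intro k hk i
  exact hsteps k1 (le_refl _) k hk i (hnoviol i)

end Good

namespace Good

variable {n : ℕ} {G : SimpleGraph (Fin n)} {W : Matrix (Fin n) (Fin n) ℝ}
  {x : ℕ → Fin n → ℝ} {γ : ℝ} (hg : Good n G W x γ)
include hg

lemma B1_empty (hn : 0 < n) {k1 p : ℕ} (hp : 0 < p)
    (hper : ∀ k, k1 ≤ k → x (k + p) = x k)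
    (hMm : mfun hn x k1 < Mfun hn x k1) :
    ∀ k, k1 ≤ k → ∀ i, ((mfun hn x k1 : ℤ) : ℝ) + 1 - (1 - W i i + γ) ≤ x k i := by
  set mm : ℤ := mfun hn x k1 with hmm
  set mmr : ℝ := ((mm : ℤ) : ℝ) with hmmr
  have hyge : ∀ k, k1 ≤ k → ∀ j, mmr ≤ yr x k j := by
    intro k hk j
    have h1 : mfun hn x k ≤ ⌊x k j⌋ := mfun_le hn k j
    rw [hg.mfun_const hn hp hper k hk] at h1
    rw [hmmr]
    unfold yr
    exact_mod_cast h1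
  have hydic : ∀ k, k1 ≤ k → ∀ i, yr x k i = mmr ∨ mmr + 1 ≤ yr x k i := by
    intro k hk i
    have h1 : mm ≤ ⌊x k i⌋ := by
      have := mfun_le (x := x) hn k i
      rw [hg.mfun_const hn hp hper k hk] at this
      exact this
    rcases eq_or_lt_of_le h1 with h | h
    · left; rw [hmmr, h]; rfl
    · right
      have h2 : mm + 1 ≤ ⌊x k i⌋ := by omega
      unfold yr
      rw [hmmr]
      have : ((mm + 1 : ℤ) : ℝ) ≤ ((⌊x k i⌋ : ℤ) : ℝ) := by exact_mod_cast h2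
      push_cast at this ⊢
      linarith
  have hstep : ∀ k, k1 ≤ k → ∀ i, mmr + 1 - (1 - W i i + γ) ≤ x k i →
      mmr + 1 - (1 - W i i + γ) ≤ x (k + 1) i := by
    intro k hk i hxi
    have hsum_ge : mmr ≤ ∑ j, W i j * yr x k j := hg.sum_w_ge (hyge k hk)
    have hc0 := hg.c_nonneg k i
    have hgp := hg.gpos
    rcases hydic k hk i with hy | hy
    · -- at bottom floor
      have hc : W i i ≤ x k i - yr x k i := by
        by_contra hcon
        push_neg at hcon
        have h5 := hg.gap2 k i hcon
        rw [hy] at h5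
        linarith
      rw [hg.xsucc k i]
      linarith
    · -- above bottom floor
      have hself := hg.sum_w_ge_self (i := i) (f := yr x k) (B := mmr) (hyge k hk)
      have hw0 : 0 ≤ W i i := (hg.wpos i).le
      have h2 : W i i * (mmr + 1) ≤ W i i * yr x k i :=
        mul_le_mul_of_nonneg_left hy hw0
      rw [hg.xsucc k i]
      nlinarith
  have hsteps : ∀ k, k1 ≤ k → ∀ k', k ≤ k' → ∀ i, mmr + 1 - (1 - W i i + γ) ≤ x k i →
      mmr + 1 - (1 - W i i + γ) ≤ x k' i := by
    intro k hk k' hkk' i hxi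
    induction k', hkk' using Nat.le_induction with
    | base => exact hxi
    | succ k' hk' ih => exact hstep k' (le_trans hk hk') i ih
  have hforever : ∀ i, x k1 i < mmr + 1 - (1 - W i i + γ) →
      ∀ k, k1 ≤ k → x k i < mmr + 1 - (1 - W i i + γ) := by
    intro i h0 k hk
    by_contra hle
    push_neg at hle
    have hall := hsteps k hk (k1 + k * p) (by nlinarith [Nat.le_mul_of_pos_right k hp]) i hle
    have hxeq := hg.per_mul hper k
    rw [hxeq] at hall
    linarith
  have hnoviol : ∀ i, mmr + 1 - (1 - W i i + γ) ≤ x k1 i := by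
    by_contra hcon
    push_neg at hcon
    obtain ⟨i0, hi0⟩ := hcon
    have hi0all := hforever i0 hi0
    have hpin0 : ∀ k, k1 ≤ k → ⌊x k i0⌋ = mm := by
      intro k hk
      have h1 : x k i0 < mmr + 1 := by
        have := hi0all k hk
        have hgp := hg.gpos
        have hw1 := hg.wle1 i0
        linarith
      have h2 : ⌊x k i0⌋ < mm + 1 := by
        rw [Int.floor_lt]
        push_cast
        rw [hmmr] at h1
        push_cast at h1
        linarith
      have h3 : mm ≤ ⌊x k i0⌋ := by
        have := mfun_le (x := x) hn k i0
        rw [hg.mfun_const hn hp hper k hk] at this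
        exact this
      omega
    set P : Fin n → Prop := fun i => ∀ k, k1 ≤ k → ⌊x k i⌋ = mm with hP
    have hcl : ∀ i j, G.Adj i j → P i → P j := by
      intro i j hadj hPi
      have hyri : ∀ k, k1 ≤ k → yr x k i = mmr := by
        intro k hk; unfold yr; rw [hPi k hk, hmmr]
      have hzero := pinned_of_periodic hp
        (c := fun k => x k i)
        (u := fun k => ∑ l, W i l * (yr x k l - yr x k i))
        (fun k hk => hg.upd k i)
        (fun k hk => Finset.sum_nonneg fun l _ => mul_nonneg (hg.pos i l)
          (by
            have := hyge k hk l
            rw [hyri k hk]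
            linarith))
        (fun k hk => by show x (k+p) i = x k i; rw [hper k hk])
      intro k hk
      have hz := hzero k hk
      have hterm := (Finset.sum_eq_zero_iff_of_nonneg (fun l _ => mul_nonneg (hg.pos i l)
          (by
            have := hyge k hk l
            rw [hyri k hk]
            linarith))).1 hz j (mem_univ j)
      have hwij : 0 < W i j := hg.edge i j hadj
      have h6 : yr x k j - yr x k i = 0 := by
        rcases mul_eq_zero.1 hterm with h | h
        · exact absurd h hwij.ne'
        · exact h
      have h7 : yr x k j = mmr := by rw [hyri k hk] at h6; linarith
      rw [hmmr] at h7
      unfold yr at h7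
      exact_mod_cast h7
    have hallP : ∀ i, P i := propagate hg.conn P hcl hpin0
    obtain ⟨iw, hiw⟩ := exists_Mfun (x := x) hn k1
    have := hallP iw k1 (le_refl _)
    omega
  intro k hk i
  exact hsteps k1 (le_refl _) k hk i (hnoviol i)

end Good

section PsiDefs

variable {n : ℕ}

/-- top club at threshold MMr-1+w_ii -/
noncomputable def Zs (W : Matrix (Fin n) (Fin n) ℝ) (x : ℕ → Fin n → ℝ) (MMr : ℝ) (k : ℕ) :
    Finset (Fin n) :=
  univ.filter (fun i => MMr - 1 + W i i ≤ x k i)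

noncomputable def th (W : Matrix (Fin n) (Fin n) ℝ) (γ : ℝ) (MMr : ℝ) (i : Fin n) : ℝ :=
  MMr - 1 + W i i - γ

noncomputable def Psi (W : Matrix (Fin n) (Fin n) ℝ) (x : ℕ → Fin n → ℝ) (γ : ℝ)
    (MMr : ℝ) (k : ℕ) : ℝ :=
  ∑ i ∈ Zs W x MMr k, (x k i - th W γ MMr i)

lemma mem_Zs {W : Matrix (Fin n) (Fin n) ℝ} {x : ℕ → Fin n → ℝ} {MMr : ℝ} {k : ℕ}
    {i : Fin n} : i ∈ Zs W x MMr k ↔ MMr - 1 + W i i ≤ x k i := by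
  simp [Zs]

lemma Zs_congr {W : Matrix (Fin n) (Fin n) ℝ} {x : ℕ → Fin n → ℝ} {MMr : ℝ} {k k' : ℕ}
    (h : x k = x k') : Zs W x MMr k = Zs W x MMr k' := by
  unfold Zs; rw [h]

lemma Psi_congr {W : Matrix (Fin n) (Fin n) ℝ} {x : ℕ → Fin n → ℝ} {γ MMr : ℝ} {k k' : ℕ}
    (h : x k = x k') : Psi W x γ MMr k = Psi W x γ MMr k' := by
  unfold Psi; rw [Zs_congr h, h]

end PsiDefs

namespace Good

variable {n : ℕ} {G : SimpleGraph (Fin n)} {W : Matrix (Fin n) (Fin n) ℝ}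
  {x : ℕ → Fin n → ℝ} {γ : ℝ} (hg : Good n G W x γ)
include hg

/-- position dichotomy at the club threshold (uses the gap conditions) -/
lemma club_dichotomy (hn : 0 < n) {k1 p : ℕ} (hp : 0 < p)
    (hper : ∀ k, k1 ≤ k → x (k + p) = x k) {MM : ℤ} (hMMdef : MM = Mfun hn x k1)
    {k : ℕ} (hk : k1 ≤ k) (i : Fin n) :
    ((MM : ℤ) : ℝ) - 1 + W i i ≤ x k i ∨ x k i ≤ ((MM : ℤ) : ℝ) - 1 + W i i - 2 * γ := by
  set MMr : ℝ := ((MM : ℤ) : ℝ) with hMMr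
  have hfle : ⌊x k i⌋ ≤ MM := by
    rw [hMMdef, ← hg.Mfun_const hn hp hper k hk]
    exact le_Mfun hn k i
  have hgp := hg.gpos
  have hw4 := hg.gap4 i
  rcases (by omega : ⌊x k i⌋ = MM ∨ ⌊x k i⌋ = MM - 1 ∨ ⌊x k i⌋ ≤ MM - 2) with h | h | h
  · left
    have : MMr ≤ x k i := by
      rw [hMMr, ← h]
      exact Int.floor_le _
    have hw1 := hg.wle1 i
    linarith
  · have hyr : yr x k i = MMr - 1 := by
      unfold yr
      rw [h, hMMr]
      push_cast
      ring
    by_cases hc : x k i - yr x k i < W i i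
    · right
      have := hg.gap2 k i hc
      rw [hyr] at this
      linarith
    · left
      push_neg at hc
      rw [hyr] at hc
      linarith
  · right
    have : x k i < yr x k i + 1 := lt_yr_add_one k i
    have h2 : yr x k i ≤ MMr - 2 := by
      unfold yr
      rw [hMMr]
      have : ((⌊x k i⌋ : ℤ) : ℝ) ≤ ((MM - 2 : ℤ) : ℝ) := by exact_mod_cast h
      push_cast at this ⊢
      linarith
    linarith

/-- member floor facts -/
lemma club_member_floor (hn : 0 < n) {k1 p : ℕ} (hp : 0 < p)
    (hper : ∀ k, k1 ≤ k → x (k + p) = x k) {MM : ℤ} (hMMdef : MM = Mfun hn x k1)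
    {k : ℕ} (hk : k1 ≤ k) {i : Fin n} (hi : ((MM : ℤ) : ℝ) - 1 + W i i ≤ x k i) :
    ⌊x k i⌋ = MM - 1 ∨ ⌊x k i⌋ = MM := by
  have hfle : ⌊x k i⌋ ≤ MM := by
    rw [hMMdef, ← hg.Mfun_const hn hp hper k hk]
    exact le_Mfun hn k i
  have hge : MM - 1 ≤ ⌊x k i⌋ := by
    apply Int.le_floor.2
    have := hg.wpos i
    push_cast
    linarith
  omega

end Good

section PsiDefs2

variable {n : ℕ}

noncomputable def gfun (W : Matrix (Fin n) (Fin n) ℝ) (x : ℕ → Fin n → ℝ) (MMr : ℝ)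
    (k : ℕ) (i : Fin n) : ℝ :=
  ∑ j ∈ Zs W x MMr k, W i j * (yr x k j - (MMr - 1))

noncomputable def hfun (W : Matrix (Fin n) (Fin n) ℝ) (x : ℕ → Fin n → ℝ) (MMr : ℝ)
    (k : ℕ) (j : Fin n) : ℝ :=
  ∑ l ∈ (Zs W x MMr k)ᶜ, W j l * ((MMr - 1) - yr x k l)

noncomputable def Pool (W : Matrix (Fin n) (Fin n) ℝ) (x : ℕ → Fin n → ℝ) (MMr : ℝ)
    (k : ℕ) : ℝ :=
  ∑ i ∈ (Zs W x MMr k)ᶜ, (∑ j ∈ Zs W x MMr k, W i j) * ((MMr - 1) - yr x k i)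

end PsiDefs2

namespace Good

variable {n : ℕ} {G : SimpleGraph (Fin n)} {W : Matrix (Fin n) (Fin n) ℝ}
  {x : ℕ → Fin n → ℝ} {γ : ℝ} (hg : Good n G W x γ)
include hg

/-- member yr bound -/
lemma club_member_yr (hn : 0 < n) {k1 p : ℕ} (hp : 0 < p)
    (hper : ∀ k, k1 ≤ k → x (k + p) = x k) {MM : ℤ} (hMMdef : MM = Mfun hn x k1)
    {k : ℕ} (hk : k1 ≤ k) {i : Fin n} (hi : i ∈ Zs W x ((MM : ℤ) : ℝ) k) :
    ((MM : ℤ) : ℝ) - 1 ≤ yr x k i ∧ yr x k i ≤ ((MM : ℤ) : ℝ) := by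
  have := hg.club_member_floor hn hp hper hMMdef hk (mem_Zs.1 hi)
  unfold yr
  rcases this with h | h <;> rw [h] <;> constructor <;> push_cast <;> linarith

/-- outsider yr bound and position bound -/
lemma club_out_yr (hn : 0 < n) {k1 p : ℕ} (hp : 0 < p)
    (hper : ∀ k, k1 ≤ k → x (k + p) = x k) {MM : ℤ} (hMMdef : MM = Mfun hn x k1)
    {k : ℕ} (hk : k1 ≤ k) {i : Fin n} (hi : i ∉ Zs W x ((MM : ℤ) : ℝ) k) :
    yr x k i ≤ ((MM : ℤ) : ℝ) - 1 ∧ x k i ≤ ((MM : ℤ) : ℝ) - 1 + W i i - 2 * γ := by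
  have hnot : ¬ (((MM : ℤ) : ℝ) - 1 + W i i ≤ x k i) := by
    intro h
    exact hi (mem_Zs.2 h)
  push_neg at hnot
  have hpos : x k i ≤ ((MM : ℤ) : ℝ) - 1 + W i i - 2 * γ := by
    rcases hg.club_dichotomy hn hp hper hMMdef hk i with h | h
    · exact absurd h (not_le.2 hnot)
    · exact h
  constructor
  · have hfl : ⌊x k i⌋ ≤ MM - 1 := by
      have h2 : x k i < ((MM : ℤ) : ℝ) := by
        have := hg.wle1 i
        have := hg.gpos
        linarith
      have := Int.floor_lt.2 (by exact_mod_cast h2 : x k i < ((MM : ℤ) : ℝ))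
      omega
    unfold yr
    have : ((⌊x k i⌋ : ℤ) : ℝ) ≤ ((MM - 1 : ℤ) : ℝ) := by exact_mod_cast hfl
    push_cast at this ⊢
    linarith
  · exact hpos

lemma gfun_nonneg (hn : 0 < n) {k1 p : ℕ} (hp : 0 < p)
    (hper : ∀ k, k1 ≤ k → x (k + p) = x k) {MM : ℤ} (hMMdef : MM = Mfun hn x k1)
    {k : ℕ} (hk : k1 ≤ k) (i : Fin n) : 0 ≤ gfun W x ((MM : ℤ) : ℝ) k i :=
  Finset.sum_nonneg fun j hj => mul_nonneg (hg.pos i j)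
    (by linarith [(hg.club_member_yr hn hp hper hMMdef hk hj).1])

lemma hfun_nonneg (hn : 0 < n) {k1 p : ℕ} (hp : 0 < p)
    (hper : ∀ k, k1 ≤ k → x (k + p) = x k) {MM : ℤ} (hMMdef : MM = Mfun hn x k1)
    {k : ℕ} (hk : k1 ≤ k) (j : Fin n) : 0 ≤ hfun W x ((MM : ℤ) : ℝ) k j :=
  Finset.sum_nonneg fun l hl => mul_nonneg (hg.pos j l)
    (by linarith [(hg.club_out_yr hn hp hper hMMdef hk (Finset.mem_compl.1 hl)).1])

lemma sum_h_eq_pool {MMr : ℝ} (k : ℕ) :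
    ∑ j ∈ Zs W x MMr k, hfun W x MMr k j = Pool W x MMr k := by
  unfold hfun Pool
  rw [Finset.sum_comm]
  refine Finset.sum_congr rfl fun l hl => ?_
  rw [Finset.sum_mul]
  refine Finset.sum_congr rfl fun j hj => ?_
  rw [hg.sym j l]

/-- the flux identity -/
lemma flux_identity {MMr : ℝ} (k : ℕ) :
    ∑ i ∈ Zs W x MMr k, (∑ j, W i j * (yr x k j - yr x k i))
      = -(∑ i ∈ (Zs W x MMr k)ᶜ, gfun W x MMr k i) - Pool W x MMr k := by
  set S := Zs W x MMr k with hS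
  have hsplit : ∀ i, (∑ j, W i j * (yr x k j - yr x k i))
      = (∑ j ∈ S, W i j * (yr x k j - yr x k i))
        + (∑ j ∈ Sᶜ, W i j * (yr x k j - yr x k i)) := by
    intro i
    rw [Finset.sum_add_sum_compl]
  rw [Finset.sum_congr rfl fun i _ => hsplit i, Finset.sum_add_distrib]
  have hA : ∑ i ∈ S, ∑ j ∈ S, W i j * (yr x k j - yr x k i) = 0 := by
    have h1 : ∑ i ∈ S, ∑ j ∈ S, W i j * (yr x k j - yr x k i)
        = -(∑ i ∈ S, ∑ j ∈ S, W i j * (yr x k j - yr x k i)) := by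
      conv_lhs => rw [Finset.sum_comm]
      rw [← Finset.sum_neg_distrib]
      refine Finset.sum_congr rfl fun j _ => ?_
      rw [← Finset.sum_neg_distrib]
      refine Finset.sum_congr rfl fun i _ => ?_
      rw [hg.sym i j]
      ring
    linarith
  rw [hA, zero_add]
  have hB : ∑ i ∈ S, ∑ j ∈ Sᶜ, W i j * (yr x k j - yr x k i)
      = -(∑ i ∈ S, ∑ j ∈ Sᶜ, W i j * (yr x k i - (MMr - 1)))
        - (∑ i ∈ S, ∑ j ∈ Sᶜ, W i j * ((MMr - 1) - yr x k j)) := by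
    rw [← Finset.sum_neg_distrib, ← Finset.sum_sub_distrib]
    refine Finset.sum_congr rfl fun i _ => ?_
    rw [← Finset.sum_neg_distrib, ← Finset.sum_sub_distrib]
    refine Finset.sum_congr rfl fun j _ => ?_
    ring
  rw [hB]
  have hC : ∑ i ∈ S, ∑ j ∈ Sᶜ, W i j * (yr x k i - (MMr - 1))
      = ∑ i ∈ Sᶜ, gfun W x MMr k i := by
    rw [Finset.sum_comm]
    refine Finset.sum_congr rfl fun j hj => ?_
    unfold gfun
    rw [← hS]
    refine Finset.sum_congr rfl fun i hi => ?_
    rw [hg.sym i j]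
  have hD : ∑ i ∈ S, ∑ j ∈ Sᶜ, W i j * ((MMr - 1) - yr x k j)
      = Pool W x MMr k := by
    rw [Finset.sum_comm]
    unfold Pool
    rw [← hS]
    refine Finset.sum_congr rfl fun j hj => ?_
    rw [Finset.sum_mul]
    refine Finset.sum_congr rfl fun i hi => ?_
    rw [hg.sym i j]
  rw [hC, hD]

end Good

namespace Good

variable {n : ℕ} {G : SimpleGraph (Fin n)} {W : Matrix (Fin n) (Fin n) ℝ}
  {x : ℕ → Fin n → ℝ} {γ : ℝ} (hg : Good n G W x γ)
include hg

/-- entrant/outsider gain bound -/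
lemma outsider_bound (hn : 0 < n) {k1 p : ℕ} (hp : 0 < p)
    (hper : ∀ k, k1 ≤ k → x (k + p) = x k) {MM : ℤ} (hMMdef : MM = Mfun hn x k1)
    {k : ℕ} (hk : k1 ≤ k) {i : Fin n} (hi : i ∉ Zs W x ((MM : ℤ) : ℝ) k) :
    x (k + 1) i - th W γ ((MM : ℤ) : ℝ) i ≤ gfun W x ((MM : ℤ) : ℝ) k i - γ := by
  set MMr : ℝ := ((MM : ℤ) : ℝ) with hMMr
  set S := Zs W x MMr k with hS
  obtain ⟨hyout, hxout⟩ := hg.club_out_yr hn hp hper hMMdef hk hi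
  set a : ℝ := (MMr - 1) - yr x k i with ha
  have ha0 : 0 ≤ a := by rw [ha]; linarith
  -- u bound
  have husplit : ∑ j, W i j * (yr x k j - yr x k i)
      = (∑ j ∈ S, W i j * (yr x k j - yr x k i))
        + (∑ j ∈ Sᶜ, W i j * (yr x k j - yr x k i)) := by
    rw [Finset.sum_add_sum_compl]
  have hZpart : ∑ j ∈ S, W i j * (yr x k j - yr x k i)
      = gfun W x MMr k i + (∑ j ∈ S, W i j) * a := by
    unfold gfun
    rw [← hS, Finset.sum_mul, ← Finset.sum_add_distrib]
    refine Finset.sum_congr rfl fun j _ => ?_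
    rw [ha]
    ring
  have hNpart : ∑ j ∈ Sᶜ, W i j * (yr x k j - yr x k i)
      ≤ (∑ j ∈ Sᶜ, W i j - W i i) * a := by
    have hiSc : i ∈ Sᶜ := Finset.mem_compl.2 hi
    have hself : W i i * (yr x k i - yr x k i) = 0 := by ring
    have hsum0 : ∑ j ∈ Sᶜ, W i j * (yr x k j - yr x k i)
        = W i i * (yr x k i - yr x k i) + ∑ j ∈ Sᶜ.erase i, W i j * (yr x k j - yr x k i) :=
      (Finset.add_sum_erase _ (fun j => W i j * (yr x k j - yr x k i)) hiSc).symm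
    rw [hsum0, hself, zero_add]
    have hterm : ∀ j ∈ Sᶜ.erase i, W i j * (yr x k j - yr x k i) ≤ W i j * a := by
      intro j hj
      have hjout := Finset.mem_compl.1 (Finset.mem_of_mem_erase hj)
      have := (hg.club_out_yr hn hp hper hMMdef hk hjout).1
      exact mul_le_mul_of_nonneg_left (by rw [ha]; linarith) (hg.pos i j)
    have herase : ∑ j ∈ Sᶜ.erase i, W i j = (∑ j ∈ Sᶜ, W i j) - W i i := by
      rw [← Finset.add_sum_erase _ (fun j => W i j) hiSc]
      ring
    calc ∑ j ∈ Sᶜ.erase i, W i j * (yr x k j - yr x k i)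
        ≤ ∑ j ∈ Sᶜ.erase i, W i j * a := Finset.sum_le_sum hterm
      _ = (∑ j ∈ Sᶜ.erase i, W i j) * a := by rw [Finset.sum_mul]
      _ = (∑ j ∈ Sᶜ, W i j - W i i) * a := by rw [herase]
  have hWsum : (∑ j ∈ S, W i j) + (∑ j ∈ Sᶜ, W i j) = 1 := by
    rw [Finset.sum_add_sum_compl]
    exact hg.row i
  have hubound : ∑ j, W i j * (yr x k j - yr x k i)
      ≤ gfun W x MMr k i + a * (1 - W i i) := by
    rw [husplit]
    have := hZpart
    have := hNpart
    nlinarith [ha0]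
  have hx' : x (k+1) i = x k i + ∑ j, W i j * (yr x k j - yr x k i) := hg.upd k i
  have hgap4 := hg.gap4 i
  have hgp := hg.gpos
  -- case on a = 0 or a ≥ 1
  have hfl : ⌊x k i⌋ ≤ MM - 1 := by
    have h2 : yr x k i ≤ MMr - 1 := hyout
    unfold yr at h2
    rw [hMMr] at h2
    have : ((⌊x k i⌋ : ℤ) : ℝ) ≤ ((MM - 1 : ℤ) : ℝ) := by push_cast at h2 ⊢; linarith
    exact_mod_cast this
  rcases (by omega : ⌊x k i⌋ = MM - 1 ∨ ⌊x k i⌋ ≤ MM - 2) with h | h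
  · -- a = 0
    have haz : a = 0 := by
      rw [ha]
      unfold yr
      rw [h, hMMr]
      push_cast
      ring
    unfold th
    rw [haz] at hubound
    linarith
  · -- a ≥ 1
    have ha1 : 1 ≤ a := by
      rw [ha]
      unfold yr
      rw [hMMr]
      have : ((⌊x k i⌋ : ℤ) : ℝ) ≤ ((MM - 2 : ℤ) : ℝ) := by exact_mod_cast h
      push_cast at this ⊢
      linarith
    have hxup : x k i ≤ (MMr - 1 - a) + 1 - 2 * γ := by
      have hc3 := hg.gap3 k i
      rw [ha]
      linarith
    unfold th
    have hkey : W i i * (a + 1) ≥ 1 + 4 * γ := by nlinarith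
    nlinarith

/-- member/leaver landing bound -/
lemma member_bound (hn : 0 < n) {k1 p : ℕ} (hp : 0 < p)
    (hper : ∀ k, k1 ≤ k → x (k + p) = x k) {MM : ℤ} (hMMdef : MM = Mfun hn x k1)
    {k : ℕ} (hk : k1 ≤ k) {j : Fin n} (hj : j ∈ Zs W x ((MM : ℤ) : ℝ) k) :
    ((MM : ℤ) : ℝ) - 1 + W j j - hfun W x ((MM : ℤ) : ℝ) k j ≤ x (k + 1) j := by
  set MMr : ℝ := ((MM : ℤ) : ℝ) with hMMr
  set S := Zs W x MMr k with hS
  have hx' := hg.xsucc k j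
  have hsplit : ∑ l, W j l * yr x k l
      = (∑ l ∈ S, W j l * yr x k l) + (∑ l ∈ Sᶜ, W j l * yr x k l) := by
    rw [Finset.sum_add_sum_compl]
  have hScpart : ∑ l ∈ Sᶜ, W j l * yr x k l
      = (∑ l ∈ Sᶜ, W j l) * (MMr - 1) - hfun W x MMr k j := by
    unfold hfun
    rw [← hS, Finset.sum_mul, ← Finset.sum_sub_distrib]
    refine Finset.sum_congr rfl fun l _ => ?_
    ring
  have hWsum : (∑ l ∈ S, W j l) + (∑ l ∈ Sᶜ, W j l) = 1 := by
    rw [Finset.sum_add_sum_compl]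
    exact hg.row j
  rcases hg.club_member_floor hn hp hper hMMdef hk (mem_Zs.1 hj) with h | h
  · -- floor MM - 1 : fractional part at least W j j
    have hyrj : yr x k j = MMr - 1 := by
      unfold yr; rw [h, hMMr]; push_cast; ring
    have hcw : W j j ≤ x k j - yr x k j := by
      have := mem_Zs.1 hj
      rw [hyrj]
      linarith
    have hSpart : (∑ l ∈ S, W j l) * (MMr - 1) ≤ ∑ l ∈ S, W j l * yr x k l := by
      rw [Finset.sum_mul]
      refine Finset.sum_le_sum fun l hl => ?_
      exact mul_le_mul_of_nonneg_left (hg.club_member_yr hn hp hper hMMdef hk hl).1 (hg.pos j l)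
    rw [hx', hsplit, hScpart]
    rw [hyrj] at hcw
    have hall : ((∑ l ∈ S, W j l) + (∑ l ∈ Sᶜ, W j l)) * (MMr - 1) = MMr - 1 := by
      rw [hWsum]; ring
    have hexp := add_mul (∑ l ∈ S, W j l) (∑ l ∈ Sᶜ, W j l) (MMr - 1)
    have hyeq : x k j - yr x k j = x k j - (MMr - 1) := by rw [hyrj]
    linarith
  · -- floor MM
    have hyrj : yr x k j = MMr := by
      unfold yr; rw [h, hMMr]
    have hc0 : 0 ≤ x k j - yr x k j := hg.c_nonneg k j
    have hjS : j ∈ S := hj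
    have hSpart : W j j * MMr + (∑ l ∈ S.erase j, W j l) * (MMr - 1)
        ≤ ∑ l ∈ S, W j l * yr x k l := by
      rw [← Finset.add_sum_erase _ _ hjS, hyrj]
      have : (∑ l ∈ S.erase j, W j l) * (MMr - 1) ≤ ∑ l ∈ S.erase j, W j l * yr x k l := by
        rw [Finset.sum_mul]
        refine Finset.sum_le_sum fun l hl => ?_
        exact mul_le_mul_of_nonneg_left
          (hg.club_member_yr hn hp hper hMMdef hk (Finset.mem_of_mem_erase hl)).1 (hg.pos j l)
      linarith
    have hWsum2 : W j j + (∑ l ∈ S.erase j, W j l) = ∑ l ∈ S, W j l :=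
      Finset.add_sum_erase _ _ hjS
    rw [hx', hsplit, hScpart]
    have hs : (∑ l ∈ S.erase j, W j l) + (∑ l ∈ Sᶜ, W j l) = 1 - W j j := by linarith
    have hall : W j j * MMr + ((∑ l ∈ S.erase j, W j l) + (∑ l ∈ Sᶜ, W j l)) * (MMr - 1)
        = MMr - 1 + W j j := by rw [hs]; ring
    have hexp := add_mul (∑ l ∈ S.erase j, W j l) (∑ l ∈ Sᶜ, W j l) (MMr - 1)
    have hyeq : x k j - yr x k j = x k j - MMr := by rw [hyrj]
    linarith
end Good

namespace Good

variable {n : ℕ} {G : SimpleGraph (Fin n)} {W : Matrix (Fin n) (Fin n) ℝ}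
  {x : ℕ → Fin n → ℝ} {γ : ℝ} (hg : Good n G W x γ)
include hg

lemma psi_step (hn : 0 < n) {k1 p : ℕ} (hp : 0 < p)
    (hper : ∀ k, k1 ≤ k → x (k + p) = x k) {MM : ℤ} (hMMdef : MM = Mfun hn x k1)
    {k : ℕ} (hk : k1 ≤ k) :
    Psi W x γ ((MM : ℤ) : ℝ) (k + 1) - Psi W x γ ((MM : ℤ) : ℝ) k
      ≤ -(γ * (((Zs W x ((MM : ℤ) : ℝ) (k+1) \ Zs W x ((MM : ℤ) : ℝ) k).card : ℝ)
             + ((Zs W x ((MM : ℤ) : ℝ) k \ Zs W x ((MM : ℤ) : ℝ) (k+1)).card : ℝ)))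
        - ((∑ i ∈ (Zs W x ((MM : ℤ) : ℝ) k)ᶜ, gfun W x ((MM : ℤ) : ℝ) k i)
            - ∑ i ∈ Zs W x ((MM : ℤ) : ℝ) (k+1) \ Zs W x ((MM : ℤ) : ℝ) k,
                gfun W x ((MM : ℤ) : ℝ) k i)
        - (Pool W x ((MM : ℤ) : ℝ) k
            - ∑ j ∈ Zs W x ((MM : ℤ) : ℝ) k \ Zs W x ((MM : ℤ) : ℝ) (k+1),
                hfun W x ((MM : ℤ) : ℝ) k j) := by
  set MMr : ℝ := ((MM : ℤ) : ℝ) with hMMr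
  set S := Zs W x MMr k with hSdef
  set S' := Zs W x MMr (k+1) with hS'def
  set f : Fin n → ℝ := fun i => x k i - th W γ MMr i with hf
  set f' : Fin n → ℝ := fun i => x (k+1) i - th W γ MMr i with hf'
  have hfu : ∀ i, f' i = f i + (∑ j, W i j * (yr x k j - yr x k i)) := by
    intro i
    rw [hf, hf']
    simp only
    rw [hg.upd k i]
    ring
  -- decomposition identity
  have h1 : (∑ i ∈ S' ∩ S, f' i) + ∑ i ∈ S' \ S, f' i = ∑ i ∈ S', f' i :=
    Finset.sum_inter_add_sum_sdiff S' S f'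
  have h2 : (∑ i ∈ S ∩ S', f' i) + ∑ i ∈ S \ S', f' i = ∑ i ∈ S, f' i :=
    Finset.sum_inter_add_sum_sdiff S S' f'
  have h3 : S' ∩ S = S ∩ S' := Finset.inter_comm S' S
  have h4 : ∑ i ∈ S, f' i
      = (∑ i ∈ S, f i) + ∑ i ∈ S, (∑ j, W i j * (yr x k j - yr x k i)) := by
    rw [← Finset.sum_add_distrib]
    exact Finset.sum_congr rfl fun i _ => hfu i
  have hdec : Psi W x γ MMr (k+1)
      = Psi W x γ MMr k + (∑ i ∈ S, (∑ j, W i j * (yr x k j - yr x k i)))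
        + (∑ i ∈ S' \ S, f' i) - ∑ i ∈ S \ S', f' i := by
    have hP' : Psi W x γ MMr (k+1) = ∑ i ∈ S', f' i := rfl
    have hP : Psi W x γ MMr k = ∑ i ∈ S, f i := rfl
    rw [hP', hP, ← h1, h3]
    linarith [h2, h4]
  -- bounds
  have hflux := hg.flux_identity (MMr := MMr) (k := k)
  have hentr : ∑ i ∈ S' \ S, f' i
      ≤ (∑ i ∈ S' \ S, gfun W x MMr k i) - γ * ((S' \ S).card : ℝ) := by
    have hb : ∀ i ∈ S' \ S, f' i ≤ gfun W x MMr k i - γ := by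
      intro i hi
      have hiout : i ∉ S := (Finset.mem_sdiff.1 hi).2
      exact hg.outsider_bound hn hp hper hMMdef hk hiout
    calc ∑ i ∈ S' \ S, f' i ≤ ∑ i ∈ S' \ S, (gfun W x MMr k i - γ) :=
          Finset.sum_le_sum hb
      _ = (∑ i ∈ S' \ S, gfun W x MMr k i) - γ * ((S' \ S).card : ℝ) := by
          rw [Finset.sum_sub_distrib, Finset.sum_const, nsmul_eq_mul]
          ring
  have hleav : -(∑ j ∈ S \ S', f' j)
      ≤ (∑ j ∈ S \ S', hfun W x MMr k j) - γ * ((S \ S').card : ℝ) := by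
    have hb : ∀ j ∈ S \ S', -(f' j) ≤ hfun W x MMr k j - γ := by
      intro j hj
      have hjin : j ∈ S := (Finset.mem_sdiff.1 hj).1
      have := hg.member_bound hn hp hper hMMdef hk hjin
      rw [hf']
      simp only
      unfold th
      linarith
    calc -(∑ j ∈ S \ S', f' j) = ∑ j ∈ S \ S', -(f' j) := by
          rw [Finset.sum_neg_distrib]
      _ ≤ ∑ j ∈ S \ S', (hfun W x MMr k j - γ) := Finset.sum_le_sum hb
      _ = (∑ j ∈ S \ S', hfun W x MMr k j) - γ * ((S \ S').card : ℝ) := by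
          rw [Finset.sum_sub_distrib, Finset.sum_const, nsmul_eq_mul]
          ring
  rw [hdec, hflux]
  linarith
end Good

namespace Good

variable {n : ℕ} {G : SimpleGraph (Fin n)} {W : Matrix (Fin n) (Fin n) ℝ}
  {x : ℕ → Fin n → ℝ} {γ : ℝ} (hg : Good n G W x γ)
include hg

lemma psi_flat (hn : 0 < n) {k1 p : ℕ} (hp : 0 < p)
    (hper : ∀ k, k1 ≤ k → x (k + p) = x k) {MM : ℤ} (hMMdef : MM = Mfun hn x k1) :
    ∀ k, k1 ≤ k →
      Zs W x ((MM : ℤ) : ℝ) (k+1) = Zs W x ((MM : ℤ) : ℝ) k ∧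
      (∀ i ∉ Zs W x ((MM : ℤ) : ℝ) k, gfun W x ((MM : ℤ) : ℝ) k i = 0) ∧
      (∀ i ∉ Zs W x ((MM : ℤ) : ℝ) k,
        (∑ j ∈ Zs W x ((MM : ℤ) : ℝ) k, W i j) * ((((MM : ℤ) : ℝ) - 1) - yr x k i) = 0) := by
  set MMr : ℝ := ((MM : ℤ) : ℝ) with hMMr
  -- component nonnegativity, for every k ≥ k1
  have hcomp : ∀ k, k1 ≤ k →
      0 ≤ (∑ i ∈ (Zs W x MMr k)ᶜ, gfun W x MMr k i)
            - ∑ i ∈ Zs W x MMr (k+1) \ Zs W x MMr k, gfun W x MMr k i := by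
    intro k hk
    have hsub : Zs W x MMr (k+1) \ Zs W x MMr k ⊆ (Zs W x MMr k)ᶜ := by
      intro i hi
      exact Finset.mem_compl.2 (Finset.mem_sdiff.1 hi).2
    have := Finset.sum_le_sum_of_subset_of_nonneg hsub
      (fun i _ _ => hg.gfun_nonneg hn hp hper hMMdef hk i)
    linarith
  have hcomp2 : ∀ k, k1 ≤ k →
      0 ≤ Pool W x MMr k - ∑ j ∈ Zs W x MMr k \ Zs W x MMr (k+1), hfun W x MMr k j := by
    intro k hk
    have hsub : Zs W x MMr k \ Zs W x MMr (k+1) ⊆ Zs W x MMr k := Finset.sdiff_subset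
    have h1 := Finset.sum_le_sum_of_subset_of_nonneg hsub
      (fun j _ _ => hg.hfun_nonneg hn hp hper hMMdef hk j)
    have h2 := hg.sum_h_eq_pool (MMr := MMr) k
    linarith
  have hD : ∀ k, k1 ≤ k → Psi W x γ MMr (k+1) - Psi W x γ MMr k ≤ 0 := by
    intro k hk
    have hstep := hg.psi_step hn hp hper hMMdef hk
    have h1 := hcomp k hk
    have h2 := hcomp2 k hk
    have hc1 : (0:ℝ) ≤ ((Zs W x MMr (k+1) \ Zs W x MMr k).card : ℝ) := Nat.cast_nonneg _
    have hc2 : (0:ℝ) ≤ ((Zs W x MMr k \ Zs W x MMr (k+1)).card : ℝ) := Nat.cast_nonneg _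
    have hgp := hg.gpos
    nlinarith
  -- telescoping over one period
  have htel : ∀ k, ∀ q : ℕ, ∑ t ∈ Finset.range q,
      (Psi W x γ MMr (k+t+1) - Psi W x γ MMr (k+t)) = Psi W x γ MMr (k+q) - Psi W x γ MMr k := by
    intro k q
    induction q with
    | zero => simp
    | succ q ih =>
      rw [Finset.sum_range_succ, ih]
      have : k + (q+1) = k + q + 1 := by ring
      rw [this]
      ring
  have hDzero : ∀ k, k1 ≤ k → Psi W x γ MMr (k+1) - Psi W x γ MMr k = 0 := by
    intro k hk
    have hsum : ∑ t ∈ Finset.range p,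
        (Psi W x γ MMr (k+t+1) - Psi W x γ MMr (k+t)) = 0 := by
      rw [htel k p, Psi_congr (hper k hk)]
      ring
    have hterms : ∀ t ∈ Finset.range p,
        Psi W x γ MMr (k+t+1) - Psi W x γ MMr (k+t) ≤ 0 :=
      fun t _ => hD (k+t) (by omega)
    have := (Finset.sum_eq_zero_iff_of_nonpos hterms).1 hsum 0 (Finset.mem_range.2 hp)
    simpa using this
  -- extraction
  intro k hk
  have hstep := hg.psi_step hn hp hper hMMdef hk
  rw [← hMMr] at hstep
  rw [hDzero k hk] at hstep
  have h1 := hcomp k hk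
  have h2 := hcomp2 k hk
  have hc1 : (0:ℝ) ≤ ((Zs W x MMr (k+1) \ Zs W x MMr k).card : ℝ) := Nat.cast_nonneg _
  have hc2 : (0:ℝ) ≤ ((Zs W x MMr k \ Zs W x MMr (k+1)).card : ℝ) := Nat.cast_nonneg _
  have hgp := hg.gpos
  have hcards : ((Zs W x MMr (k+1) \ Zs W x MMr k).card : ℝ)
      + ((Zs W x MMr k \ Zs W x MMr (k+1)).card : ℝ) = 0 := by nlinarith
  have hc1z : (Zs W x MMr (k+1) \ Zs W x MMr k) = ∅ := by
    rw [← Finset.card_eq_zero]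
    have : ((Zs W x MMr (k+1) \ Zs W x MMr k).card : ℝ) = 0 := by linarith
    exact_mod_cast this
  have hc2z : (Zs W x MMr k \ Zs W x MMr (k+1)) = ∅ := by
    rw [← Finset.card_eq_zero]
    have : ((Zs W x MMr k \ Zs W x MMr (k+1)).card : ℝ) = 0 := by linarith
    exact_mod_cast this
  have hZeq : Zs W x MMr (k+1) = Zs W x MMr k := by
    apply Finset.Subset.antisymm
    · exact Finset.sdiff_eq_empty_iff_subset.1 hc1z
    · exact Finset.sdiff_eq_empty_iff_subset.1 hc2z
  refine ⟨hZeq, ?_, ?_⟩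
  · -- gfun vanishes on outsiders
    have hX : (∑ i ∈ (Zs W x MMr k)ᶜ, gfun W x MMr k i)
        - ∑ i ∈ Zs W x MMr (k+1) \ Zs W x MMr k, gfun W x MMr k i = 0 := by
      rw [hc1z] at hstep ⊢
      rw [hc2z] at hstep
      simp only [Finset.sum_empty, Finset.card_empty] at hstep ⊢
      have h2' := hcomp2 k hk
      rw [hc2z] at h2'
      simp only [Finset.sum_empty] at h2'
      have h1' := hcomp k hk
      rw [hc1z] at h1'
      simp only [Finset.sum_empty] at h1'
      push_cast at hstep
      linarith
    rw [hc1z, Finset.sum_empty, sub_zero] at hX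
    intro i hi
    exact (Finset.sum_eq_zero_iff_of_nonneg
      (fun i _ => hg.gfun_nonneg hn hp hper hMMdef hk i)).1 hX i (Finset.mem_compl.2 hi)
  · -- pool vanishes
    have hY : Pool W x MMr k = 0 := by
      rw [hc1z, hc2z] at hstep
      simp only [Finset.sum_empty, Finset.card_empty] at hstep
      have h1' := hcomp k hk
      rw [hc1z] at h1'
      simp only [Finset.sum_empty] at h1'
      have h2' := hcomp2 k hk
      rw [hc2z] at h2'
      simp only [Finset.sum_empty] at h2'
      push_cast at hstep
      linarith
    intro i hi
    have hterm : ∀ i ∈ (Zs W x MMr k)ᶜ,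
        0 ≤ (∑ j ∈ Zs W x MMr k, W i j) * ((MMr - 1) - yr x k i) := by
      intro i hi'
      apply mul_nonneg (Finset.sum_nonneg fun j _ => hg.pos i j)
      have := (hg.club_out_yr hn hp hper hMMdef hk (Finset.mem_compl.1 hi')).1
      linarith
    exact (Finset.sum_eq_zero_iff_of_nonneg hterm).1 hY i (Finset.mem_compl.2 hi)
end Good

namespace Good

variable {n : ℕ} {G : SimpleGraph (Fin n)} {W : Matrix (Fin n) (Fin n) ℝ}
  {x : ℕ → Fin n → ℝ} {γ : ℝ} (hg : Good n G W x γ)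
include hg

lemma no_two_gap (hn : 0 < n) {k1 p : ℕ} (hp : 0 < p)
    (hper : ∀ k, k1 ≤ k → x (k + p) = x k)
    (hgap : mfun hn x k1 + 2 ≤ Mfun hn x k1) : False := by
  set MM : ℤ := Mfun hn x k1 with hMMdef'
  have hMMdef : MM = Mfun hn x k1 := rfl
  set MMr : ℝ := ((MM : ℤ) : ℝ) with hMMr
  have hflat := hg.psi_flat hn hp hper hMMdef
  have hZconst : ∀ k, k1 ≤ k → Zs W x MMr k = Zs W x MMr k1 := by
    intro k hk
    induction k, hk using Nat.le_induction with
    | base => rfl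
    | succ k hk ih => rw [(hflat k hk).1, ih]
  by_cases hZuniv : Zs W x MMr k1 = univ
  · obtain ⟨iw, hiw⟩ := exists_mfun (x := x) hn k1
    have hiwZ : iw ∈ Zs W x MMr k1 := hZuniv ▸ mem_univ iw
    have hxge := mem_Zs.1 hiwZ
    have hfl : MM - 1 ≤ ⌊x k1 iw⌋ := by
      apply Int.le_floor.2
      have := hg.wpos iw
      push_cast
      linarith
    omega
  have hex : ∃ i1, i1 ∉ Zs W x MMr k1 := by
    by_contra hcon
    push_neg at hcon
    exact hZuniv (Finset.eq_univ_iff_forall.2 hcon)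
  obtain ⟨i1, hi1⟩ := hex
  set P : Fin n → Prop := fun i => ∀ k, k1 ≤ k → ⌊x k i⌋ ≤ MM - 1 with hP
  have hout : ∀ i, i ∉ Zs W x MMr k1 → P i := by
    intro i hi k hk
    have hiZk : i ∉ Zs W x MMr k := by rw [hZconst k hk]; exact hi
    have h1 := (hg.club_out_yr hn hp hper hMMdef hk hiZk).1
    unfold yr at h1
    have h2 : ((⌊x k i⌋ : ℤ) : ℝ) ≤ ((MM - 1 : ℤ) : ℝ) := by push_cast; linarith
    exact_mod_cast h2
  have hcl : ∀ i j, G.Adj i j → P i → P j := by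
    intro i j hadj hPi
    by_cases hjZ : j ∈ Zs W x MMr k1
    · by_cases hiZ : i ∈ Zs W x MMr k1
      · -- member i, pinned at MM-1, monotone fractional part
        have hyri : ∀ k, k1 ≤ k → yr x k i = MMr - 1 := by
          intro k hk
          have hiZk : i ∈ Zs W x MMr k := by rw [hZconst k hk]; exact hiZ
          rcases hg.club_member_floor hn hp hper hMMdef hk (mem_Zs.1 hiZk) with h | h
          · unfold yr; rw [h]; push_cast; ring
          · exfalso
            have := hPi k hk
            omega
        have hunn : ∀ k, k1 ≤ k → ∀ l, 0 ≤ W i l * (yr x k l - yr x k i) := by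
          intro k hk l
          by_cases hlZ : l ∈ Zs W x MMr k
          · apply mul_nonneg (hg.pos i l)
            have := (hg.club_member_yr hn hp hper hMMdef hk hlZ).1
            rw [hyri k hk]
            linarith
          · rcases eq_or_lt_of_le (hg.pos i l) with h | h
            · rw [← h]; ring_nf; exact le_refl _
            · have hiZk : i ∈ Zs W x MMr k := by rw [hZconst k hk]; exact hiZ
              have hpool := (hflat k hk).2.2 l hlZ
              have hsumpos : 0 < ∑ j' ∈ Zs W x MMr k, W l j' := by
                have hle : W l i ≤ ∑ j' ∈ Zs W x MMr k, W l j' :=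
                  Finset.single_le_sum (fun j' _ => hg.pos l j') hiZk
                rw [hg.sym l i] at hle
                linarith
              have hyl : yr x k l = MMr - 1 := by
                rcases mul_eq_zero.1 hpool with h' | h'
                · exact absurd h' hsumpos.ne'
                · linarith
              rw [hyl, hyri k hk]
              simp
        have hzero := pinned_of_periodic hp
          (c := fun k => x k i)
          (u := fun k => ∑ l, W i l * (yr x k l - yr x k i))
          (fun k hk => hg.upd k i)
          (fun k hk => Finset.sum_nonneg fun l _ => hunn k hk l)
          (fun k hk => by show x (k+p) i = x k i; rw [hper k hk])
        intro k hk
        have hz := hzero k hk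
        have hterm := (Finset.sum_eq_zero_iff_of_nonneg
          (fun l _ => hunn k hk l)).1 hz j (mem_univ j)
        have hwij : 0 < W i j := hg.edge i j hadj
        have hyj : yr x k j = yr x k i := by
          rcases mul_eq_zero.1 hterm with h | h
          · exact absurd h hwij.ne'
          · linarith
        rw [hyri k hk] at hyj
        unfold yr at hyj
        have h2 : ((⌊x k j⌋ : ℤ) : ℝ) = ((MM - 1 : ℤ) : ℝ) := by push_cast; linarith
        have h3 : ⌊x k j⌋ = MM - 1 := by exact_mod_cast h2
        omega
      · -- outsider i adjacent to member j : gfun forces j at MM-1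
        intro k hk
        have hiZk : i ∉ Zs W x MMr k := by rw [hZconst k hk]; exact hiZ
        have hjZk : j ∈ Zs W x MMr k := by rw [hZconst k hk]; exact hjZ
        have hg0 := (hflat k hk).2.1 i hiZk
        have hterm := (Finset.sum_eq_zero_iff_of_nonneg
          (fun l hl => mul_nonneg (hg.pos i l)
            (by linarith [(hg.club_member_yr hn hp hper hMMdef hk hl).1]))).1 hg0 j hjZk
        have hwij : 0 < W i j := hg.edge i j hadj
        have hyj : yr x k j = MMr - 1 := by
          rcases mul_eq_zero.1 hterm with h | h
          · exact absurd h hwij.ne'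
          · linarith
        unfold yr at hyj
        have h2 : ((⌊x k j⌋ : ℤ) : ℝ) = ((MM - 1 : ℤ) : ℝ) := by push_cast; linarith
        have h3 : ⌊x k j⌋ = MM - 1 := by exact_mod_cast h2
        omega
    · exact hout j hjZ
  have hallP : ∀ i, P i := propagate hg.conn P hcl (hout i1 hi1)
  obtain ⟨iw, hiw⟩ := exists_Mfun (x := x) hn k1
  have := hallP iw k1 (le_refl _)
  omega
end Good

/-- build the working context from the original hypotheses -/
lemma build_good {n : ℕ} {G : SimpleGraph (Fin n)} {W : Matrix (Fin n) (Fin n) ℝ}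
    {x : ℕ → Fin n → ℝ} {γ : ℝ} (hn : 1 < n) (hG : G.Connected)
    (hW : Assumption1 G W) (hx : Traj W x) (hγ : GammaSetup W x γ) :
    Good n G W x γ := by
  classical
  obtain ⟨hsym, hpos, hrow, hdiag, hsupp, hedge⟩ := hW
  have hoff : ∀ i j : Fin n, i ≠ j → ∃ q : ℚ, (q : ℝ) = W i j := by
    intro i j hne
    by_cases hadj : G.Adj i j
    · exact (hedge i j hadj).1
    · exact ⟨0, by rw [hsupp i j hne hadj]; simp⟩
  refine ⟨hn, hG, hsym, hpos, hrow, (fun i j hadj => (hedge i j hadj).2.1),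
    hsupp, ?_, ?_, hγ.1, ?_, ?_, ?_, ?_⟩
  · -- rationality, including diagonal
    intro i j
    by_cases hij : i = j
    · subst hij
      set f : Fin n → ℚ := fun j => if h : i = j then 0 else Classical.choose (hoff i j h)
        with hf
      have hfspec : ∀ j ∈ univ.erase i, (f j : ℝ) = W i j := by
        intro j hj
        have hne : i ≠ j := fun h => (Finset.mem_erase.1 hj).1 h.symm
        rw [hf]
        simp only [dif_neg hne]
        exact Classical.choose_spec (hoff i j hne)
      refine ⟨1 - ∑ j ∈ univ.erase i, f j, ?_⟩
      have hsum : ((∑ j ∈ univ.erase i, f j : ℚ) : ℝ) = ∑ j ∈ univ.erase i, W i j := by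
        push_cast
        exact Finset.sum_congr rfl hfspec
      have hWii : W i i + ∑ j ∈ univ.erase i, W i j = 1 := by
        rw [← hrow i, ← Finset.add_sum_erase _ _ (mem_univ i)]
      have hsum2 : ∑ j ∈ univ.erase i, ((f j : ℚ) : ℝ) = ∑ j ∈ univ.erase i, W i j :=
        Finset.sum_congr rfl hfspec
      push_cast
      linarith
    · exact hoff i j hij
  · exact update hrow hx
  · intro k i h
    have := (hγ.2 i k).1 h
    unfold yr
    linarith
  · intro k i h
    have h2 : 1 - (x k i - (⌊x k i⌋ : ℝ)) > 1 - W i i := by unfold yr at h; linarith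
    have := (hγ.2 i k).2.1 h2
    unfold yr
    linarith
  · intro k i
    have := (hγ.2 i k).2.2.1
    unfold yr
    linarith
  · intro i
    have := (hγ.2 i 0).2.2.2
    linarith

end P3

/-- Proposition 3: in finite time either `X3 ∪ X4 ∪ X5 ∪ X6 = ∅` (all nodes in `X1 ∪ X2`)
or `X1 ∪ X4 ∪ X5 ∪ X6 = ∅` (all nodes in `X2 ∪ X3`). -/
theorem X1_or_X3_empty {n : ℕ} (hn : 1 < n)
    (G : SimpleGraph (Fin n)) (hG : G.Connected)
    (W : Matrix (Fin n) (Fin n) ℝ) (hW : Assumption1 G W)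
    (x : ℕ → Fin n → ℝ) (hx : Traj W x)
    (γ : ℝ) (hγ : GammaSetup W x γ) :
    ∃ K : ℕ, ∀ k, K ≤ k →
      (∀ i, x k i < (mfun (Nat.zero_lt_one.trans hn) x k : ℝ) + 1) ∨
      (∀ i, (mfun (Nat.zero_lt_one.trans hn) x k : ℝ) + 1 - alpha W γ i ≤ x k i ∧
        x k i ≤ (mfun (Nat.zero_lt_one.trans hn) x k : ℝ) + 1 + alpha W γ i) := by
  have hg : P3.Good n G W x γ := P3.build_good hn hG hW hx hγ
  set hn0 : 0 < n := Nat.zero_lt_one.trans hn with hhn0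
  obtain ⟨k1, p, hp, hper⟩ := hg.exists_period hn0
  refine ⟨k1, fun k hk => ?_⟩
  have hmc := hg.mfun_const hn0 hp hper k hk
  have hMc := hg.Mfun_const hn0 hp hper k hk
  have hmM : mfun hn0 x k1 ≤ Mfun hn0 x k1 := P3.mfun_le_Mfun hn0 k1
  rcases (by omega : Mfun hn0 x k1 = mfun hn0 x k1 ∨ Mfun hn0 x k1 = mfun hn0 x k1 + 1 ∨
      mfun hn0 x k1 + 2 ≤ Mfun hn0 x k1) with hc | hc | hc
  · -- all floors equal : case (a)
    left
    intro i
    have h1 : x k i < (P3.yr x k i) + 1 := P3.lt_yr_add_one k i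
    have h2 : P3.yr x k i ≤ ((Mfun hn0 x k : ℤ) : ℝ) := P3.yr_le_Mr hn0 k i
    have h3 : ((Mfun hn0 x k : ℤ) : ℝ) = ((mfun hn0 x k : ℤ) : ℝ) := by
      rw [hMc, hmc, hc]
    linarith
  · -- spread one : case (b)
    right
    intro i
    have hMm : mfun hn0 x k1 < Mfun hn0 x k1 := by omega
    have hlow := hg.B1_empty hn0 hp hper hMm k hk i
    have hhigh := hg.T4_empty hn0 hp hper hMm k hk i
    have hcast : ((Mfun hn0 x k1 : ℤ) : ℝ) = ((mfun hn0 x k1 : ℤ) : ℝ) + 1 := by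
      rw [hc]; push_cast; ring
    have hmeq : ((mfun hn0 x k : ℤ) : ℝ) = ((mfun hn0 x k1 : ℤ) : ℝ) := by
      exact_mod_cast congrArg (fun z : ℤ => (z : ℝ)) hmc
    unfold alpha
    constructor
    · rw [hmeq]; linarith
    · rw [hmeq]; linarith
  · exact absurd (hg.no_two_gap hn0 hp hper hc) (fun h => h)
end

section
/- Proposition 4 (main convergence result): under Assumption 1 and the γ/α setup, let α = max_i α_i. For every initial vector x(0) ∈ ℝ^n there exists a finite time K such that for all k ≥ K, either (a) the values cycle in a small neighborhood of the average: |x_i(k) − x_j(k)| ≤ α_i + α_j for all agents i, j, and |x_i(k) − x_ave| ≤ 2α for every agent i; or (b) quantized consensus is reached: ⌊x_i(k)⌋ = ⌊x_j(k)⌋ for all agents i, j, and |x_i(k) − x_ave| < 1 for every agent i. -/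
open Finset Filter

namespace QCAux


/-- A monotone (nonincreasing) eventually-periodic sequence is eventually constant. -/
lemma mono_per_const {α : Type*} [PartialOrder α] {g : ℕ → α} {k1 p : ℕ} (hp : 0 < p)
    (hmono : ∀ k, k1 ≤ k → g (k+1) ≤ g k) (hper : ∀ k, k1 ≤ k → g (k+p) = g k) :
    ∀ k, k1 ≤ k → g (k+1) = g k := by
  have hchain : ∀ a, k1 ≤ a → ∀ b, a ≤ b → g b ≤ g a := by
    intro a ha b hb
    induction b, hb using Nat.le_induction with
    | base => exact le_rfl
    | succ b hb ih => exact (hmono b (le_trans ha hb)).trans ih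
  intro k hk
  have h1 : g (k+p) ≤ g (k+1) := hchain (k+1) (by omega) (k+p) (by omega)
  have h2 : g (k+1) ≤ g k := hmono k hk
  have h3 : g (k+p) = g k := hper k hk
  exact le_antisymm h2 (h3 ▸ h1)

/-- Nondecreasing version. -/
lemma mono_per_const' {α : Type*} [PartialOrder α] {g : ℕ → α} {k1 p : ℕ} (hp : 0 < p)
    (hmono : ∀ k, k1 ≤ k → g k ≤ g (k+1)) (hper : ∀ k, k1 ≤ k → g (k+p) = g k) :
    ∀ k, k1 ≤ k → g (k+1) = g k := by
  have hchain : ∀ a, k1 ≤ a → ∀ b, a ≤ b → g a ≤ g b := by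
    intro a ha b hb
    induction b, hb using Nat.le_induction with
    | base => exact le_rfl
    | succ b hb ih => exact ih.trans (hmono b (le_trans ha hb))
  intro k hk
  have h1 : g (k+1) ≤ g (k+p) := hchain (k+1) (by omega) (k+p) (by omega)
  have h2 : g k ≤ g (k+1) := hmono k hk
  have h3 : g (k+p) = g k := hper k hk
  exact le_antisymm (h3 ▸ h1) h2

/-- A monotone eventually-periodic predicate is eventually constant. -/
lemma mono_per_prop {q : ℕ → Prop} {k1 p : ℕ} (hp : 0 < p)
    (hmono : ∀ k, k1 ≤ k → q k → q (k+1)) (hper : ∀ k, k1 ≤ k → (q (k+p) ↔ q k)) :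
    ∀ k k', k1 ≤ k → k1 ≤ k' → q k → q k' := by
  have hfwd : ∀ a, k1 ≤ a → q a → ∀ b, a ≤ b → q b := by
    intro a ha hqa b hb
    induction b, hb using Nat.le_induction with
    | base => exact hqa
    | succ b hb ih => exact hmono b (le_trans ha hb) ih
  have hpert : ∀ t k, k1 ≤ k → (q (k + t*p) ↔ q k) := by
    intro t
    induction t with
    | zero => intro k hk; simp
    | succ t ih =>
      intro k hk
      have h1 : k + (t+1)*p = (k + t*p) + p := by ring
      rw [h1, hper (k + t*p) (by omega)]
      exact ih k hk
  intro k k' hk hk' hq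
  have h1 : q (k' + k*p) := hfwd k hk hq (k' + k*p) (by nlinarith [Nat.one_le_iff_ne_zero.mpr (Nat.pos_iff_ne_zero.mp hp)])
  exact (hpert k k' hk').mp h1

/-- Connectivity propagation: a nonempty set closed under adjacency is everything. -/
lemma conn_closure {n : ℕ} {G : SimpleGraph (Fin n)} (hG : G.Connected)
    (S : Set (Fin n)) (hcl : ∀ a ∈ S, ∀ b, G.Adj a b → b ∈ S)
    {i₀ : Fin n} (h₀ : i₀ ∈ S) : ∀ v, v ∈ S := by
  intro v
  obtain ⟨w⟩ := hG.preconnected i₀ v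
  clear hG
  induction w with
  | nil => exact h₀
  | cons h p ih => exact ih (hcl _ h₀ _ h)

/-- Every vertex of a connected graph on ≥ 2 vertices has a neighbor. -/
lemma exists_adj {n : ℕ} (hn : 1 < n) {G : SimpleGraph (Fin n)} (hG : G.Connected)
    (i : Fin n) : ∃ j, G.Adj i j := by
  have : ∃ j : Fin n, j ≠ i := by
    rcases Decidable.eq_or_ne (⟨0, by omega⟩ : Fin n) i with h | h
    · exact ⟨⟨1, by omega⟩, by rw [← h]; simp [Fin.ext_iff]⟩
    · exact ⟨⟨0, by omega⟩, h⟩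
  obtain ⟨j, hj⟩ := this
  obtain ⟨w⟩ := hG.preconnected i j
  cases w with
  | nil => exact absurd rfl hj.symm
  | cons h p => exact ⟨_, h⟩


variable {n : ℕ}

/-- integer flow quantity from `j` credited to `i` at base level `mm+1`. -/
noncomputable def phiR (u : Fin n → ℝ) (mm : ℤ) (i j : Fin n) : ℝ :=
  ((max (min (⌊u j⌋ - ⌊u i⌋) (⌊u j⌋ - mm - 1)) 0 : ℤ) : ℝ)

noncomputable def INF (W : Matrix (Fin n) (Fin n) ℝ) (u : Fin n → ℝ) (mm : ℤ) (i : Fin n) : ℝ :=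
  ∑ j, W i j * phiR u mm i j

noncomputable def OUTF (W : Matrix (Fin n) (Fin n) ℝ) (u : Fin n → ℝ) (mm : ℤ) (i : Fin n) : ℝ :=
  ∑ j, W i j * phiR u mm j i

lemma phiR_nonneg (u : Fin n → ℝ) (mm : ℤ) (i j : Fin n) : 0 ≤ phiR u mm i j := by
  unfold phiR; exact_mod_cast le_max_right _ _

lemma phiR_self (u : Fin n → ℝ) (mm : ℤ) (i : Fin n) : phiR u mm i i = 0 := by
  have h : max (min (⌊u i⌋ - ⌊u i⌋) (⌊u i⌋ - mm - 1)) 0 = (0:ℤ) := by omega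
  simp [phiR, h]

lemma INF_nonneg (W : Matrix (Fin n) (Fin n) ℝ) (hnn : ∀ i j, 0 ≤ W i j)
    (u : Fin n → ℝ) (mm : ℤ) (i : Fin n) : 0 ≤ INF W u mm i :=
  Finset.sum_nonneg fun j _ => mul_nonneg (hnn i j) (phiR_nonneg u mm i j)

lemma OUTF_nonneg (W : Matrix (Fin n) (Fin n) ℝ) (hnn : ∀ i j, 0 ≤ W i j)
    (u : Fin n → ℝ) (mm : ℤ) (i : Fin n) : 0 ≤ OUTF W u mm i :=
  Finset.sum_nonneg fun j _ => mul_nonneg (hnn i j) (phiR_nonneg u mm j i)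

lemma pairing (W : Matrix (Fin n) (Fin n) ℝ) (hsym : ∀ i j, W i j = W j i)
    (u : Fin n → ℝ) (mm : ℤ) :
    ∑ i, INF W u mm i = ∑ i, OUTF W u mm i := by
  unfold INF OUTF
  calc ∑ i, ∑ j, W i j * phiR u mm i j
      = ∑ i, ∑ j, W j i * phiR u mm j i := Finset.sum_comm
    _ = ∑ i, ∑ j, W i j * phiR u mm j i :=
        Finset.sum_congr rfl fun i _ => Finset.sum_congr rfl fun j _ => by rw [hsym i j]

/-- `OUTF` vanishes at floor `≤ mm+1`. -/
lemma OUTF_eq_zero (W : Matrix (Fin n) (Fin n) ℝ) (u : Fin n → ℝ) (mm : ℤ)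
    (i : Fin n) (hfi : ⌊u i⌋ ≤ mm + 1) : OUTF W u mm i = 0 := by
  apply Finset.sum_eq_zero
  intro j _
  have h : max (min (⌊u i⌋ - ⌊u j⌋) (⌊u i⌋ - mm - 1)) 0 = (0:ℤ) := by omega
  simp [phiR, h]

/-- At a floor-`mm` node, `phiR i j = (f_j - mm - 1)⁺`; key bound for the new value. -/
lemma node_m_bound (W : Matrix (Fin n) (Fin n) ℝ) (hnn : ∀ i j, 0 ≤ W i j)
    (hrow : ∀ i, ∑ j, W i j = 1)
    (u v : Fin n → ℝ) (hstep : ∀ i, v i = u i + ∑ j, W i j * ((⌊u j⌋ : ℝ) - (⌊u i⌋ : ℝ)))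
    (mm : ℤ) (hfl : ∀ j, mm ≤ ⌊u j⌋) (i : Fin n) (hfi : ⌊u i⌋ = mm) :
    v i - ((mm : ℝ) + 2 - W i i) ≤ (u i - (⌊u i⌋ : ℝ)) - 1 + INF W u mm i := by
  have key : ∑ j, W i j * ((⌊u j⌋ : ℝ) - (⌊u i⌋ : ℝ)) ≤ (1 - W i i) + INF W u mm i := by
    have hsplit : ∑ j, W i j * ((⌊u j⌋ : ℝ) - (⌊u i⌋ : ℝ))
        = ∑ j ∈ univ.erase i, W i j * ((⌊u j⌋ : ℝ) - (⌊u i⌋ : ℝ)) := by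
      rw [← Finset.sum_erase_add _ _ (mem_univ i)]
      simp
    have hIN : INF W u mm i = ∑ j ∈ univ.erase i, W i j * phiR u mm i j := by
      unfold INF
      rw [← Finset.sum_erase_add _ _ (mem_univ i), phiR_self]
      simp
    have hrow' : ∑ j ∈ univ.erase i, W i j = 1 - W i i := by
      have := hrow i
      rw [← Finset.sum_erase_add _ _ (mem_univ i)] at this
      linarith
    rw [hsplit, hIN, ← hrow']
    rw [← Finset.sum_add_distrib]
    apply Finset.sum_le_sum
    intro j _
    have hj := hfl j
    have hint : (⌊u j⌋ - ⌊u i⌋ : ℤ) ≤ 1 + max (min (⌊u j⌋ - ⌊u i⌋) (⌊u j⌋ - mm - 1)) 0 := by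
      omega
    have hcast : ((⌊u j⌋ : ℝ) - (⌊u i⌋ : ℝ)) ≤ 1 + phiR u mm i j := by
      unfold phiR; exact_mod_cast hint
    calc W i j * ((⌊u j⌋ : ℝ) - (⌊u i⌋ : ℝ)) ≤ W i j * (1 + phiR u mm i j) :=
          mul_le_mul_of_nonneg_left hcast (hnn i j)
      _ = W i j + W i j * phiR u mm i j := by ring
  have h1 := hstep i
  have h2 : (⌊u i⌋ : ℝ) = (mm : ℝ) := by exact_mod_cast congrArg Int.cast hfi
  rw [h1]
  linarith

/-- Key per-node flow bound at floors `≥ mm+1`. -/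
lemma node_flow_bound (W : Matrix (Fin n) (Fin n) ℝ) (hnn : ∀ i j, 0 ≤ W i j)
    (u : Fin n → ℝ) (mm : ℤ) (hfl : ∀ j, mm ≤ ⌊u j⌋) (i : Fin n) (hfi : mm + 1 ≤ ⌊u i⌋) :
    ∑ j, W i j * ((⌊u j⌋ : ℝ) - (⌊u i⌋ : ℝ)) ≤ INF W u mm i - OUTF W u mm i := by
  unfold INF OUTF
  rw [← Finset.sum_sub_distrib]
  apply Finset.sum_le_sum
  intro j _
  have hj := hfl j
  have hint : (⌊u j⌋ - ⌊u i⌋ : ℤ) ≤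
      max (min (⌊u j⌋ - ⌊u i⌋) (⌊u j⌋ - mm - 1)) 0
      - max (min (⌊u i⌋ - ⌊u j⌋) (⌊u i⌋ - mm - 1)) 0 := by omega
  have hcast : ((⌊u j⌋ : ℝ) - (⌊u i⌋ : ℝ)) ≤ phiR u mm i j - phiR u mm j i := by
    unfold phiR; exact_mod_cast hint
  calc W i j * ((⌊u j⌋ : ℝ) - (⌊u i⌋ : ℝ)) ≤ W i j * (phiR u mm i j - phiR u mm j i) :=
        mul_le_mul_of_nonneg_left hcast (hnn i j)
    _ = W i j * phiR u mm i j - W i j * phiR u mm j i := by ring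

/-- At floors `≥ mm+2`, the excess covers the outflow with margin `2 w_ii - 1`. -/
lemma node_high (W : Matrix (Fin n) (Fin n) ℝ) (hnn : ∀ i j, 0 ≤ W i j)
    (hrow : ∀ i, ∑ j, W i j = 1)
    (u : Fin n → ℝ) (mm : ℤ) (i : Fin n) (hfi : mm + 2 ≤ ⌊u i⌋) :
    2 * W i i - 1 ≤ (u i - ((mm : ℝ) + 2 - W i i)) - OUTF W u mm i := by
  have hOUT : OUTF W u mm i ≤ (1 - W i i) * ((⌊u i⌋ : ℝ) - (mm : ℝ) - 1) := by
    have hrow' : ∑ j ∈ univ.erase i, W i j = 1 - W i i := by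
      have := hrow i
      rw [← Finset.sum_erase_add _ _ (mem_univ i)] at this
      linarith
    have hOsplit : OUTF W u mm i = ∑ j ∈ univ.erase i, W i j * phiR u mm j i := by
      unfold OUTF
      rw [← Finset.sum_erase_add _ _ (mem_univ i), phiR_self]
      simp
    rw [hOsplit, ← hrow', Finset.sum_mul]
    apply Finset.sum_le_sum
    intro j _
    have hint : max (min (⌊u i⌋ - ⌊u j⌋) (⌊u i⌋ - mm - 1)) 0 ≤ ⌊u i⌋ - mm - 1 := by omega
    have hcast : phiR u mm j i ≤ ((⌊u i⌋ : ℝ) - (mm : ℝ) - 1) := by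
      unfold phiR
      have : ((max (min (⌊u i⌋ - ⌊u j⌋) (⌊u i⌋ - mm - 1)) 0 : ℤ) : ℝ)
          ≤ ((⌊u i⌋ - mm - 1 : ℤ) : ℝ) := by exact_mod_cast hint
      push_cast at this ⊢
      linarith
    exact mul_le_mul_of_nonneg_left hcast (hnn i j)
  have hfx : ((⌊u i⌋ : ℝ)) ≤ u i := Int.floor_le _
  have hfi' : ((mm : ℝ) + 2) ≤ ((⌊u i⌋ : ℝ)) := by exact_mod_cast hfi
  set t : ℝ := ((⌊u i⌋ : ℝ) - (mm : ℝ) - 1) with ht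
  have ht1 : 1 ≤ t := by simp only [ht]; linarith
  have hw : 0 ≤ W i i := hnn i i
  nlinarith [hOUT]

noncomputable def thetaF (W : Matrix (Fin n) (Fin n) ℝ) (mm : ℤ) (i : Fin n) : ℝ :=
  (mm : ℝ) + 2 - W i i

noncomputable def eF (W : Matrix (Fin n) (Fin n) ℝ) (mm : ℤ) (u : Fin n → ℝ) (i : Fin n) : ℝ :=
  max (u i - thetaF W mm i) 0

lemma eF_nonneg (W : Matrix (Fin n) (Fin n) ℝ) (mm : ℤ) (u : Fin n → ℝ) (i : Fin n) :
    0 ≤ eF W mm u i := le_max_right _ _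

lemma sub_le_eF (W : Matrix (Fin n) (Fin n) ℝ) (mm : ℤ) (u : Fin n → ℝ) (i : Fin n) :
    u i - thetaF W mm i ≤ eF W mm u i := le_max_left _ _

/-- The main per-node inequality (NODE). -/
lemma node_ineq (W : Matrix (Fin n) (Fin n) ℝ) (hsym : ∀ i j, W i j = W j i)
    (hnn : ∀ i j, 0 ≤ W i j) (hrow : ∀ i, ∑ j, W i j = 1) (hdiag : ∀ i, 1/2 < W i i)
    (hle1 : ∀ i, W i i ≤ 1)
    (u v : Fin n → ℝ) (hstep : ∀ i, v i = u i + ∑ j, W i j * ((⌊u j⌋ : ℝ) - (⌊u i⌋ : ℝ)))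
    (mm : ℤ) (hfl : ∀ j, mm ≤ ⌊u j⌋) (i : Fin n) :
    eF W mm v i ≤ eF W mm u i + INF W u mm i - OUTF W u mm i := by
  have hIN := INF_nonneg W hnn u mm i
  have hOUTnn := OUTF_nonneg W hnn u mm i
  have he0 := eF_nonneg W mm u i
  rcases eq_or_lt_of_le (hfl i) with hfi | hfi
  · -- floor = mm
    have hfi' : ⌊u i⌋ = mm := hfi.symm
    have hO : OUTF W u mm i = 0 := OUTF_eq_zero W u mm i (by omega)
    have hb := node_m_bound W hnn hrow u v hstep mm hfl i hfi'
    have hc : u i - (⌊u i⌋ : ℝ) < 1 := by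
      have := Int.lt_floor_add_one (u i); linarith
    have hv : v i - thetaF W mm i < INF W u mm i := by
      unfold thetaF; linarith [hb]
    have : eF W mm v i ≤ INF W u mm i := by
      unfold eF; exact max_le (le_of_lt hv) hIN
    linarith
  · -- floor ≥ mm + 1
    have hfi1 : mm + 1 ≤ ⌊u i⌋ := hfi
    have hflow := node_flow_bound W hnn u mm hfl i hfi1
    have hv : v i - thetaF W mm i ≤ eF W mm u i + INF W u mm i - OUTF W u mm i := by
      have h1 := hstep i
      have h2 := sub_le_eF W mm u i
      rw [h1]; linarith
    have hpos : 0 ≤ eF W mm u i + INF W u mm i - OUTF W u mm i := by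
      rcases eq_or_lt_of_le hfi1 with hfi2 | hfi2
      · -- floor = mm+1 : OUT = 0
        have hO : OUTF W u mm i = 0 := OUTF_eq_zero W u mm i (by omega)
        linarith
      · -- floor ≥ mm+2
        have hh := node_high W hnn hrow u mm i (by omega)
        have hd := hdiag i
        have h2 := sub_le_eF W mm u i
        unfold thetaF at hh h2
        linarith
    unfold eF
    exact max_le hv hpos


lemma eF_eq_zero_iff (W : Matrix (Fin n) (Fin n) ℝ) (mm : ℤ) (u : Fin n → ℝ) (i : Fin n) :
    eF W mm u i = 0 ↔ u i ≤ thetaF W mm i := by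
  unfold eF
  rw [max_eq_right_iff]
  constructor
  · intro h; linarith
  · intro h; linarith

lemma eF_pos_iff (W : Matrix (Fin n) (Fin n) ℝ) (mm : ℤ) (u : Fin n → ℝ) (i : Fin n) :
    0 < eF W mm u i ↔ thetaF W mm i < u i := by
  constructor
  · intro h
    by_contra hc
    push_neg at hc
    rw [(eF_eq_zero_iff W mm u i).mpr hc] at h
    exact lt_irrefl _ h
  · intro h
    have : eF W mm u i = u i - thetaF W mm i := max_eq_left (by linarith)
    rw [this]; linarith

lemma eF_eq_of_gt (W : Matrix (Fin n) (Fin n) ℝ) (mm : ℤ) (u : Fin n → ℝ) (i : Fin n)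
    (h : thetaF W mm i < u i) : eF W mm u i = u i - thetaF W mm i :=
  max_eq_left (by linarith)

/-- Decompose the update sum. -/
lemma step_decomp (W : Matrix (Fin n) (Fin n) ℝ) (hrow : ∀ i, ∑ j, W i j = 1)
    (u : Fin n → ℝ) (i : Fin n) :
    ∑ j, W i j * ((⌊u j⌋ : ℝ) - (⌊u i⌋ : ℝ)) = (∑ j, W i j * (⌊u j⌋ : ℝ)) - (⌊u i⌋ : ℝ) := by
  have h1 : ∑ j, W i j * ((⌊u j⌋ : ℝ) - (⌊u i⌋ : ℝ))
      = (∑ j, W i j * (⌊u j⌋ : ℝ)) - (∑ j, W i j) * (⌊u i⌋ : ℝ) := by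
    rw [Finset.sum_mul, ← Finset.sum_sub_distrib]
    exact Finset.sum_congr rfl fun j _ => by ring
  rw [h1, hrow i, one_mul]

/-- Sum of all values is conserved. -/
lemma sum_conserve (W : Matrix (Fin n) (Fin n) ℝ) (hsym : ∀ i j, W i j = W j i)
    (hrow : ∀ i, ∑ j, W i j = 1)
    (u v : Fin n → ℝ) (hstep : ∀ i, v i = u i + ∑ j, W i j * ((⌊u j⌋ : ℝ) - (⌊u i⌋ : ℝ))) :
    ∑ i, v i = ∑ i, u i := by
  have hcol : ∀ j, ∑ i, W i j = 1 := by
    intro j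
    calc ∑ i, W i j = ∑ i, W j i := Finset.sum_congr rfl fun i _ => hsym i j
      _ = 1 := hrow j
  have h1 : ∑ i, ∑ j, W i j * (⌊u j⌋ : ℝ) = ∑ j, (⌊u j⌋ : ℝ) := by
    rw [Finset.sum_comm]
    refine Finset.sum_congr rfl fun j _ => ?_
    rw [← Finset.sum_mul, hcol j, one_mul]
  calc ∑ i, v i = ∑ i, (u i + ((∑ j, W i j * (⌊u j⌋ : ℝ)) - (⌊u i⌋ : ℝ))) := by
        refine Finset.sum_congr rfl fun i _ => ?_
        rw [hstep i, step_decomp W hrow u i]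
    _ = ∑ i, u i := by
        rw [Finset.sum_add_distrib, Finset.sum_sub_distrib, h1]
        ring

/-- Minimum floor does not decrease. -/
lemma floor_step_lower (W : Matrix (Fin n) (Fin n) ℝ) (hnn : ∀ i j, 0 ≤ W i j)
    (hrow : ∀ i, ∑ j, W i j = 1)
    (u v : Fin n → ℝ) (hstep : ∀ i, v i = u i + ∑ j, W i j * ((⌊u j⌋ : ℝ) - (⌊u i⌋ : ℝ)))
    (mm : ℤ) (hfl : ∀ j, mm ≤ ⌊u j⌋) (i : Fin n) : mm ≤ ⌊v i⌋ := by
  have h1 : (mm : ℝ) ≤ ∑ j, W i j * (⌊u j⌋ : ℝ) := by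
    have : ∑ j, W i j * (mm : ℝ) ≤ ∑ j, W i j * (⌊u j⌋ : ℝ) := by
      refine Finset.sum_le_sum fun j _ => ?_
      have : (mm : ℝ) ≤ (⌊u j⌋ : ℝ) := by exact_mod_cast hfl j
      exact mul_le_mul_of_nonneg_left this (hnn i j)
    rw [← Finset.sum_mul, hrow i, one_mul] at this
    exact this
  have h2 : (⌊u i⌋ : ℝ) ≤ u i := Int.floor_le _
  rw [Int.le_floor]
  rw [hstep i, step_decomp W hrow u i]
  push_cast
  linarith

/-- Maximum floor does not increase. -/
lemma floor_step_upper (W : Matrix (Fin n) (Fin n) ℝ) (hnn : ∀ i j, 0 ≤ W i j)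
    (hrow : ∀ i, ∑ j, W i j = 1)
    (u v : Fin n → ℝ) (hstep : ∀ i, v i = u i + ∑ j, W i j * ((⌊u j⌋ : ℝ) - (⌊u i⌋ : ℝ)))
    (MM : ℤ) (hfu : ∀ j, ⌊u j⌋ ≤ MM) (i : Fin n) : ⌊v i⌋ ≤ MM := by
  have h1 : ∑ j, W i j * (⌊u j⌋ : ℝ) ≤ (MM : ℝ) := by
    have : ∑ j, W i j * (⌊u j⌋ : ℝ) ≤ ∑ j, W i j * (MM : ℝ) := by
      refine Finset.sum_le_sum fun j _ => ?_
      have : (⌊u j⌋ : ℝ) ≤ (MM : ℝ) := by exact_mod_cast hfu j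
      exact mul_le_mul_of_nonneg_left this (hnn i j)
    rw [← Finset.sum_mul, hrow i, one_mul] at this
    exact this
  have h2 : u i < (⌊u i⌋ : ℝ) + 1 := Int.lt_floor_add_one _
  have h3 : ⌊v i⌋ < MM + 1 := by
    rw [Int.floor_lt]
    rw [hstep i, step_decomp W hrow u i]
    push_cast
    linarith
  omega

/-- Eventual periodicity from a bounded integer encoding. -/
lemma eventually_periodic (x : ℕ → Fin n → ℝ) (F : (Fin n → ℝ) → (Fin n → ℝ))
    (hF : ∀ k, x (k+1) = F (x k)) (g : ℕ → Fin n → ℤ)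
    (hginj : ∀ a b, g a = g b → x a = x b) (lo hi : Fin n → ℤ)
    (hbd : ∀ k i, g k i ∈ Set.Icc (lo i) (hi i)) :
    ∃ k1 p, 0 < p ∧ ∀ k, k1 ≤ k → x (k + p) = x k := by
  set T : Set (Fin n → ℤ) := Set.pi Set.univ (fun i => Set.Icc (lo i) (hi i)) with hT
  have hfin : T.Finite := Set.Finite.pi (fun i => Set.finite_Icc _ _)
  haveI : Finite T := hfin
  have hmem : ∀ k, g k ∈ T := by
    intro k
    rw [hT]
    exact fun i _ => hbd k i
  obtain ⟨a, b, hab, heq⟩ := Finite.exists_ne_map_eq_of_infinite (fun k => (⟨g k, hmem k⟩ : T))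
  have hxab : x a = x b := hginj a b (by simpa [Subtype.ext_iff] using heq)
  have key : ∀ a b : ℕ, a < b → x a = x b → ∃ k1 p, 0 < p ∧ ∀ k, k1 ≤ k → x (k + p) = x k := by
    intro a b hlt hx
    have hdet : ∀ t, x (a + t) = x (b + t) := by
      intro t
      induction t with
      | zero => simpa using hx
      | succ t ih =>
        have h1 : a + (t+1) = (a+t)+1 := by omega
        have h2 : b + (t+1) = (b+t)+1 := by omega
        rw [h1, h2, hF, hF, ih]
    refine ⟨a, b - a, by omega, ?_⟩
    intro k hk
    have h1 : k + (b - a) = b + (k - a) := by omega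
    have h2 : k = a + (k - a) := by omega
    rw [h1]
    conv_rhs => rw [h2]
    exact (hdet (k - a)).symm
  rcases lt_or_gt_of_ne hab with h | h
  · exact key a b h hxab
  · exact key b a h hxab.symm

end QCAux


set_option maxHeartbeats 4000000 in
/-- Proposition 4 (main convergence result): in finite time either the values cycle in a
small neighborhood of the average, or quantized consensus is reached. -/
theorem main_convergence {n : ℕ} (hn : 1 < n)
    (G : SimpleGraph (Fin n)) (hG : G.Connected)
    (W : Matrix (Fin n) (Fin n) ℝ) (hW : Assumption1 G W)
    (x : ℕ → Fin n → ℝ) (hx : Traj W x)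
    (γ : ℝ) (hγ : GammaSetup W x γ) :
    ∃ K : ℕ, ∀ k, K ≤ k →
      ((∀ i j, |x k i - x k j| ≤ alpha W γ i + alpha W γ j) ∧
        (∀ i, |x k i - (1 / (n : ℝ)) * ∑ p, x 0 p| ≤
          2 * Finset.univ.sup' ⟨⟨0, Nat.zero_lt_one.trans hn⟩, Finset.mem_univ _⟩
            (alpha W γ))) ∨
      ((∀ i j, ⌊x k i⌋ = ⌊x k j⌋) ∧
        (∀ i, |x k i - (1 / (n : ℝ)) * ∑ p, x 0 p| < 1)) := by
  classical
  obtain ⟨hsym, hnn, hrow, hdiag, hzero, hedge⟩ := hW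
  obtain ⟨hγpos, hgap⟩ := hγ
  have hn0 : 0 < n := by omega
  have hne : (Finset.univ : Finset (Fin n)).Nonempty := ⟨⟨0, hn0⟩, mem_univ _⟩
  -- step in incremental form
  have hstep : ∀ k i, x (k+1) i = x k i + ∑ j, W i j * ((⌊x k j⌋ : ℝ) - (⌊x k i⌋ : ℝ)) := by
    intro k i
    rw [hx k i, QCAux.step_decomp W hrow (x k) i]
    ring
  have hstepk : ∀ k, ∀ i, x (k+1) i = x k i + ∑ j, W i j * ((⌊x k j⌋ : ℝ) - (⌊x k i⌋ : ℝ)) :=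
    fun k => hstep k
  -- diagonal bounds
  have hle1 : ∀ i, W i i ≤ 1 := by
    intro i
    have h1 : W i i ≤ ∑ j, W i j :=
      Finset.single_le_sum (fun j _ => hnn i j) (mem_univ i)
    rw [hrow i] at h1; exact h1
  have hlt1 : ∀ i, W i i < 1 := by
    intro i
    obtain ⟨j, hj⟩ := QCAux.exists_adj hn hG i
    have hWj : 0 < W i j := (hedge i j hj).2.1
    have hne' : j ≠ i := fun h => (G.loopless.irrefl i (h ▸ hj))
    have h1 : W i j ≤ ∑ l ∈ univ.erase i, W i l :=
      Finset.single_le_sum (fun l _ => hnn i l) (Finset.mem_erase.mpr ⟨hne', mem_univ _⟩)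
    have h2 : ∑ l ∈ univ.erase i, W i l = 1 - W i i := by
      have := hrow i
      rw [← Finset.sum_erase_add _ _ (mem_univ i)] at this
      linarith
    linarith
  -- min and max floors
  set mf : ℕ → ℤ := fun k => univ.inf' hne fun i => ⌊x k i⌋ with hmf
  set Mf : ℕ → ℤ := fun k => univ.sup' hne fun i => ⌊x k i⌋ with hMf
  have hmfle : ∀ k i, mf k ≤ ⌊x k i⌋ := by
    intro k i; rw [hmf]; exact Finset.inf'_le (fun i => ⌊x k i⌋) (mem_univ i)
  have hMfge : ∀ k i, ⌊x k i⌋ ≤ Mf k := by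
    intro k i; rw [hMf]; exact Finset.le_sup' (fun i => ⌊x k i⌋) (mem_univ i)
  have hmmono : ∀ k, mf k ≤ mf (k+1) := by
    intro k
    refine Finset.le_inf' _ _ fun i _ => ?_
    exact QCAux.floor_step_lower W hnn hrow (x k) (x (k+1)) (hstepk k) (mf k) (hmfle k) i
  have hMmono : ∀ k, Mf (k+1) ≤ Mf k := by
    intro k
    refine Finset.sup'_le _ _ fun i _ => ?_
    exact QCAux.floor_step_upper W hnn hrow (x k) (x (k+1)) (hstepk k) (Mf k) (hMfge k) i
  have hml0 : ∀ k, mf 0 ≤ mf k := by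
    intro k
    induction k with
    | zero => exact le_rfl
    | succ k ih => exact le_trans ih (hmmono k)
  have hMu0 : ∀ k, Mf k ≤ Mf 0 := by
    intro k
    induction k with
    | zero => exact le_rfl
    | succ k ih => exact le_trans (hMmono k) ih
  have hxlo : ∀ k i, ((mf 0 : ℤ) : ℝ) ≤ x k i := by
    intro k i
    have h1 : ((mf 0 : ℤ) : ℝ) ≤ ((⌊x k i⌋ : ℤ) : ℝ) := by
      exact_mod_cast le_trans (hml0 k) (hmfle k i)
    exact le_trans h1 (Int.floor_le _)
  have hxhi : ∀ k i, x k i < ((Mf 0 : ℤ) : ℝ) + 1 := by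
    intro k i
    have h1 : ((⌊x k i⌋ : ℤ) : ℝ) ≤ ((Mf 0 : ℤ) : ℝ) := by
      exact_mod_cast le_trans (hMfge k i) (hMu0 k)
    have := Int.lt_floor_add_one (x k i)
    linarith
  -- rational weights: common denominator
  have hratW : ∀ i j : Fin n, i ≠ j → ∃ q : ℚ, (q : ℝ) = W i j := by
    intro i j hij
    by_cases h : G.Adj i j
    · exact (hedge i j h).1
    · exact ⟨0, by simp [hzero i j hij h]⟩
  set qW : Fin n → Fin n → ℚ := fun i j =>
    if h : i ≠ j then Classical.choose (hratW i j h) else 0 with hqW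
  have hqWspec : ∀ i j (h : i ≠ j), ((qW i j : ℚ) : ℝ) = W i j := by
    intro i j h
    simp only [hqW, dif_pos h]
    exact Classical.choose_spec (hratW i j h)
  set Q : ℕ := ∏ ij : Fin n × Fin n, (qW ij.1 ij.2).den with hQ
  have hQpos : 0 < Q := Finset.prod_pos fun ij _ => (qW ij.1 ij.2).pos
  have hQR : (0 : ℝ) < (Q : ℝ) := by exact_mod_cast hQpos
  have hQint : ∀ i j : Fin n, i ≠ j → ∃ z : ℤ, (z : ℝ) = (Q : ℝ) * W i j := by
    intro i j hij
    obtain ⟨t, ht⟩ : (qW i j).den ∣ Q := Finset.dvd_prod_of_mem _ (mem_univ (i, j))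
    refine ⟨(qW i j).num * t, ?_⟩
    rw [← hqWspec i j hij]
    have hden : ((qW i j).den : ℝ) ≠ 0 := by
      exact_mod_cast (qW i j).den_nz
    have hcast : ((qW i j : ℚ) : ℝ) = ((qW i j).num : ℝ) / ((qW i j).den : ℝ) := by
      rw [Rat.cast_def]
    rw [hcast, ht]
    push_cast
    field_simp
  -- lattice structure
  have hlat : ∀ k i, ∃ z : ℤ, (z : ℝ) = (Q : ℝ) * (x k i - x 0 i) := by
    intro k
    induction k with
    | zero => intro i; exact ⟨0, by simp⟩
    | succ k ih =>
      intro i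
      obtain ⟨z0, hz0⟩ := ih i
      have hterm : ∀ j : Fin n, ∃ z : ℤ, (z : ℝ) = (Q : ℝ) * (W i j * ((⌊x k j⌋ : ℝ) - (⌊x k i⌋ : ℝ))) := by
        intro j
        by_cases hij : i = j
        · exact ⟨0, by simp [hij]⟩
        · obtain ⟨z, hz⟩ := hQint i j hij
          refine ⟨z * (⌊x k j⌋ - ⌊x k i⌋), ?_⟩
          push_cast
          rw [hz]
          ring
      choose zf hzf using hterm
      refine ⟨z0 + ∑ j, zf j, ?_⟩
      have hsum : ((∑ j, zf j : ℤ) : ℝ) = (Q : ℝ) * ∑ j, W i j * ((⌊x k j⌋ : ℝ) - (⌊x k i⌋ : ℝ)) := by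
        rw [Finset.mul_sum]
        push_cast
        exact Finset.sum_congr rfl fun j _ => hzf j
      push_cast
      rw [hstep k i]
      push_cast at hz0 hsum
      linarith
  -- periodicity
  obtain ⟨k1, p, hp, hper⟩ := QCAux.eventually_periodic x
    (fun v i => v i + ∑ j, W i j * ((⌊v j⌋ : ℝ) - (⌊v i⌋ : ℝ)))
    (fun k => funext fun i => hstep k i)
    (fun k i => ⌊(Q : ℝ) * (x k i - x 0 i)⌋)
    (by
      intro a b hab
      funext i
      have h : ⌊(Q : ℝ) * (x a i - x 0 i)⌋ = ⌊(Q : ℝ) * (x b i - x 0 i)⌋ := congrFun hab i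
      obtain ⟨za, hza⟩ := hlat a i
      obtain ⟨zb, hzb⟩ := hlat b i
      rw [← hza, ← hzb, Int.floor_intCast, Int.floor_intCast] at h
      have hz2 : (za : ℝ) = (zb : ℝ) := by exact_mod_cast h
      have h3 : (Q : ℝ) * (x a i - x 0 i) = (Q : ℝ) * (x b i - x 0 i) := by
        rw [← hza, ← hzb, hz2]
      have h4 := mul_left_cancel₀ (ne_of_gt hQR) h3
      linarith)
    (fun i => ⌊(Q : ℝ) * (((mf 0 : ℤ) : ℝ) - x 0 i)⌋)
    (fun i => ⌊(Q : ℝ) * (((Mf 0 : ℤ) : ℝ) + 1 - x 0 i)⌋)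
    (by
      intro k i
      constructor
      · exact Int.floor_le_floor (by nlinarith [hxlo k i])
      · exact Int.floor_le_floor (by nlinarith [hxhi k i]))
  have hperi : ∀ k, k1 ≤ k → ∀ i, x (k + p) i = x k i := fun k hk i => congrFun (hper k hk) i
  -- m, M constant from k1 on
  have hmconst : ∀ k, k1 ≤ k → mf k = mf k1 := by
    have hstepc : ∀ k, k1 ≤ k → mf (k+1) = mf k := by
      refine QCAux.mono_per_const' hp (fun k _ => hmmono k) (fun k hk => ?_)
      show (univ.inf' hne fun i => ⌊x (k+p) i⌋) = univ.inf' hne fun i => ⌊x k i⌋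
      exact Finset.inf'_congr hne rfl (fun i _ => by rw [hperi k hk i])
    intro k hk
    induction k, hk using Nat.le_induction with
    | base => rfl
    | succ k hk ih => rw [hstepc k hk, ih]
  have hMconst : ∀ k, k1 ≤ k → Mf k = Mf k1 := by
    have hstepc : ∀ k, k1 ≤ k → Mf (k+1) = Mf k := by
      refine QCAux.mono_per_const hp (fun k _ => hMmono k) (fun k hk => ?_)
      show (univ.sup' hne fun i => ⌊x (k+p) i⌋) = univ.sup' hne fun i => ⌊x k i⌋
      exact Finset.sup'_congr hne rfl (fun i _ => by rw [hperi k hk i])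
    intro k hk
    induction k, hk using Nat.le_induction with
    | base => rfl
    | succ k hk ih => rw [hstepc k hk, ih]
  set mm : ℤ := mf k1 with hmm
  set MM : ℤ := Mf k1 with hMM
  have hfl : ∀ k, k1 ≤ k → ∀ i, mm ≤ ⌊x k i⌋ := by
    intro k hk i
    rw [← hmconst k hk]
    exact hmfle k i
  have hfu : ∀ k, k1 ≤ k → ∀ i, ⌊x k i⌋ ≤ MM := by
    intro k hk i
    rw [← hMconst k hk]
    exact hMfge k i
  have hmex : ∃ i, ⌊x k1 i⌋ = mm := by
    obtain ⟨i, _, hi⟩ := Finset.exists_mem_eq_inf' hne fun i => ⌊x k1 i⌋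
    exact ⟨i, hi.symm⟩
  have hMex : ∃ i, ⌊x k1 i⌋ = MM := by
    obtain ⟨i, _, hi⟩ := Finset.exists_mem_eq_sup' hne fun i => ⌊x k1 i⌋
    exact ⟨i, hi.symm⟩
  have hmM : mm ≤ MM := le_trans (hmfle k1 ⟨0, hn0⟩) (hMfge k1 ⟨0, hn0⟩)
  -- sum conservation
  have hsumc : ∀ k, ∑ j, x k j = ∑ j, x 0 j := by
    intro k
    induction k with
    | zero => rfl
    | succ k ih =>
      rw [← ih]
      exact QCAux.sum_conserve W hsym hrow (x k) (x (k+1)) (hstepk k)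
  -- ============ shared potential machinery ============
  have hthgt : ∀ i : Fin n, ((mm:ℤ):ℝ) + 1 < QCAux.thetaF W mm i := by
    intro i
    unfold QCAux.thetaF
    have := hlt1 i
    linarith
  have node : ∀ k, k1 ≤ k → ∀ i, QCAux.eF W mm (x (k+1)) i ≤
      QCAux.eF W mm (x k) i + QCAux.INF W (x k) mm i - QCAux.OUTF W (x k) mm i :=
    fun k hk i => QCAux.node_ineq W hsym hnn hrow hdiag hle1 (x k) (x (k+1)) (hstepk k) mm (hfl k hk) i
  have Pmono : ∀ k, k1 ≤ k →
      (∑ i, QCAux.eF W mm (x (k+1)) i) ≤ ∑ i, QCAux.eF W mm (x k) i := by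
    intro k hk
    calc ∑ i, QCAux.eF W mm (x (k+1)) i
        ≤ ∑ i, (QCAux.eF W mm (x k) i + QCAux.INF W (x k) mm i - QCAux.OUTF W (x k) mm i) :=
          Finset.sum_le_sum fun i _ => node k hk i
      _ = ∑ i, QCAux.eF W mm (x k) i + ∑ i, QCAux.INF W (x k) mm i
            - ∑ i, QCAux.OUTF W (x k) mm i := by
          rw [Finset.sum_sub_distrib, Finset.sum_add_distrib]
      _ = ∑ i, QCAux.eF W mm (x k) i := by
          rw [QCAux.pairing W hsym (x k) mm]; ring
  have Pconst : ∀ k, k1 ≤ k →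
      (∑ i, QCAux.eF W mm (x (k+1)) i) = ∑ i, QCAux.eF W mm (x k) i := by
    refine QCAux.mono_per_const (g := fun k => ∑ i, QCAux.eF W mm (x k) i) hp Pmono (fun k hk => ?_)
    exact Finset.sum_congr rfl fun i _ => by unfold QCAux.eF; rw [hperi k hk i]
  have tight : ∀ k, k1 ≤ k → ∀ i, QCAux.eF W mm (x (k+1)) i =
      QCAux.eF W mm (x k) i + QCAux.INF W (x k) mm i - QCAux.OUTF W (x k) mm i := by
    intro k hk
    have hz : ∑ i, (QCAux.eF W mm (x k) i + QCAux.INF W (x k) mm i - QCAux.OUTF W (x k) mm i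
        - QCAux.eF W mm (x (k+1)) i) = 0 := by
      rw [Finset.sum_sub_distrib, Finset.sum_sub_distrib, Finset.sum_add_distrib]
      rw [QCAux.pairing W hsym (x k) mm, Pconst k hk]
      ring
    have hterm := (Finset.sum_eq_zero_iff_of_nonneg
      (fun i _ => by linarith [node k hk i])).mp hz
    intro i
    have := hterm i (mem_univ i)
    linarith
  rcases (by omega : MM = mm ∨ MM = mm + 1 ∨ mm + 2 ≤ MM) with hcase | hcase | hcase
  · -- consensus case
    refine ⟨k1, fun k hk => Or.inr ⟨?_, ?_⟩⟩
    · intro i j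
      have h1 := hfl k hk i
      have h2 := hfu k hk i
      have h3 := hfl k hk j
      have h4 := hfu k hk j
      omega
    · intro i
      have hnR : (0:ℝ) < (n:ℝ) := by exact_mod_cast hn0
      have hbl : ∀ q : Fin n, ((mm:ℤ):ℝ) ≤ x k q := by
        intro q
        have h1 : ((mm:ℤ):ℝ) ≤ ((⌊x k q⌋ : ℤ):ℝ) := by exact_mod_cast hfl k hk q
        exact le_trans h1 (Int.floor_le _)
      have hbu : ∀ q : Fin n, x k q < ((mm:ℤ):ℝ) + 1 := by
        intro q
        have h1 : ((⌊x k q⌋ : ℤ):ℝ) ≤ ((mm:ℤ):ℝ) := by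
          exact_mod_cast (hfu k hk q).trans (le_of_eq hcase)
        have := Int.lt_floor_add_one (x k q)
        linarith
      have hs1 : (n:ℝ) * ((mm:ℤ):ℝ) ≤ ∑ q, x k q := by
        calc (n:ℝ) * ((mm:ℤ):ℝ) = ∑ _q : Fin n, ((mm:ℤ):ℝ) := by
              rw [Finset.sum_const, Finset.card_univ, Fintype.card_fin, nsmul_eq_mul]
          _ ≤ ∑ q, x k q := Finset.sum_le_sum fun q _ => hbl q
      have hs2 : ∑ q, x k q < (n:ℝ) * (((mm:ℤ):ℝ) + 1) := by
        calc ∑ q, x k q < ∑ _q : Fin n, (((mm:ℤ):ℝ) + 1) :=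
              Finset.sum_lt_sum_of_nonempty hne fun q _ => hbu q
          _ = (n:ℝ) * (((mm:ℤ):ℝ) + 1) := by
              rw [Finset.sum_const, Finset.card_univ, Fintype.card_fin, nsmul_eq_mul]
      rw [← hsumc k]
      have hA1 : ((mm:ℤ):ℝ) ≤ (1/(n:ℝ)) * (∑ q, x k q) := by
        have hpos : (0:ℝ) < 1/(n:ℝ) := by positivity
        have h := mul_le_mul_of_nonneg_left hs1 (le_of_lt hpos)
        rwa [show (1/(n:ℝ)) * ((n:ℝ) * ((mm:ℤ):ℝ)) = ((mm:ℤ):ℝ) by field_simp] at h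
      have hA2 : (1/(n:ℝ)) * (∑ q, x k q) < ((mm:ℤ):ℝ) + 1 := by
        have hpos : (0:ℝ) < 1/(n:ℝ) := by positivity
        have h := mul_lt_mul_of_pos_left hs2 hpos
        rwa [show (1/(n:ℝ)) * ((n:ℝ) * (((mm:ℤ):ℝ)+1)) = ((mm:ℤ):ℝ)+1 by field_simp] at h
      rw [abs_lt]
      constructor
      · linarith [hbl i, hbu i]
      · linarith [hbl i, hbu i]
  · -- M = m+1 : cyclic case
    -- flows vanish since all floors are ≤ mm+1
    have hIN0 : ∀ k, k1 ≤ k → ∀ i, QCAux.INF W (x k) mm i = 0 := by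
      intro k hk i
      apply Finset.sum_eq_zero
      intro j _
      have hj : ⌊x k j⌋ ≤ mm + 1 := by rw [← hcase]; exact hfu k hk j
      have h : max (min (⌊x k j⌋ - ⌊x k i⌋) (⌊x k j⌋ - mm - 1)) 0 = (0:ℤ) := by omega
      simp [QCAux.phiR, h]
    have hOUT0 : ∀ k, k1 ≤ k → ∀ i, QCAux.OUTF W (x k) mm i = 0 := by
      intro k hk i
      apply Finset.sum_eq_zero
      intro j _
      have hi : ⌊x k i⌋ ≤ mm + 1 := by rw [← hcase]; exact hfu k hk i
      have h : max (min (⌊x k i⌋ - ⌊x k j⌋) (⌊x k i⌋ - mm - 1)) 0 = (0:ℤ) := by omega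
      simp [QCAux.phiR, h]
    have econst : ∀ k, k1 ≤ k → ∀ i, QCAux.eF W mm (x (k+1)) i = QCAux.eF W mm (x k) i := by
      intro k hk i
      have := tight k hk i
      rw [hIN0 k hk i, hOUT0 k hk i] at this
      linarith
    have ecst : ∀ k, k1 ≤ k → ∀ i, QCAux.eF W mm (x k) i = QCAux.eF W mm (x k1) i := by
      intro k hk i
      induction k, hk using Nat.le_induction with
      | base => rfl
      | succ k hk ih => rw [econst k hk i, ih]
    -- no contributors
    have hnoc : ∀ i, QCAux.eF W mm (x k1) i = 0 := by
      by_contra hc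
      push_neg at hc
      obtain ⟨i, hi⟩ := hc
      have hipos : 0 < QCAux.eF W mm (x k1) i :=
        lt_of_le_of_ne (QCAux.eF_nonneg W mm (x k1) i) (Ne.symm hi)
      have hxgt : ∀ k, k1 ≤ k → QCAux.thetaF W mm i < x k i := by
        intro k hk
        have : 0 < QCAux.eF W mm (x k) i := by rw [ecst k hk i]; exact hipos
        exact (QCAux.eF_pos_iff W mm (x k) i).mp this
      have hfloor : ∀ k, k1 ≤ k → ⌊x k i⌋ = mm + 1 := by
        intro k hk
        have h1 : ((mm:ℤ):ℝ) + 1 < x k i := lt_trans (hthgt i) (hxgt k hk)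
        have h2 : mm + 1 ≤ ⌊x k i⌋ := by
          rw [Int.le_floor]; push_cast; linarith
        have h3 : ⌊x k i⌋ ≤ mm + 1 := by rw [← hcase]; exact hfu k hk i
        omega
      -- i is frozen, and its neighbors stay at floor mm+1
      have hout0 : ∀ k, k1 ≤ k → ∀ j, G.Adj i j → ⌊x k j⌋ = mm + 1 := by
        intro k hk j hadj
        have hterm : ∀ l : Fin n, W i l * ((⌊x k l⌋:ℝ) - (⌊x k i⌋:ℝ)) ≤ 0 := by
          intro l
          have hl : ⌊x k l⌋ ≤ mm + 1 := by rw [← hcase]; exact hfu k hk l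
          have : ((⌊x k l⌋:ℝ) - (⌊x k i⌋:ℝ)) ≤ 0 := by
            rw [hfloor k hk]; push_cast
            have : ((⌊x k l⌋:ℤ):ℝ) ≤ ((mm + 1 : ℤ):ℝ) := by exact_mod_cast hl
            push_cast at this
            linarith
          exact mul_nonpos_of_nonneg_of_nonpos (hnn i l) this
        have hyx : x (k+1) i ≤ x k i := by
          rw [hstep k i]
          have : ∑ l, W i l * ((⌊x k l⌋:ℝ) - (⌊x k i⌋:ℝ)) ≤ 0 :=
            Finset.sum_nonpos fun l _ => hterm l
          linarith
        have heq : x (k+1) i = x k i := by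
          have e1 : QCAux.eF W mm (x (k+1)) i = x k i - QCAux.thetaF W mm i := by
            rw [econst k hk i, QCAux.eF_eq_of_gt W mm (x k) i (hxgt k hk)]
          have hpos : 0 < QCAux.eF W mm (x (k+1)) i := by
            rw [e1]; linarith [hxgt k hk]
          have hgt2 := (QCAux.eF_pos_iff W mm (x (k+1)) i).mp hpos
          have e2 := QCAux.eF_eq_of_gt W mm (x (k+1)) i hgt2
          rw [e2] at e1
          linarith
        have hzero' : ∑ l, W i l * ((⌊x k l⌋:ℝ) - (⌊x k i⌋:ℝ)) = 0 := by
          have := hstep k i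
          rw [heq] at this
          linarith
        have := (Finset.sum_eq_zero_iff_of_nonpos (fun l _ => hterm l)).mp hzero' j (mem_univ j)
        have hw : 0 < W i j := (hedge i j hadj).2.1
        have : ((⌊x k j⌋:ℝ) - (⌊x k i⌋:ℝ)) = 0 := by
          rcases mul_eq_zero.mp this with h | h
          · exact absurd h (ne_of_gt hw)
          · exact h
        have : (⌊x k j⌋:ℤ) = ⌊x k i⌋ := by exact_mod_cast sub_eq_zero.mp this
        rw [this, hfloor k hk]
      -- pinned set propagates
      set S2 : Set (Fin n) := {a | ∀ k, k1 ≤ k → ⌊x k a⌋ = mm + 1} with hS2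
      have hiS2 : i ∈ S2 := hfloor
      have hcl : ∀ a ∈ S2, ∀ b, G.Adj a b → b ∈ S2 := by
        intro a ha b hadj
        intro k hk
        have hterm : ∀ k', k1 ≤ k' → ∀ l : Fin n, W a l * ((⌊x k' l⌋:ℝ) - (⌊x k' a⌋:ℝ)) ≤ 0 := by
          intro k' hk' l
          have hl : ⌊x k' l⌋ ≤ mm + 1 := by rw [← hcase]; exact hfu k' hk' l
          have h2 : ((⌊x k' l⌋:ℝ) - (⌊x k' a⌋:ℝ)) ≤ 0 := by
            rw [ha k' hk']
            have : ((⌊x k' l⌋:ℤ):ℝ) ≤ ((mm + 1 : ℤ):ℝ) := by exact_mod_cast hl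
            push_cast at this ⊢
            linarith
          exact mul_nonpos_of_nonneg_of_nonpos (hnn a l) h2
        have hmono' : ∀ k', k1 ≤ k' → x (k'+1) a ≤ x k' a := by
          intro k' hk'
          rw [hstep k' a]
          have : ∑ l, W a l * ((⌊x k' l⌋:ℝ) - (⌊x k' a⌋:ℝ)) ≤ 0 :=
            Finset.sum_nonpos fun l _ => hterm k' hk' l
          linarith
        have hconst : x (k+1) a = x k a := QCAux.mono_per_const (g := fun k => x k a) hp hmono'
          (fun k' hk' => hperi k' hk' a) k hk
        have hzero' : ∑ l, W a l * ((⌊x k l⌋:ℝ) - (⌊x k a⌋:ℝ)) = 0 := by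
          have := hstep k a
          rw [hconst] at this
          linarith
        have hj := (Finset.sum_eq_zero_iff_of_nonpos (fun l _ => hterm k hk l)).mp hzero' b (mem_univ b)
        have hw : 0 < W a b := (hedge a b hadj).2.1
        have h2 : ((⌊x k b⌋:ℝ) - (⌊x k a⌋:ℝ)) = 0 := by
          rcases mul_eq_zero.mp hj with h | h
          · exact absurd h (ne_of_gt hw)
          · exact h
        have h3 : (⌊x k b⌋:ℤ) = ⌊x k a⌋ := by exact_mod_cast sub_eq_zero.mp h2
        rw [h3, ha k hk]
      have hall := QCAux.conn_closure hG S2 hcl hiS2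
      obtain ⟨v, hv⟩ := hmex
      have := hall v k1 le_rfl
      omega
    -- upper bound for all nodes from now on
    have hub : ∀ k, k1 ≤ k → ∀ i, x k i ≤ QCAux.thetaF W mm i := by
      intro k hk i
      have : QCAux.eF W mm (x k) i = 0 := by rw [ecst k hk i]; exact hnoc i
      exact (QCAux.eF_eq_zero_iff W mm (x k) i).mp this
    -- Good lower band
    have G1 : ∀ k, k1 ≤ k → ∀ i, ⌊x k i⌋ = mm →
        ((mm:ℤ):ℝ) + 1 - alpha W γ i ≤ x k i → ((mm:ℤ):ℝ) + W i i ≤ x k i := by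
      intro k hk i hfi hgood
      have hgap2 := (hgap i k).2.1
      rw [hfi] at hgap2
      unfold alpha at hgood
      by_contra hcon
      push_neg at hcon
      have h1 : 1 - (x k i - ((mm:ℤ):ℝ)) > 1 - W i i := by linarith
      have h2 := hgap2 h1
      linarith
    have G2 : ∀ k, k1 ≤ k → ∀ i,
        ((mm:ℤ):ℝ) + 1 - alpha W γ i ≤ x k i →
        ((mm:ℤ):ℝ) + 1 - alpha W γ i ≤ x (k+1) i := by
      intro k hk i hgood
      rcases eq_or_lt_of_le (hfl k hk i) with hfi | hfi
      · -- floor = mm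
        have hlow := G1 k hk i hfi.symm hgood
        have hterm : ∀ l : Fin n, 0 ≤ W i l * ((⌊x k l⌋:ℝ) - (⌊x k i⌋:ℝ)) := by
          intro l
          apply mul_nonneg (hnn i l)
          rw [← hfi]
          have : ((mm:ℤ):ℝ) ≤ ((⌊x k l⌋:ℤ):ℝ) := by exact_mod_cast hfl k hk l
          linarith
        have hxk : x k i ≤ x (k+1) i := by
          rw [hstep k i]
          have : 0 ≤ ∑ l, W i l * ((⌊x k l⌋:ℝ) - (⌊x k i⌋:ℝ)) :=
            Finset.sum_nonneg fun l _ => hterm l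
          linarith
        unfold alpha
        linarith
      · -- floor ≥ mm+1
        have hfi1 : mm + 1 ≤ ⌊x k i⌋ := hfi
        have hrow' : ∑ l ∈ univ.erase i, W i l = 1 - W i i := by
          have := hrow i
          rw [← Finset.sum_erase_add _ _ (mem_univ i)] at this
          linarith
        have hlb : ∑ l, W i l * ((⌊x k l⌋:ℝ) - (⌊x k i⌋:ℝ))
            ≥ (1 - W i i) * (((mm:ℤ):ℝ) - (⌊x k i⌋:ℝ)) := by
          have h1 : ∑ l, W i l * ((⌊x k l⌋:ℝ) - (⌊x k i⌋:ℝ))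
              = ∑ l ∈ univ.erase i, W i l * ((⌊x k l⌋:ℝ) - (⌊x k i⌋:ℝ)) := by
            rw [← Finset.sum_erase_add _ _ (mem_univ i)]
            simp
          rw [h1, ← hrow', Finset.sum_mul]
          apply Finset.sum_le_sum
          intro l _
          apply mul_le_mul_of_nonneg_left _ (hnn i l)
          have : ((mm:ℤ):ℝ) ≤ ((⌊x k l⌋:ℤ):ℝ) := by exact_mod_cast hfl k hk l
          linarith
        have hxf : ((⌊x k i⌋:ℤ):ℝ) ≤ x k i := Int.floor_le _
        have ht : ((mm:ℤ):ℝ) + 1 ≤ ((⌊x k i⌋:ℤ):ℝ) := by exact_mod_cast hfi1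
        have hd := hdiag i
        have hnew : ((mm:ℤ):ℝ) + W i i ≤ x (k+1) i := by
          rw [hstep k i]
          set t : ℝ := ((⌊x k i⌋:ℤ):ℝ) - ((mm:ℤ):ℝ) with htdef
          have ht1 : 1 ≤ t := by simp only [htdef]; linarith
          have hW0 : 0 ≤ W i i := hnn i i
          nlinarith [hlb]
        unfold alpha
        linarith
    have GoodAll : ∀ k, k1 ≤ k → ∀ i, ((mm:ℤ):ℝ) + 1 - alpha W γ i ≤ x k i := by
      intro k hk i
      by_contra hbad
      have hnever : ∀ k', k1 ≤ k' → ¬ (((mm:ℤ):ℝ) + 1 - alpha W γ i ≤ x k' i) := by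
        intro k' hk' hg
        exact hbad (QCAux.mono_per_prop hp (fun a ha => G2 a ha i)
          (fun a ha => by rw [hperi a ha i]) k' k hk' hk hg)
      have hflm : ∀ k', k1 ≤ k' → ⌊x k' i⌋ = mm := by
        intro k' hk'
        have h1 := hnever k' hk'
        push_neg at h1
        have hα : 0 < alpha W γ i := by
          unfold alpha
          have := hle1 i
          linarith
        have h2 : x k' i < ((mm:ℤ):ℝ) + 1 := by linarith
        have h3 : (⌊x k' i⌋:ℝ) < ((mm:ℤ):ℝ) + 1 := lt_of_le_of_lt (Int.floor_le _) h2
        have h4 : ⌊x k' i⌋ < mm + 1 := by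
          have : (⌊x k' i⌋:ℝ) < ((mm + 1 : ℤ):ℝ) := by push_cast; linarith
          exact_mod_cast this
        have h5 := hfl k' hk' i
        omega
      -- x_i nondecreasing hence frozen, neighbors pinned at mm
      set S1 : Set (Fin n) := {a | ∀ k', k1 ≤ k' → ⌊x k' a⌋ = mm} with hS1
      have hcl : ∀ a ∈ S1, ∀ b, G.Adj a b → b ∈ S1 := by
        intro a ha b hadj k' hk'
        have hterm : ∀ k2, k1 ≤ k2 → ∀ l : Fin n, 0 ≤ W a l * ((⌊x k2 l⌋:ℝ) - (⌊x k2 a⌋:ℝ)) := by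
          intro k2 hk2 l
          apply mul_nonneg (hnn a l)
          rw [ha k2 hk2]
          have : ((mm:ℤ):ℝ) ≤ ((⌊x k2 l⌋:ℤ):ℝ) := by exact_mod_cast hfl k2 hk2 l
          linarith
        have hmono' : ∀ k2, k1 ≤ k2 → x k2 a ≤ x (k2+1) a := by
          intro k2 hk2
          rw [hstep k2 a]
          have : 0 ≤ ∑ l, W a l * ((⌊x k2 l⌋:ℝ) - (⌊x k2 a⌋:ℝ)) :=
            Finset.sum_nonneg fun l _ => hterm k2 hk2 l
          linarith
        have hconst : x (k'+1) a = x k' a := QCAux.mono_per_const' (g := fun k => x k a) hp hmono'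
          (fun k2 hk2 => hperi k2 hk2 a) k' hk'
        have hzero' : ∑ l, W a l * ((⌊x k' l⌋:ℝ) - (⌊x k' a⌋:ℝ)) = 0 := by
          have := hstep k' a
          rw [hconst] at this
          linarith
        have hj := (Finset.sum_eq_zero_iff_of_nonneg (fun l _ => hterm k' hk' l)).mp hzero' b (mem_univ b)
        have hw : 0 < W a b := (hedge a b hadj).2.1
        have h2 : ((⌊x k' b⌋:ℝ) - (⌊x k' a⌋:ℝ)) = 0 := by
          rcases mul_eq_zero.mp hj with h | h
          · exact absurd h (ne_of_gt hw)
          · exact h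
        have h3 : (⌊x k' b⌋:ℤ) = ⌊x k' a⌋ := by exact_mod_cast sub_eq_zero.mp h2
        rw [h3, ha k' hk']
      have hall := QCAux.conn_closure hG S1 hcl hflm
      obtain ⟨v, hv⟩ := hMex
      have := hall v k1 le_rfl
      omega
    -- assemble branch (a)
    refine ⟨k1, fun k hk => Or.inl ⟨?_, ?_⟩⟩
    · intro i j
      have h1u := hub k hk i
      have h1l := GoodAll k hk i
      have h2u := hub k hk j
      have h2l := GoodAll k hk j
      unfold QCAux.thetaF at h1u h2u
      unfold alpha at h1l h2l ⊢
      have hγ0 : 0 ≤ γ := le_of_lt hγpos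
      rw [abs_le]
      constructor <;> linarith
    · intro i
      set amax : ℝ := Finset.univ.sup'
        ⟨⟨0, Nat.zero_lt_one.trans hn⟩, Finset.mem_univ _⟩ (alpha W γ) with hamax
      have hale : ∀ q : Fin n, alpha W γ q ≤ amax := by
        intro q
        rw [hamax]
        exact Finset.le_sup' (alpha W γ) (mem_univ q)
      have hband : ∀ q : Fin n, ((mm:ℤ):ℝ) + 1 - amax ≤ x k q ∧ x k q ≤ ((mm:ℤ):ℝ) + 1 + amax := by
        intro q
        have h1u := hub k hk q
        have h1l := GoodAll k hk q
        unfold QCAux.thetaF at h1u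
        unfold alpha at h1l
        have haq := hale q
        unfold alpha at haq
        have hγ0 : 0 ≤ γ := le_of_lt hγpos
        constructor <;> linarith
      have hnR : (0:ℝ) < (n:ℝ) := by exact_mod_cast hn0
      have hs1 : (n:ℝ) * (((mm:ℤ):ℝ) + 1 - amax) ≤ ∑ q, x k q := by
        calc (n:ℝ) * (((mm:ℤ):ℝ) + 1 - amax) = ∑ _q : Fin n, (((mm:ℤ):ℝ) + 1 - amax) := by
              rw [Finset.sum_const, Finset.card_univ, Fintype.card_fin, nsmul_eq_mul]
          _ ≤ ∑ q, x k q := Finset.sum_le_sum fun q _ => (hband q).1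
      have hs2 : ∑ q, x k q ≤ (n:ℝ) * (((mm:ℤ):ℝ) + 1 + amax) := by
        calc ∑ q, x k q ≤ ∑ _q : Fin n, (((mm:ℤ):ℝ) + 1 + amax) :=
              Finset.sum_le_sum fun q _ => (hband q).2
          _ = (n:ℝ) * (((mm:ℤ):ℝ) + 1 + amax) := by
              rw [Finset.sum_const, Finset.card_univ, Fintype.card_fin, nsmul_eq_mul]
      rw [← hsumc k]
      have hpos : (0:ℝ) < 1/(n:ℝ) := by positivity
      have hA1 : ((mm:ℤ):ℝ) + 1 - amax ≤ (1/(n:ℝ)) * (∑ q, x k q) := by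
        have h := mul_le_mul_of_nonneg_left hs1 (le_of_lt hpos)
        rwa [show (1/(n:ℝ)) * ((n:ℝ) * (((mm:ℤ):ℝ) + 1 - amax)) = ((mm:ℤ):ℝ) + 1 - amax by
          field_simp] at h
      have hA2 : (1/(n:ℝ)) * (∑ q, x k q) ≤ ((mm:ℤ):ℝ) + 1 + amax := by
        have h := mul_le_mul_of_nonneg_left hs2 (le_of_lt hpos)
        rwa [show (1/(n:ℝ)) * ((n:ℝ) * (((mm:ℤ):ℝ) + 1 + amax)) = ((mm:ℤ):ℝ) + 1 + amax by
          field_simp] at h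
      have hxi1 := hub k hk i
      have hxi2 := GoodAll k hk i
      unfold QCAux.thetaF at hxi1
      unfold alpha at hxi2
      have hai := hale i
      unfold alpha at hai
      have hγ0 : 0 ≤ γ := le_of_lt hγpos
      rw [abs_le]
      constructor <;> linarith
  · -- M ≥ m+2 : impossible
    exfalso
    have Rgrow : ∀ k, k1 ≤ k → ∀ i, QCAux.thetaF W mm i < x k i →
        QCAux.thetaF W mm i < x (k+1) i := by
      intro k hk i hgt
      have hfi1 : mm + 1 ≤ ⌊x k i⌋ := by
        have h1 : ((mm:ℤ):ℝ) + 1 < x k i := lt_trans (hthgt i) hgt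
        rw [Int.le_floor]; push_cast; linarith
      have he := QCAux.eF_eq_of_gt W mm (x k) i hgt
      have ht := tight k hk i
      have hIN := QCAux.INF_nonneg W hnn (x k) mm i
      rcases eq_or_lt_of_le hfi1 with hfi2 | hfi2
      · have hO : QCAux.OUTF W (x k) mm i = 0 := QCAux.OUTF_eq_zero W (x k) mm i (by omega)
        have hpos : 0 < QCAux.eF W mm (x (k+1)) i := by
          rw [ht, hO, he]; linarith
        exact (QCAux.eF_pos_iff W mm (x (k+1)) i).mp hpos
      · have hh := QCAux.node_high W hnn hrow (x k) mm i (by omega)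
        have hd := hdiag i
        have hpos : 0 < QCAux.eF W mm (x (k+1)) i := by
          rw [ht, he]
          unfold QCAux.thetaF at hh ⊢
          linarith
        exact (QCAux.eF_pos_iff W mm (x (k+1)) i).mp hpos
    have Rconst : ∀ i, ∀ k k', k1 ≤ k → k1 ≤ k' →
        QCAux.thetaF W mm i < x k i → QCAux.thetaF W mm i < x k' i := by
      intro i k k' hk hk' h
      exact QCAux.mono_per_prop hp (fun a ha => Rgrow a ha i)
        (fun a ha => by rw [hperi a ha i]) k k' hk hk' h
    have TB : ∀ k, k1 ≤ k → ∀ i, ⌊x k i⌋ = mm → QCAux.INF W (x k) mm i = 0 := by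
      intro k hk i hfi
      have he0 : QCAux.eF W mm (x k) i = 0 := by
        rw [QCAux.eF_eq_zero_iff]
        have h1 : x k i < (⌊x k i⌋:ℝ) + 1 := Int.lt_floor_add_one _
        rw [hfi] at h1
        have := hthgt i
        linarith
      have hO : QCAux.OUTF W (x k) mm i = 0 := QCAux.OUTF_eq_zero W (x k) mm i (by omega)
      have ht := tight k hk i
      rw [he0, hO] at ht
      have hb := QCAux.node_m_bound W hnn hrow (x k) (x (k+1)) (hstepk k) mm (hfl k hk) i hfi
      have hc : x k i - (⌊x k i⌋:ℝ) < 1 := by linarith [Int.lt_floor_add_one (x k i)]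
      by_contra hne'
      have hINpos : 0 < QCAux.INF W (x k) mm i :=
        lt_of_le_of_ne (QCAux.INF_nonneg W hnn (x k) mm i) (Ne.symm hne')
      have h2 : 0 < QCAux.eF W mm (x (k+1)) i := by rw [ht]; linarith
      have h3 := (QCAux.eF_pos_iff W mm (x (k+1)) i).mp h2
      have h4 := QCAux.eF_eq_of_gt W mm (x (k+1)) i h3
      rw [h4] at ht
      unfold QCAux.thetaF at ht
      linarith
    have TL : ∀ k, k1 ≤ k → ∀ i, ⌊x k i⌋ = mm + 1 → x k i ≤ QCAux.thetaF W mm i →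
        QCAux.INF W (x k) mm i = 0 := by
      intro k hk i hfi hle
      have he0 : QCAux.eF W mm (x k) i = 0 := (QCAux.eF_eq_zero_iff W mm (x k) i).mpr hle
      have hO : QCAux.OUTF W (x k) mm i = 0 := QCAux.OUTF_eq_zero W (x k) mm i (by omega)
      have ht := tight k hk i
      rw [he0, hO] at ht
      by_contra hne'
      have hINpos : 0 < QCAux.INF W (x k) mm i :=
        lt_of_le_of_ne (QCAux.INF_nonneg W hnn (x k) mm i) (Ne.symm hne')
      have h2 : 0 < QCAux.eF W mm (x (k+1)) i := by rw [ht]; linarith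
      have h3 := (QCAux.eF_pos_iff W mm (x (k+1)) i).mp h2
      have h5 := Rconst i (k+1) k (by omega) hk h3
      linarith
    have INpos : ∀ k, k1 ≤ k → ∀ i u, G.Adj i u → ⌊x k i⌋ ≤ mm + 1 → mm + 2 ≤ ⌊x k u⌋ →
        0 < QCAux.INF W (x k) mm i := by
      intro k hk i u hadj hfi hu
      have hw : 0 < W i u := (hedge i u hadj).2.1
      have hphi : 0 < QCAux.phiR (x k) mm i u := by
        unfold QCAux.phiR
        have h1 : (0:ℤ) < max (min (⌊x k u⌋ - ⌊x k i⌋) (⌊x k u⌋ - mm - 1)) 0 := by omega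
        exact_mod_cast h1
      apply Finset.sum_pos' (fun j _ => mul_nonneg (hnn i j) (QCAux.phiR_nonneg (x k) mm i j))
      exact ⟨u, mem_univ u, mul_pos hw hphi⟩
    have hnbr : ∀ k, k1 ≤ k → ∀ i u, G.Adj i u → mm + 2 ≤ ⌊x k u⌋ →
        QCAux.thetaF W mm i < x k i := by
      intro k hk i u hadj hu
      have hfi : mm + 1 ≤ ⌊x k i⌋ := by
        by_contra h
        push_neg at h
        have hfi0 : ⌊x k i⌋ = mm := by have := hfl k hk i; omega
        have h1 := TB k hk i hfi0
        have h2 := INpos k hk i u hadj (by omega) hu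
        linarith
      rcases eq_or_lt_of_le hfi with h1 | h1
      · by_contra h
        push_neg at h
        have h2 := TL k hk i h1.symm h
        have h3 := INpos k hk i u hadj (by omega) hu
        linarith
      · have h2 : ((mm:ℤ):ℝ) + 2 ≤ (⌊x k i⌋:ℝ) := by exact_mod_cast (by omega : mm + 2 ≤ ⌊x k i⌋)
        have hθ : QCAux.thetaF W mm i < ((mm:ℤ):ℝ) + 2 := by
          unfold QCAux.thetaF
          have := hdiag i
          linarith
        linarith [Int.floor_le (x k i)]
    -- the set of nodes with floor ≥ mm+1 forever
    set S : Set (Fin n) := {a | ∀ k, k1 ≤ k → mm + 1 ≤ ⌊x k a⌋} with hS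
    obtain ⟨v0, hv0⟩ := hMex
    have hv0gt : QCAux.thetaF W mm v0 < x k1 v0 := by
      have h1 : ((mm:ℤ):ℝ) + 2 ≤ (⌊x k1 v0⌋:ℝ) := by exact_mod_cast (by omega : mm + 2 ≤ ⌊x k1 v0⌋)
      have hθ : QCAux.thetaF W mm v0 < ((mm:ℤ):ℝ) + 2 := by
        unfold QCAux.thetaF
        have := hdiag v0
        linarith
      linarith [Int.floor_le (x k1 v0)]
    have hgtS : ∀ a, (∃ k2, k1 ≤ k2 ∧ QCAux.thetaF W mm a < x k2 a) → a ∈ S := by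
      intro a ⟨k2, hk2, hgt2⟩ k hk
      have h1 := Rconst a k2 k hk2 hk hgt2
      have h2 : ((mm:ℤ):ℝ) + 1 < x k a := lt_trans (hthgt a) h1
      rw [Int.le_floor]; push_cast; linarith
    have hv0S : v0 ∈ S := hgtS v0 ⟨k1, le_rfl, hv0gt⟩
    have hcl : ∀ a ∈ S, ∀ b, G.Adj a b → b ∈ S := by
      intro a ha b hadj
      by_cases hR : ∃ k2, k1 ≤ k2 ∧ QCAux.thetaF W mm a < x k2 a
      · obtain ⟨k2, hk2, hgt2⟩ := hR
        have hRa : ∀ k, k1 ≤ k → QCAux.thetaF W mm a < x k a :=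
          fun k hk => Rconst a k2 k hk2 hk hgt2
        intro k hk
        have hfa := ha k hk
        rcases eq_or_lt_of_le hfa with h1 | h1
        · -- a at floor mm+1, contributor: no low neighbors at time k
          have hfaeq : ⌊x k a⌋ = mm + 1 := h1.symm
          have hgt := hRa k hk
          have he := QCAux.eF_eq_of_gt W mm (x k) a hgt
          have hO : QCAux.OUTF W (x k) mm a = 0 := QCAux.OUTF_eq_zero W (x k) mm a (by omega)
          have ht := tight k hk a
          rw [he, hO] at ht
          -- D := INF - ∑ W a l (f_l - mm - 1) is a sum of nonneg terms and equals 0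
          have hterm : ∀ l : Fin n, 0 ≤ W a l * (QCAux.phiR (x k) mm a l
              - ((⌊x k l⌋:ℝ) - ((mm:ℤ):ℝ) - 1)) := by
            intro l
            apply mul_nonneg (hnn a l)
            have hint : (⌊x k l⌋ - mm - 1 : ℤ) ≤
                max (min (⌊x k l⌋ - ⌊x k a⌋) (⌊x k l⌋ - mm - 1)) 0 := by omega
            have := QCAux.phiR_nonneg (x k) mm a l
            unfold QCAux.phiR at this ⊢
            have hcast : ((⌊x k l⌋ - mm - 1 : ℤ):ℝ) ≤
                ((max (min (⌊x k l⌋ - ⌊x k a⌋) (⌊x k l⌋ - mm - 1)) 0 : ℤ):ℝ) := by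
              exact_mod_cast hint
            push_cast at hcast
            push_cast
            linarith
          have hx1 : x (k+1) a = x k a + (QCAux.INF W (x k) mm a
              - ∑ l, W a l * (QCAux.phiR (x k) mm a l - ((⌊x k l⌋:ℝ) - ((mm:ℤ):ℝ) - 1))) := by
            rw [hstep k a]
            unfold QCAux.INF
            rw [← Finset.sum_sub_distrib]
            congr 1
            refine Finset.sum_congr rfl fun l _ => ?_
            rw [hfaeq]
            push_cast
            ring
          have hDnn : 0 ≤ ∑ l, W a l * (QCAux.phiR (x k) mm a l
              - ((⌊x k l⌋:ℝ) - ((mm:ℤ):ℝ) - 1)) := Finset.sum_nonneg fun l _ => hterm l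
          have hposval : 0 < (x k a - QCAux.thetaF W mm a) + QCAux.INF W (x k) mm a := by
            have := QCAux.INF_nonneg W hnn (x k) mm a
            linarith
          have hEq : max (x (k+1) a - QCAux.thetaF W mm a) 0
              = (x k a - QCAux.thetaF W mm a) + QCAux.INF W (x k) mm a := by
            have h0 : QCAux.eF W mm (x (k+1)) a = max (x (k+1) a - QCAux.thetaF W mm a) 0 := rfl
            rw [← h0, ht]
            ring
          have hD0 : ∑ l, W a l * (QCAux.phiR (x k) mm a l
              - ((⌊x k l⌋:ℝ) - ((mm:ℤ):ℝ) - 1)) = 0 := by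
            rcases max_cases (x (k+1) a - QCAux.thetaF W mm a) (0:ℝ) with ⟨h4, _⟩ | ⟨h4, h5⟩
            · rw [h4] at hEq
              linarith [hx1]
            · rw [h4] at hEq
              linarith
          have hb0 : W a b * (QCAux.phiR (x k) mm a b - ((⌊x k b⌋:ℝ) - ((mm:ℤ):ℝ) - 1)) = 0 :=
            (Finset.sum_eq_zero_iff_of_nonneg (fun l _ => hterm l)).mp hD0 b (mem_univ b)
          have hw : 0 < W a b := (hedge a b hadj).2.1
          have hphib : QCAux.phiR (x k) mm a b = (⌊x k b⌋:ℝ) - ((mm:ℤ):ℝ) - 1 := by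
            rcases mul_eq_zero.mp hb0 with h | h
            · exact absurd h (ne_of_gt hw)
            · linarith
          have hnn' := QCAux.phiR_nonneg (x k) mm a b
          rw [hphib] at hnn'
          have : ((mm + 1 : ℤ):ℝ) ≤ ((⌊x k b⌋:ℤ):ℝ) := by push_cast; linarith
          exact_mod_cast this
        · -- a at floor ≥ mm+2 : use hnbr on b
          have h2 := hnbr k hk b a (hadj.symm) (by omega)
          have h3 : ((mm:ℤ):ℝ) + 1 < x k b := lt_trans (hthgt b) h2
          rw [Int.le_floor]; push_cast; linarith
      · -- a never above threshold: pinned at mm+1, nonincreasing, frozen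
        push_neg at hR
        have hfa1 : ∀ k, k1 ≤ k → ⌊x k a⌋ = mm + 1 := by
          intro k hk
          have h1 := ha k hk
          have h2 := hR k hk
          have h3 : (⌊x k a⌋:ℝ) ≤ x k a := Int.floor_le _
          have hθ : QCAux.thetaF W mm a < ((mm:ℤ):ℝ) + 2 := by
            unfold QCAux.thetaF
            have := hdiag a
            linarith
          have h4 : (⌊x k a⌋:ℝ) < ((mm + 2 : ℤ):ℝ) := by push_cast; push_cast at h3; linarith
          have h5 : ⌊x k a⌋ < mm + 2 := by exact_mod_cast h4
          omega
        have hIN0 : ∀ k, k1 ≤ k → QCAux.INF W (x k) mm a = 0 :=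
          fun k hk => TL k hk a (hfa1 k hk) (hR k hk)
        have hphi0 : ∀ k, k1 ≤ k → ∀ l, W a l * QCAux.phiR (x k) mm a l = 0 := by
          intro k hk l
          have := (Finset.sum_eq_zero_iff_of_nonneg
            (fun j _ => mul_nonneg (hnn a j) (QCAux.phiR_nonneg (x k) mm a j))).mp
            (hIN0 k hk) l (mem_univ l)
          exact this
        have htermle : ∀ k, k1 ≤ k → ∀ l : Fin n, W a l * ((⌊x k l⌋:ℝ) - (⌊x k a⌋:ℝ)) ≤ 0 := by
          intro k hk l
          have h0 := hphi0 k hk l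
          rcases eq_or_lt_of_le (hnn a l) with hw | hw
          · rw [← hw]; simp
          · have hphi : QCAux.phiR (x k) mm a l = 0 := by
              rcases mul_eq_zero.mp h0 with h | h
              · exact absurd h.symm (ne_of_lt hw)
              · exact h
            have hfla : ⌊x k l⌋ ≤ mm + 1 := by
              unfold QCAux.phiR at hphi
              have h2 : (max (min (⌊x k l⌋ - ⌊x k a⌋) (⌊x k l⌋ - mm - 1)) 0 : ℤ) = 0 := by
                exact_mod_cast hphi
              have h3 := hfa1 k hk
              omega
            apply mul_nonpos_of_nonneg_of_nonpos (hnn a l)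
            rw [hfa1 k hk]
            have : ((⌊x k l⌋:ℤ):ℝ) ≤ ((mm + 1 : ℤ):ℝ) := by exact_mod_cast hfla
            push_cast at this ⊢
            linarith
        have hmono' : ∀ k, k1 ≤ k → x (k+1) a ≤ x k a := by
          intro k hk
          rw [hstep k a]
          have : ∑ l, W a l * ((⌊x k l⌋:ℝ) - (⌊x k a⌋:ℝ)) ≤ 0 :=
            Finset.sum_nonpos fun l _ => htermle k hk l
          linarith
        intro k hk
        have hconst : x (k+1) a = x k a := QCAux.mono_per_const (g := fun k => x k a) hp hmono'
          (fun k2 hk2 => hperi k2 hk2 a) k hk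
        have hzero' : ∑ l, W a l * ((⌊x k l⌋:ℝ) - (⌊x k a⌋:ℝ)) = 0 := by
          have := hstep k a
          rw [hconst] at this
          linarith
        have hj := (Finset.sum_eq_zero_iff_of_nonpos (fun l _ => htermle k hk l)).mp hzero' b (mem_univ b)
        have hw : 0 < W a b := (hedge a b hadj).2.1
        have h2 : ((⌊x k b⌋:ℝ) - (⌊x k a⌋:ℝ)) = 0 := by
          rcases mul_eq_zero.mp hj with h | h
          · exact absurd h (ne_of_gt hw)
          · exact h
        have h3 : (⌊x k b⌋:ℤ) = ⌊x k a⌋ := by exact_mod_cast sub_eq_zero.mp h2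
        rw [h3, hfa1 k hk]
    have hall := QCAux.conn_closure hG S hcl hv0S
    obtain ⟨w0, hw0⟩ := hmex
    have := hall w0 k1 le_rfl
    omega
end

section
/- Corollary 1 (running averages converge): under Assumption 1, for every initial vector x(0) ∈ ℝ^n and each agent i, the running time average y_i(k) = (1/(k+1)) Σ_{t=0}^{k} x_i(t) (equivalently, y_i(0) = x_i(0) and y_i(k) = (k/(k+1)) y_i(k−1) + (1/(k+1)) x_i(k)) converges as k → ∞ to a limit y_i* satisfying |y_i* − x_ave| ≤ 1. -/
open Finset Filter

lemma cesaro_eventually_periodic' (u : ℕ → ℝ) (K p : ℕ) (hp : 0 < p)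
    (hper : ∀ k, K ≤ k → u (k + p) = u k) :
    Tendsto (fun k : ℕ => (1 / ((k : ℝ) + 1)) * ∑ t ∈ Finset.range (k + 1), u t)
      atTop (nhds ((1 / (p : ℝ)) * ∑ r ∈ Finset.range p, u (K + r))) := by
  set μ : ℝ := (1 / (p : ℝ)) * ∑ r ∈ Finset.range p, u (K + r) with hμ
  set g : ℕ → ℝ := fun k => (∑ t ∈ Finset.range k, u t) - k * μ with hg
  -- window sums are constant from K on
  have hwin : ∀ k, K ≤ k → ∑ r ∈ Finset.range p, u (k + r) = p * μ := by
    intro k hk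
    induction k with
    | zero =>
      have : K = 0 := Nat.le_zero.mp hk
      subst this
      rw [hμ]
      field_simp
    | succ m ih =>
      rcases Nat.lt_or_ge K (m + 1) with h | h
      · have hKm : K ≤ m := Nat.lt_succ_iff.mp h
        have hm := ih hKm
        have h1 : ∑ r ∈ Finset.range p, u (m + 1 + r)
            = (∑ r ∈ Finset.range p, u (m + r)) - u m + u (m + p) := by
          have e1 : ∑ r ∈ Finset.range p, u (m + r)
              = ∑ t ∈ Finset.Ico m (m + p), u t := by
            rw [Finset.sum_Ico_eq_sum_range]; simp
          have e2 : ∑ r ∈ Finset.range p, u (m + 1 + r)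
              = ∑ t ∈ Finset.Ico (m + 1) (m + 1 + p), u t := by
            rw [Finset.sum_Ico_eq_sum_range]; simp
          rw [e1, e2]
          have h3 : ∑ t ∈ Finset.Ico m (m + p), u t
              = u m + ∑ t ∈ Finset.Ico (m + 1) (m + p), u t := by
            rw [← Finset.sum_eq_sum_Ico_succ_bot (by omega) u]
          have h4 : ∑ t ∈ Finset.Ico (m + 1) (m + 1 + p), u t
              = (∑ t ∈ Finset.Ico (m + 1) (m + p), u t) + u (m + p) := by
            have : m + 1 + p = (m + p) + 1 := by omega
            rw [this, Finset.sum_Ico_succ_top (by omega)]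
          rw [h3, h4]; ring
        rw [h1, hm, hper m hKm]; ring
      · have : K = m + 1 := by omega
        subst this
        rw [hμ]; field_simp
  have hgper : ∀ k, K ≤ k → g (k + p) = g k := by
    intro k hk
    have : ∑ t ∈ Finset.range (k + p), u t
        = (∑ t ∈ Finset.range k, u t) + ∑ r ∈ Finset.range p, u (k + r) := by
      rw [Finset.sum_range_add]
    simp only [hg, this, hwin k hk]
    push_cast
    ring
  -- g is bounded
  have hrepr : ∀ k, ∃ j, j < K + p + 1 ∧ g k = g j := by
    intro k
    induction k using Nat.strong_induction_on with
    | _ k ih =>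
      rcases Nat.lt_or_ge k (K + p + 1) with h | h
      · exact ⟨k, h, rfl⟩
      · have hk : K ≤ k - p := by omega
        have : g ((k - p) + p) = g (k - p) := hgper _ hk
        have hkp : (k - p) + p = k := by omega
        rw [hkp] at this
        obtain ⟨j, hj, hje⟩ := ih (k - p) (by omega)
        exact ⟨j, hj, this.trans hje⟩
  obtain ⟨C, hbound⟩ : ∃ C : ℝ, ∀ k, |g k| ≤ C := by
    refine ⟨(Finset.range (K + p + 1)).sup'
      (Finset.nonempty_range_iff.mpr (by omega)) (fun j => |g j|), ?_⟩
    intro k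
    obtain ⟨j, hj, hje⟩ := hrepr k
    rw [hje]
    exact Finset.le_sup' (fun j => |g j|) (Finset.mem_range.mpr hj)
  -- squeeze
  have key : ∀ k : ℕ, (1 / ((k : ℝ) + 1)) * ∑ t ∈ Finset.range (k + 1), u t - μ
      = g (k + 1) * (1 / ((k : ℝ) + 1)) := by
    intro k
    have hk1 : ((k : ℝ) + 1) ≠ 0 := by positivity
    simp only [hg]
    push_cast
    field_simp
    try ring
  have hz : Tendsto (fun k : ℕ =>
      (1 / ((k : ℝ) + 1)) * ∑ t ∈ Finset.range (k + 1), u t - μ) atTop (nhds 0) := by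
    apply squeeze_zero_norm (a := fun k : ℕ => C * (1 / ((k : ℝ) + 1)))
    · intro k
      rw [key k, norm_mul]
      have h2 : ‖(1 / ((k : ℝ) + 1))‖ = 1 / ((k : ℝ) + 1) := by
        rw [Real.norm_eq_abs, abs_of_nonneg (by positivity)]
      rw [h2]
      exact mul_le_mul_of_nonneg_right (hbound (k + 1)) (by positivity)
    · have : Tendsto (fun k : ℕ => 1 / ((k : ℝ) + 1)) atTop (nhds 0) := tendsto_one_div_add_atTop_nhds_zero_nat
      simpa using this.const_mul C
  have := hz.add_const μ
  simpa using this

lemma eventually_periodic_of_finite' {α : Type*} (x : ℕ → α) (f : α → α)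
    (hf : ∀ k, x (k + 1) = f (x k)) (S : Set α) (hS : S.Finite) (hmem : ∀ k, x k ∈ S) :
    ∃ K p, 0 < p ∧ ∀ k, K ≤ k → x (k + p) = x k := by
  haveI := hS.to_subtype
  obtain ⟨a, b, hne, heq⟩ :=
    Finite.exists_ne_map_eq_of_infinite (fun k : ℕ => (⟨x k, hmem k⟩ : S))
  have hxab : x a = x b := congrArg Subtype.val heq
  have main : ∀ a b : ℕ, a < b → x a = x b → ∃ K p, 0 < p ∧ ∀ k, K ≤ k → x (k + p) = x k := by
    intro a b hab hx
    refine ⟨a, b - a, by omega, ?_⟩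
    have step : ∀ m, x (a + m) = x (b + m) := by
      intro m
      induction m with
      | zero => simpa using hx
      | succ m ih =>
        have : a + (m + 1) = (a + m) + 1 := by omega
        rw [this, hf]
        have : b + (m + 1) = (b + m) + 1 := by omega
        rw [this, hf, ih]
    intro k hk
    have h1 : k + (b - a) = b + (k - a) := by omega
    have h2 : k = a + (k - a) := by omega
    rw [h1, ← step (k - a), ← h2]
  rcases hne.lt_or_gt with h | h
  · exact main a b h hxab
  · exact main b a h hxab.symm


/-- Corollary 1: the running time averages `y_i(k) = (1/(k+1)) Σ_{t=0}^k x_i(t)` converge,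
to a limit within distance 1 of the initial average. -/
theorem running_averages_converge {n : ℕ} (hn : 1 < n)
    (G : SimpleGraph (Fin n)) (hG : G.Connected)
    (W : Matrix (Fin n) (Fin n) ℝ) (hW : Assumption1 G W)
    (x : ℕ → Fin n → ℝ) (hx : Traj W x) :
    ∀ i, ∃ ystar : ℝ,
      Filter.Tendsto
        (fun k : ℕ => (1 / ((k : ℝ) + 1)) * ∑ t ∈ Finset.range (k + 1), x t i)
        Filter.atTop (nhds ystar) ∧
      |ystar - (1 / (n : ℝ)) * ∑ p, x 0 p| ≤ 1 := by
  
  obtain ⟨hsym, hnn, hrow, hdiag, hzero, hedge⟩ := hW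
  have hn0 : 0 < n := by omega
  have huniv : (Finset.univ : Finset (Fin n)).Nonempty := ⟨⟨0, hn0⟩, Finset.mem_univ _⟩
  -- initial bounds
  obtain ⟨ilo, _, hilo⟩ := Finset.exists_min_image Finset.univ (fun i => ⌊x 0 i⌋) huniv
  obtain ⟨ihi, _, hihi⟩ := Finset.exists_max_image Finset.univ (fun i => ⌊x 0 i⌋) huniv
  set lo : ℤ := ⌊x 0 ilo⌋ with hlo_def
  set hi : ℤ := ⌊x 0 ihi⌋ with hhi_def
  -- floor bounds invariant
  have hbd : ∀ k i, (lo : ℝ) ≤ x k i ∧ x k i < (hi : ℝ) + 1 := by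
    intro k
    induction k with
    | zero =>
      intro i
      constructor
      · calc (lo : ℝ) ≤ (⌊x 0 i⌋ : ℝ) := by exact_mod_cast hilo i (Finset.mem_univ _)
          _ ≤ x 0 i := Int.floor_le _
      · calc x 0 i < (⌊x 0 i⌋ : ℝ) + 1 := Int.lt_floor_add_one _
          _ ≤ (hi : ℝ) + 1 := by
            have := hihi i (Finset.mem_univ _); exact_mod_cast add_le_add_left
              (show ((⌊x 0 i⌋ : ℝ)) ≤ (hi:ℝ) by exact_mod_cast this) 1
    | succ k ih =>
      intro i
      have hfl : ∀ j, lo ≤ ⌊x k j⌋ ∧ ⌊x k j⌋ ≤ hi := by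
        intro j
        refine ⟨Int.le_floor.mpr (ih j).1, ?_⟩
        have : ⌊x k j⌋ < hi + 1 := Int.floor_lt.mpr (by exact_mod_cast (ih j).2)
        omega
      have hcs : ∀ c : ℝ, ∑ j, W i j * c = c := by
        intro c; rw [← Finset.sum_mul, hrow i, one_mul]
      have hsum_lo : (lo : ℝ) ≤ ∑ j, W i j * (⌊x k j⌋ : ℝ) := by
        have h1 : ∑ j, W i j * (lo : ℝ) ≤ ∑ j, W i j * (⌊x k j⌋ : ℝ) :=
          Finset.sum_le_sum fun j _ =>
            mul_le_mul_of_nonneg_left (by exact_mod_cast (hfl j).1) (hnn i j)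
        rw [hcs (lo : ℝ)] at h1; exact h1
      have hsum_hi : ∑ j, W i j * (⌊x k j⌋ : ℝ) ≤ (hi : ℝ) := by
        have h1 : ∑ j, W i j * (⌊x k j⌋ : ℝ) ≤ ∑ j, W i j * (hi : ℝ) :=
          Finset.sum_le_sum fun j _ =>
            mul_le_mul_of_nonneg_left (by exact_mod_cast (hfl j).2) (hnn i j)
        rw [hcs (hi : ℝ)] at h1; exact h1
      have hfr0 : 0 ≤ x k i - (⌊x k i⌋ : ℝ) := sub_nonneg.mpr (Int.floor_le _)
      have hfr1 : x k i - (⌊x k i⌋ : ℝ) < 1 := by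
        have := Int.lt_floor_add_one (x k i); linarith
      rw [hx k i]
      constructor <;> linarith
  -- rationality: common denominator
  have hq : ∀ i j : Fin n, i ≠ j → ∃ q : ℚ, (q : ℝ) = W i j := by
    intro i j hij
    by_cases h : G.Adj i j
    · exact (hedge i j h).1
    · exact ⟨0, by rw [hzero i j hij h]; simp⟩
  classical
  choose Qf hQf using hq
  set D : ℕ := ∏ i : Fin n, ∏ j : Fin n, (if h : i = j then 1 else (Qf i j h).den) with hD_def
  have hD0 : 0 < D := by
    apply Finset.prod_pos
    intro i _
    apply Finset.prod_pos
    intro j _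
    split <;> simp [Rat.den_pos]
  have hDR : (0:ℝ) < (D:ℝ) := by exact_mod_cast hD0
  have hDQ : ∀ i j : Fin n, ∀ h : i ≠ j, ∃ z : ℤ, (z : ℝ) = (D : ℝ) * W i j := by
    intro i j h
    have hdvd : (Qf i j h).den ∣ D := by
      have h1 : (∏ j' : Fin n, (if h' : i = j' then 1 else (Qf i j' h').den)) ∣ D :=
        Finset.dvd_prod_of_mem _ (Finset.mem_univ i)
      have h2 : (if h' : i = j then 1 else (Qf i j h').den)
          ∣ ∏ j' : Fin n, (if h' : i = j' then 1 else (Qf i j' h').den) :=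
        Finset.dvd_prod_of_mem _ (Finset.mem_univ j)
      rw [dif_neg h] at h2
      exact h2.trans h1
    obtain ⟨m, hm⟩ := hdvd
    refine ⟨m * (Qf i j h).num, ?_⟩
    have hq2 : ((D : ℚ)) * Qf i j h = ((m * (Qf i j h).num : ℤ) : ℚ) := by
      have : ((D : ℚ)) = ((Qf i j h).den : ℚ) * (m : ℚ) := by exact_mod_cast hm
      rw [this, mul_comm ((Qf i j h).den : ℚ) (m:ℚ), mul_assoc]
      rw [mul_comm ((Qf i j h).den : ℚ) _]
      rw [Rat.mul_den_eq_num]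
      push_cast
      ring
    calc ((m * (Qf i j h).num : ℤ) : ℝ) = (((D : ℚ) * Qf i j h : ℚ) : ℝ) := by
          exact_mod_cast congrArg (fun q : ℚ => (q : ℝ)) hq2.symm
      _ = (D : ℝ) * W i j := by push_cast [hQf i j h]; ring
  -- lattice structure of the trajectory
  have hdiff : ∀ k i, x (k + 1) i
      = x k i + ∑ j ∈ Finset.univ.erase i, W i j * ((⌊x k j⌋ : ℝ) - (⌊x k i⌋ : ℝ)) := by
    intro k i
    have hcs : ∀ c : ℝ, ∑ j, W i j * c = c := by
      intro c; rw [← Finset.sum_mul, hrow i, one_mul]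
    have h1 : x (k + 1) i = x k i + ∑ j, W i j * ((⌊x k j⌋ : ℝ) - (⌊x k i⌋ : ℝ)) := by
      rw [hx k i]
      simp only [mul_sub, Finset.sum_sub_distrib, hcs ((⌊x k i⌋ : ℝ))]
      ring
    rw [h1]
    congr 1
    rw [← Finset.sum_erase Finset.univ (a := i) (by simp)]
  have hint : ∀ k i, ∃ z : ℤ, x k i = x 0 i + (z : ℝ) / D := by
    intro k
    induction k with
    | zero => intro i; exact ⟨0, by simp⟩
    | succ k ih =>
      intro i
      obtain ⟨z, hz⟩ := ih i
      have hzf : ∀ j : Fin n, ∃ w : ℤ, j ∈ Finset.univ.erase i → (w : ℝ) = (D : ℝ) * W i j := by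
        intro j
        by_cases h : i = j
        · exact ⟨0, fun hj => absurd h.symm (Finset.mem_erase.mp hj).1⟩
        · obtain ⟨w, hw⟩ := hDQ i j h
          exact ⟨w, fun _ => hw⟩
      choose wf hwf using hzf
      refine ⟨z + ∑ j ∈ Finset.univ.erase i, wf j * (⌊x k j⌋ - ⌊x k i⌋), ?_⟩
      rw [hdiff k i]
      have he : ∑ j ∈ Finset.univ.erase i, W i j * ((⌊x k j⌋ : ℝ) - (⌊x k i⌋ : ℝ))
          = (∑ j ∈ Finset.univ.erase i, (wf j : ℝ) * ((⌊x k j⌋ : ℝ) - (⌊x k i⌋ : ℝ))) / D := by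
        rw [Finset.sum_div]
        apply Finset.sum_congr rfl
        intro j hj
        rw [hwf j hj]
        field_simp
      rw [he, hz]
      push_cast
      ring
  -- the trajectory lives in a finite set
  set B : ℤ := (D : ℤ) * (hi + 1 - lo) with hB_def
  have hmemS : ∀ k, x k ∈ Set.pi Set.univ
      (fun i => (fun z : ℤ => x 0 i + (z : ℝ) / D) '' Set.Icc (-B) B) := by
    intro k
    rw [Set.mem_pi]
    intro i _
    obtain ⟨z, hz⟩ := hint k i
    refine ⟨z, ?_, hz.symm⟩
    rw [Set.mem_Icc]
    have h1 := (hbd k i).1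
    have h2 := (hbd k i).2
    have h3 := (hbd 0 i).1
    have h4 := (hbd 0 i).2
    have hzval : (z : ℝ) = (D : ℝ) * (x k i - x 0 i) := by
      rw [hz]; field_simp; ring
    constructor
    · have hmul : (D : ℝ) * (-((hi : ℝ) + 1 - lo)) ≤ (D : ℝ) * (x k i - x 0 i) :=
        mul_le_mul_of_nonneg_left (by linarith) (le_of_lt hDR)
      have : ((-B : ℤ) : ℝ) ≤ (z : ℝ) := by
        rw [hzval, hB_def]; push_cast; push_cast at hmul; linarith
      exact_mod_cast this
    · have hmul : (D : ℝ) * (x k i - x 0 i) ≤ (D : ℝ) * ((hi : ℝ) + 1 - lo) :=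
        mul_le_mul_of_nonneg_left (by linarith) (le_of_lt hDR)
      have : (z : ℝ) ≤ ((B : ℤ) : ℝ) := by
        rw [hzval, hB_def]; push_cast; push_cast at hmul; linarith
      exact_mod_cast this
  have hSfin : (Set.pi Set.univ
      (fun i => (fun z : ℤ => x 0 i + (z : ℝ) / D) '' Set.Icc (-B) B)).Finite :=
    Set.Finite.pi fun i => (Set.finite_Icc _ _).image _
  obtain ⟨K, p, hp, hper⟩ := eventually_periodic_of_finite' x
    (fun v i => (∑ j, W i j * (⌊v j⌋ : ℝ)) + v i - (⌊v i⌋ : ℝ))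
    (fun k => funext fun i => hx k i) _ hSfin hmemS
  have hperc : ∀ k, K ≤ k → ∀ i, x (k + p) i = x k i := fun k hk i => congrFun (hper k hk) i
  -- the per-period floor sums form an eigenvector of W
  set Fv : Fin n → ℝ := fun i => ∑ r ∈ Finset.range p, (⌊x (K + r) i⌋ : ℝ) with hFv
  have heig : ∀ i, ∑ j, W i j * Fv j = Fv i := by
    intro i
    have htel : ∑ r ∈ Finset.range p, (x (K + (r + 1)) i - x (K + r) i)
        = x (K + p) i - x (K + 0) i := Finset.sum_range_sub (fun r => x (K + r) i) p
    rw [hperc K le_rfl i] at htel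
    have htel0 : ∑ r ∈ Finset.range p, (x (K + (r + 1)) i - x (K + r) i) = 0 := by
      rw [htel]; simp
    have hterm : ∀ r, x (K + (r + 1)) i - x (K + r) i
        = (∑ j, W i j * (⌊x (K + r) j⌋ : ℝ)) - (⌊x (K + r) i⌋ : ℝ) := by
      intro r
      have : K + (r + 1) = (K + r) + 1 := by omega
      rw [this, hx (K + r) i]; ring
    rw [Finset.sum_congr rfl (fun r _ => hterm r), Finset.sum_sub_distrib] at htel0
    have hswap : ∑ r ∈ Finset.range p, ∑ j, W i j * (⌊x (K + r) j⌋ : ℝ)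
        = ∑ j, W i j * Fv j := by
      rw [Finset.sum_comm]
      apply Finset.sum_congr rfl
      intro j _
      rw [hFv]
      simp only [Finset.mul_sum]
    rw [hswap] at htel0
    have hFvi : Fv i = ∑ r ∈ Finset.range p, (⌊x (K + r) i⌋ : ℝ) := rfl
    linarith [htel0]
  -- max principle: Fv is constant
  obtain ⟨i0, _, hmax⟩ := Finset.exists_max_image Finset.univ Fv huniv
  have hstep : ∀ a b : Fin n, G.Adj a b → Fv a = Fv i0 → Fv b = Fv i0 := by
    intro a b hab ha
    have hcs : ∑ j, W a j * Fv i0 = Fv i0 := by rw [← Finset.sum_mul, hrow a, one_mul]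
    have h0 : ∑ j, W a j * (Fv i0 - Fv j) = 0 := by
      simp only [mul_sub]
      rw [Finset.sum_sub_distrib, hcs, heig a, ha]
      ring
    have hnn2 : ∀ j ∈ Finset.univ, (0:ℝ) ≤ W a j * (Fv i0 - Fv j) := fun j _ =>
      mul_nonneg (hnn a j) (sub_nonneg.mpr (hmax j (Finset.mem_univ j)))
    have hb0 := (Finset.sum_eq_zero_iff_of_nonneg hnn2).mp h0 b (Finset.mem_univ b)
    have hpos := (hedge a b hab).2.1
    rcases mul_eq_zero.mp hb0 with h | h
    · exact absurd h (ne_of_gt hpos)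
    · linarith
  have hconst : ∀ j, Fv j = Fv i0 := by
    have hconst' : ∀ j, Relation.ReflTransGen G.Adj i0 j → Fv j = Fv i0 := by
      intro j h
      induction h with
      | refl => rfl
      | tail _ hadj ih => exact hstep _ _ hadj ih
    intro j
    exact hconst' j ((SimpleGraph.reachable_iff_reflTransGen i0 j).mp (hG.preconnected i0 j))
  -- sum conservation
  have hcons : ∀ k, ∑ i, x k i = ∑ i, x 0 i := by
    intro k
    induction k with
    | zero => rfl
    | succ k ih =>
      have hcol : ∀ j, ∑ i, W i j = 1 := by
        intro j
        rw [Finset.sum_congr rfl fun i _ => hsym i j]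
        exact hrow j
      calc ∑ i, x (k + 1) i
          = ∑ i, ((∑ j, W i j * (⌊x k j⌋ : ℝ)) + x k i - (⌊x k i⌋ : ℝ)) :=
            Finset.sum_congr rfl fun i _ => hx k i
        _ = (∑ i, ∑ j, W i j * (⌊x k j⌋ : ℝ)) + ∑ i, x k i - ∑ i, (⌊x k i⌋ : ℝ) := by
            rw [Finset.sum_sub_distrib, Finset.sum_add_distrib]
        _ = ∑ i, x k i := by
            rw [Finset.sum_comm]
            have hc1 : ∀ j, ∑ i, W i j * (⌊x k j⌋ : ℝ) = (⌊x k j⌋ : ℝ) := by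
              intro j
              rw [← Finset.sum_mul, hcol j, one_mul]
            rw [Finset.sum_congr rfl fun j _ => hc1 j]
            ring
        _ = ∑ i, x 0 i := ih
  -- conclusion
  intro i
  have hperi : ∀ k, K ≤ k → x (k + p) i = x k i := fun k hk => hperc k hk i
  refine ⟨(1 / (p : ℝ)) * ∑ r ∈ Finset.range p, x (K + r) i,
    cesaro_eventually_periodic' (fun t => x t i) K p hp hperi, ?_⟩
  have hpR : (0:ℝ) < (p : ℝ) := by exact_mod_cast hp
  set ys : Fin n → ℝ := fun j => (1 / (p : ℝ)) * ∑ r ∈ Finset.range p, x (K + r) j with hys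
  set c : ℝ := (1 / (p : ℝ)) * Fv i0 with hc
  have hbnd : ∀ j, c ≤ ys j ∧ ys j < c + 1 := by
    intro j
    have hlow : Fv j ≤ ∑ r ∈ Finset.range p, x (K + r) j :=
      Finset.sum_le_sum fun r _ => Int.floor_le _
    have hup : ∑ r ∈ Finset.range p, x (K + r) j < Fv j + p := by
      have hlt : ∑ r ∈ Finset.range p, x (K + r) j
          < ∑ r ∈ Finset.range p, ((⌊x (K + r) j⌋ : ℝ) + 1) :=
        Finset.sum_lt_sum_of_nonempty (Finset.nonempty_range_iff.mpr hp.ne')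
          (fun r _ => Int.lt_floor_add_one _)
      have h2 : ∑ r ∈ Finset.range p, ((⌊x (K + r) j⌋ : ℝ) + 1) = Fv j + p := by
        rw [Finset.sum_add_distrib]
        simp [hFv]
      linarith
    constructor
    · have : c = (1 / (p : ℝ)) * Fv j := by rw [hc, hconst j]
      rw [this, hys]
      exact mul_le_mul_of_nonneg_left hlow (by positivity)
    · have h3 : ys j < (1 / (p : ℝ)) * (Fv j + p) :=
        mul_lt_mul_of_pos_left hup (by positivity)
      have h4 : (1 / (p : ℝ)) * (Fv j + p) = c + 1 := by
        rw [hc, hconst j]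
        field_simp
      linarith
  have hsum_ys : ∑ j, ys j = ∑ j, x 0 j := by
    simp only [hys]
    rw [← Finset.mul_sum, Finset.sum_comm]
    rw [Finset.sum_congr rfl (fun r _ => hcons (K + r))]
    rw [Finset.sum_const, Finset.card_range, nsmul_eq_mul]
    field_simp
  have hnR : (0:ℝ) < (n : ℝ) := by exact_mod_cast hn0
  have havg1 : (n : ℝ) * c ≤ ∑ j, ys j := by
    calc (n : ℝ) * c = ∑ _j : Fin n, c := by
          rw [Finset.sum_const, Finset.card_univ, Fintype.card_fin, nsmul_eq_mul]
      _ ≤ ∑ j, ys j := Finset.sum_le_sum fun j _ => (hbnd j).1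
  have havg2 : ∑ j, ys j < (n : ℝ) * (c + 1) := by
    calc ∑ j, ys j < ∑ _j : Fin n, (c + 1) :=
          Finset.sum_lt_sum_of_nonempty huniv fun j _ => (hbnd j).2
      _ = (n : ℝ) * (c + 1) := by
          rw [Finset.sum_const, Finset.card_univ, Fintype.card_fin, nsmul_eq_mul]
  have hxa : (1 / (n : ℝ)) * ∑ q, x 0 q = (1 / (n : ℝ)) * ∑ j, ys j := by rw [hsum_ys]
  have hf1 : c ≤ (1 / (n : ℝ)) * ∑ j, ys j := by
    have := mul_le_mul_of_nonneg_left havg1 (le_of_lt (show (0:ℝ) < 1 / (n:ℝ) by positivity))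
    have he : (1 / (n : ℝ)) * ((n : ℝ) * c) = c := by field_simp
    linarith
  have hf2 : (1 / (n : ℝ)) * ∑ j, ys j < c + 1 := by
    have := mul_lt_mul_of_pos_left havg2 (show (0:ℝ) < 1 / (n:ℝ) by positivity)
    have he : (1 / (n : ℝ)) * ((n : ℝ) * (c + 1)) = c + 1 := by field_simp
    linarith
  have hyi := hbnd i
  have hysi : ys i = (1 / (p : ℝ)) * ∑ r ∈ Finset.range p, x (K + r) i := rfl
  rw [abs_le]
  rw [hxa, ← hysi]
  constructor <;> linarith [hyi.1, hyi.2]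
end

section
/- Two-node cyclic example: let n = 2 with a single edge between nodes a and b, and let W = [[w, 1−w], [1−w, w]] with w ∈ (0,1). Let K be a positive integer and ξ ∈ (0,1), and take initial values x_a(0) = ξ and x_b(0) = K + ξ, so x_ave = K/2 + ξ. If w·K < min{ξ, 1 − ξ}, then the quantized system x(k+1) = W⌊x(k)⌋ + x(k) − ⌊x(k)⌋ satisfies, for every k ≥ 0: x_a(k) = ξ and x_b(k) = K + ξ when k is even, and x_a(k) = K + ξ − wK and x_b(k) = wK + ξ when k is odd. In particular, for every even k, |x_a(k) − x_ave| = |x_b(k) − x_ave| = K/2, so limsup_{k→∞} (1/√2)·‖x(k) − x_ave·1‖₂ ≥ K/2. -/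
/-- Two-node cyclic example: with `w·K < min{ξ, 1−ξ}` the two-node quantized system
cycles, staying at distance `K/2` from the average on even iterations. -/
theorem two_node_cycle (w : ℝ) (hw0 : 0 < w) (hw1 : w < 1)
    (K : ℕ) (hK : 0 < K) (ξ : ℝ) (hξ0 : 0 < ξ) (hξ1 : ξ < 1)
    (xa xb : ℕ → ℝ)
    (ha0 : xa 0 = ξ) (hb0 : xb 0 = (K : ℝ) + ξ)
    (ha : ∀ k, xa (k + 1) = xa k + (1 - w) * ((⌊xb k⌋ : ℝ) - (⌊xa k⌋ : ℝ)))
    (hb : ∀ k, xb (k + 1) = xb k + (1 - w) * ((⌊xa k⌋ : ℝ) - (⌊xb k⌋ : ℝ)))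
    (hcycle : w * (K : ℝ) < min ξ (1 - ξ)) :
    (∀ k, Even k → xa k = ξ ∧ xb k = (K : ℝ) + ξ) ∧
    (∀ k, Odd k → xa k = (K : ℝ) + ξ - w * (K : ℝ) ∧ xb k = w * (K : ℝ) + ξ) ∧
    (∀ k, Even k →
      |xa k - ((K : ℝ) / 2 + ξ)| = (K : ℝ) / 2 ∧
      |xb k - ((K : ℝ) / 2 + ξ)| = (K : ℝ) / 2) ∧
    (K : ℝ) / 2 ≤ Filter.limsup
      (fun k : ℕ => (1 / Real.sqrt 2) *
        Real.sqrt ((xa k - ((K : ℝ) / 2 + ξ)) ^ 2 + (xb k - ((K : ℝ) / 2 + ξ)) ^ 2))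
      Filter.atTop := by
  have hKpos : (0 : ℝ) < K := by exact_mod_cast hK
  have hwKξ : w * (K : ℝ) < ξ := lt_of_lt_of_le hcycle (min_le_left _ _)
  have hwK1ξ : w * (K : ℝ) < 1 - ξ := lt_of_lt_of_le hcycle (min_le_right _ _)
  have hwKpos : 0 < w * (K : ℝ) := mul_pos hw0 hKpos
  -- floor facts
  have hf1 : (⌊ξ⌋ : ℤ) = 0 := by
    rw [Int.floor_eq_iff]
    constructor <;> push_cast <;> linarith
  have hf2 : (⌊(K : ℝ) + ξ⌋ : ℤ) = K := by
    rw [Int.floor_eq_iff]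
    constructor <;> push_cast <;> linarith
  have hf3 : (⌊(K : ℝ) + ξ - w * (K : ℝ)⌋ : ℤ) = K := by
    rw [Int.floor_eq_iff]
    constructor <;> push_cast <;> linarith
  have hf4 : (⌊w * (K : ℝ) + ξ⌋ : ℤ) = 0 := by
    rw [Int.floor_eq_iff]
    constructor <;> push_cast <;> linarith
  have main : ∀ k, (Even k → xa k = ξ ∧ xb k = (K : ℝ) + ξ) ∧
      (Odd k → xa k = (K : ℝ) + ξ - w * (K : ℝ) ∧ xb k = w * (K : ℝ) + ξ) := by
    intro k
    induction k with
    | zero =>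
      refine ⟨fun _ => ⟨ha0, hb0⟩, fun h => absurd h (by simp)⟩
    | succ n ih =>
      rcases Nat.even_or_odd n with he | ho
      · obtain ⟨hxa, hxb⟩ := ih.1 he
        have hOdd : Odd (n + 1) := Even.add_one he
        refine ⟨fun h => absurd h (by simpa using hOdd), fun _ => ?_⟩
        constructor
        · rw [ha n, hxa, hxb, hf1, hf2]; push_cast; ring
        · rw [hb n, hxa, hxb, hf1, hf2]; push_cast; ring
      · obtain ⟨hxa, hxb⟩ := ih.2 ho
        have hEven : Even (n + 1) := Odd.add_one ho
        refine ⟨fun _ => ?_, fun h => absurd h (by simpa using hEven)⟩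
        constructor
        · rw [ha n, hxa, hxb, hf3, hf4]; push_cast; ring
        · rw [hb n, hxa, hxb, hf3, hf4]; push_cast; ring
  refine ⟨fun k hk => (main k).1 hk, fun k hk => (main k).2 hk, ?_, ?_⟩
  · intro k hk
    obtain ⟨hxa, hxb⟩ := (main k).1 hk
    rw [hxa, hxb]
    constructor
    · rw [abs_of_nonpos (by linarith)]; ring
    · rw [abs_of_nonneg (by linarith)]; ring
  · set f : ℕ → ℝ := fun k : ℕ => (1 / Real.sqrt 2) *
        Real.sqrt ((xa k - ((K : ℝ) / 2 + ξ)) ^ 2 + (xb k - ((K : ℝ) / 2 + ξ)) ^ 2) with hf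
    have hsqrt2 : (0:ℝ) < Real.sqrt 2 := Real.sqrt_pos.2 (by norm_num)
    have key : ∀ (a : ℝ), (1 / Real.sqrt 2) * Real.sqrt (a ^ 2 + a ^ 2) = |a| := by
      intro a
      have : a ^ 2 + a ^ 2 = 2 * a ^ 2 := by ring
      rw [this, Real.sqrt_mul (by norm_num), Real.sqrt_sq_eq_abs]
      field_simp
    have heq : ∀ k, Even k → f k = (K : ℝ) / 2 := by
      intro k hk
      obtain ⟨hxa, hxb⟩ := (main k).1 hk
      have h1 : xa k - ((K : ℝ) / 2 + ξ) = -((K : ℝ)/2) := by rw [hxa]; ring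
      have h2 : xb k - ((K : ℝ) / 2 + ξ) = (K : ℝ)/2 := by rw [hxb]; ring
      simp only [hf, h1, h2]
      have : (-((K:ℝ)/2)) ^ 2 = ((K:ℝ)/2) ^ 2 := by ring
      rw [this, key ((K:ℝ)/2), abs_of_nonneg (by linarith)]
    have hbound : ∀ k, f k ≤ (K : ℝ) / 2 := by
      intro k
      rcases Nat.even_or_odd k with he | ho
      · exact (heq k he).le
      · obtain ⟨hxa, hxb⟩ := (main k).2 ho
        have h1 : xa k - ((K : ℝ) / 2 + ξ) = (K : ℝ)/2 - w * K := by rw [hxa]; ring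
        have h2 : xb k - ((K : ℝ) / 2 + ξ) = -((K : ℝ)/2 - w * K) := by rw [hxb]; ring
        have hmin : min ξ (1 - ξ) ≤ 1/2 := by
          rcases le_or_gt ξ (1/2) with h | h
          · exact le_trans (min_le_left _ _) h
          · exact le_trans (min_le_right _ _) (by linarith)
        have hK1 : (1:ℝ) ≤ K := by exact_mod_cast hK
        simp only [hf, h1, h2]
        have h3 : ((K:ℝ)/2 - w*K) ^ 2 + (-((K:ℝ)/2 - w*K)) ^ 2
            = ((K:ℝ)/2 - w*K) ^ 2 + ((K:ℝ)/2 - w*K) ^ 2 := by ring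
        rw [h3, key]
        rw [abs_le]
        constructor <;> nlinarith
    have hfreq : ∃ᶠ k in Filter.atTop, (K : ℝ) / 2 ≤ f k := by
      rw [Filter.frequently_atTop]
      intro N
      exact ⟨2 * N, by omega, (heq (2*N) (even_two_mul N)).ge⟩
    exact Filter.le_limsup_of_frequently_le hfreq
      ⟨(K : ℝ) / 2, Filter.eventually_atTop.2 ⟨0, fun k _ => hbound k⟩⟩
end
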